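/- arXiv:2511.12687 — 8 statements merged into one kernel-verified Lean document; each statement's English description precedes it below -/
import Mathlib

section
/- Suppose in addition that m := E[ξ_1 − 1] = ∑_{i≥1}(1 − q_i) < ∞, and set r_p := ⌈ p·m / ((1−p)·|log(1−p)|) ⌉ for p ∈ (0,1). Then for every p ∈ (0,1) and every r ≥ 0: (1−p)^r ≤ P(R_p > r) ≤ (1−p)^r · exp(p·m/(1−p)) ≤ (1−p)^{r − r_p}. In particular, a Geometric(1−p) random variable G with P(G > r) = (1−p)^r satisfies G ≼ R_p ≼ G + r_p in the stochastic order. -/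
/-- With `q i = P(ξ₁ ≤ i)` and `P(R_p > r) = ∏_{i=1}^r (1 − p·q i)`,
assuming `m = E[ξ₁ − 1] = ∑_{i≥1}(1 − q i) < ∞` and setting
`r_p = ⌈p·m/((1−p)·|log(1−p)|)⌉`, one has for all `r ≥ 0` the chain
`(1−p)^r ≤ P(R_p > r) ≤ (1−p)^r·exp(p·m/(1−p)) ≤ (1−p)^{r−r_p}`; in particular a
`Geometric(1−p)` variable `G` (with `P(G > r) = (1−p)^r`) satisfies `G ≼ R_p ≼ G + r_p`
in the stochastic order, the last domination being `P(R_p > r) ≤ (1−p)^{(r−r_p)⁺}`. -/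
theorem stmt1 (q : ℕ → ℝ) (hq0 : ∀ i, 0 ≤ q i) (hq1 : ∀ i, q i ≤ 1)
    (hqmono : Monotone q) (hqlim : Filter.Tendsto q Filter.atTop (nhds 1))
    (hsum : Summable fun i : ℕ => 1 - q (i + 1))
    (m : ℝ) (hm : m = ∑' i : ℕ, (1 - q (i + 1)))
    (p : ℝ) (hp : p ∈ Set.Ioo (0 : ℝ) 1)
    (rp : ℕ) (hrp : rp = ⌈p * m / ((1 - p) * |Real.log (1 - p)|)⌉₊) :
    ∀ r : ℕ,
      (1 - p) ^ r ≤ ∏ i ∈ Finset.Icc 1 r, (1 - p * q i) ∧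
      (∏ i ∈ Finset.Icc 1 r, (1 - p * q i)) ≤ (1 - p) ^ r * Real.exp (p * m / (1 - p)) ∧
      (1 - p) ^ r * Real.exp (p * m / (1 - p)) ≤ (1 - p) ^ ((r : ℤ) - (rp : ℤ)) ∧
      (∏ i ∈ Finset.Icc 1 r, (1 - p * q i)) ≤ (1 - p) ^ (r - rp) := by
  obtain ⟨hp0, hp1⟩ := hp
  have h1p : 0 < 1 - p := by linarith
  have hq' : ∀ i, 0 < 1 - p * q i := fun i => by nlinarith [hq0 i, hq1 i]
  have hfac_ge : ∀ i, 1 - p ≤ 1 - p * q i := fun i => by nlinarith [hq1 i]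
  have hfac_le : ∀ i, 1 - p * q i ≤ 1 := fun i => by nlinarith [hq0 i]
  have hm0 : 0 ≤ m := by
    rw [hm]; exact tsum_nonneg fun i => by linarith [hq1 (i + 1)]
  have hlogneg : Real.log (1 - p) < 0 := Real.log_neg h1p (by linarith)
  have habs : |Real.log (1 - p)| = -Real.log (1 - p) := abs_of_neg hlogneg
  intro r
  have hsum_le : ∑ i ∈ Finset.Icc 1 r, (1 - q i) ≤ m := by
    rw [hm, ← Finset.Ico_add_one_right_eq_Icc, Finset.sum_Ico_eq_sum_range, Nat.add_sub_cancel]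
    have hre : ∀ i ∈ Finset.range r, 1 - q (1 + i) = 1 - q (i + 1) := by
      intro i _; rw [add_comm]
    rw [Finset.sum_congr rfl hre]
    exact Summable.sum_le_tsum _ (fun i _ => by linarith [hq1 (i + 1)]) hsum
  have part1 : (1 - p) ^ r ≤ ∏ i ∈ Finset.Icc 1 r, (1 - p * q i) := by
    calc (1 - p) ^ r = ∏ _i ∈ Finset.Icc 1 r, (1 - p) := by
          rw [Finset.prod_const, Nat.card_Icc, Nat.add_sub_cancel]
      _ ≤ _ := Finset.prod_le_prod (fun i _ => h1p.le) (fun i _ => hfac_ge i)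
  have key : ∀ i, 1 - p * q i ≤ (1 - p) * Real.exp (p * (1 - q i) / (1 - p)) := by
    intro i
    calc 1 - p * q i = (1 - p) * (p * (1 - q i) / (1 - p) + 1) := by
          field_simp; ring
      _ ≤ (1 - p) * Real.exp (p * (1 - q i) / (1 - p)) :=
          mul_le_mul_of_nonneg_left (Real.add_one_le_exp _) h1p.le
  have part2 : (∏ i ∈ Finset.Icc 1 r, (1 - p * q i)) ≤
      (1 - p) ^ r * Real.exp (p * m / (1 - p)) := by
    calc (∏ i ∈ Finset.Icc 1 r, (1 - p * q i))
        ≤ ∏ i ∈ Finset.Icc 1 r, ((1 - p) * Real.exp (p * (1 - q i) / (1 - p))) :=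
          Finset.prod_le_prod (fun i _ => (hq' i).le) (fun i _ => key i)
      _ = (1 - p) ^ r * Real.exp (∑ i ∈ Finset.Icc 1 r, p * (1 - q i) / (1 - p)) := by
          rw [Finset.prod_mul_distrib, Finset.prod_const, Nat.card_Icc, Nat.add_sub_cancel, ← Real.exp_sum]
      _ ≤ (1 - p) ^ r * Real.exp (p * m / (1 - p)) := by
          apply mul_le_mul_of_nonneg_left _ (pow_nonneg h1p.le r)
          apply Real.exp_le_exp.2
          have heq : ∑ i ∈ Finset.Icc 1 r, p * (1 - q i) / (1 - p)
              = p / (1 - p) * ∑ i ∈ Finset.Icc 1 r, (1 - q i) := by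
            rw [Finset.mul_sum]; exact Finset.sum_congr rfl fun i _ => by ring
          rw [heq]
          have hcoef : (0:ℝ) ≤ p / (1 - p) := by positivity
          have := mul_le_mul_of_nonneg_left hsum_le hcoef
          calc p / (1 - p) * ∑ i ∈ Finset.Icc 1 r, (1 - q i) ≤ p / (1 - p) * m := this
            _ = p * m / (1 - p) := by ring
  have hrp_ge : p * m / ((1 - p) * |Real.log (1 - p)|) ≤ (rp : ℝ) := by
    rw [hrp]; exact Nat.le_ceil _
  have hlogpos : 0 < |Real.log (1 - p)| := abs_pos.2 (ne_of_lt hlogneg)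
  have hkey3 : p * m / (1 - p) ≤ (rp : ℝ) * |Real.log (1 - p)| := by
    have hpos : 0 < (1 - p) * |Real.log (1 - p)| := mul_pos h1p hlogpos
    rw [div_le_iff₀ hpos] at hrp_ge
    rw [div_le_iff₀ h1p]; nlinarith
  have part3 : (1 - p) ^ r * Real.exp (p * m / (1 - p)) ≤ (1 - p) ^ ((r : ℤ) - (rp : ℤ)) := by
    have hzpow : (1 - p : ℝ) ^ ((r : ℤ) - (rp : ℤ)) = (1 - p) ^ r * ((1 - p) ^ rp)⁻¹ := by
      rw [zpow_sub₀ (ne_of_gt h1p), zpow_natCast, zpow_natCast, div_eq_mul_inv]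
    rw [hzpow]
    apply mul_le_mul_of_nonneg_left _ (pow_nonneg h1p.le r)
    have hpowrp : (1 - p : ℝ) ^ rp = Real.exp ((rp : ℝ) * Real.log (1 - p)) := by
      rw [← Real.log_pow, Real.exp_log (pow_pos h1p rp)]
    rw [hpowrp, ← Real.exp_neg]
    apply Real.exp_le_exp.2
    rw [habs] at hkey3; linarith
  refine ⟨part1, part2, part3, ?_⟩
  rcases le_or_gt rp r with h | h
  · have hcast : ((r : ℤ) - (rp : ℤ)) = ((r - rp : ℕ) : ℤ) := by omega
    calc (∏ i ∈ Finset.Icc 1 r, (1 - p * q i)) ≤ _ := part2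
      _ ≤ (1 - p) ^ ((r : ℤ) - (rp : ℤ)) := part3
      _ = (1 - p) ^ (r - rp) := by rw [hcast, zpow_natCast]
  · rw [Nat.sub_eq_zero_of_le h.le, pow_zero]
    exact Finset.prod_le_one (fun i _ => (hq' i).le) (fun i _ => hfac_le i)
end

section
/- Assume E[ξ_1] < ∞. Then for every p ∈ (0,1), E[R_p] = ∑_{r=0}^{∞} ∏_{i=1}^{r}(1 − p·q_i) is finite, the map p ↦ (1−p)·E[R_p] is strictly decreasing on (0,1), and there exists a unique p_c ∈ (0,1) such that (1 − p_c)·E[R_{p_c}] = 1; moreover (1−p)·E[R_p] < 1 for all p ∈ (p_c, 1) and (1−p)·E[R_p] > 1 for all p ∈ (0, p_c). -/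
open Filter Finset


/-- Assume `E[ξ₁] < ∞` (i.e. `∑_{i≥1}(1 − q i) < ∞`). Then for every
`p ∈ (0,1)` the series `E[R_p] = ∑_{r≥0} ∏_{i=1}^r (1 − p·q i)` converges, the map
`p ↦ (1−p)·E[R_p]` is strictly decreasing on `(0,1)`, and there is a unique `p_c ∈ (0,1)`
with `(1−p_c)·E[R_{p_c}] = 1`; moreover `(1−p)·E[R_p] < 1` on `(p_c, 1)` and
`(1−p)·E[R_p] > 1` on `(0, p_c)`. -/
theorem stmt3 (q : ℕ → ℝ) (hq0 : ∀ i, 0 ≤ q i) (hq1 : ∀ i, q i ≤ 1)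
    (hqmono : Monotone q) (hqlim : Filter.Tendsto q Filter.atTop (nhds 1))
    (hsum : Summable fun i : ℕ => 1 - q (i + 1))
    (ER : ℝ → ℝ)
    (hER : ER = fun p => ∑' r : ℕ, ∏ i ∈ Finset.Icc 1 r, (1 - p * q i)) :
    (∀ p ∈ Set.Ioo (0 : ℝ) 1, Summable fun r : ℕ => ∏ i ∈ Finset.Icc 1 r, (1 - p * q i)) ∧
    StrictAntiOn (fun p => (1 - p) * ER p) (Set.Ioo (0 : ℝ) 1) ∧
    (∃ pc : ℝ, pc ∈ Set.Ioo (0 : ℝ) 1 ∧ (1 - pc) * ER pc = 1 ∧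
      (∀ p ∈ Set.Ioo (0 : ℝ) 1, (1 - p) * ER p = 1 → p = pc) ∧
      (∀ p : ℝ, pc < p → p < 1 → (1 - p) * ER p < 1) ∧
      (∀ p : ℝ, 0 < p → p < pc → 1 < (1 - p) * ER p)) := by
  subst hER
  dsimp only
  -- basic facts about the factors and the terms
  have hfac : ∀ p : ℝ, 0 ≤ p → p ≤ 1 → ∀ i, 0 ≤ 1 - p * q i := by
    intro p h0 h1 i; nlinarith [hq0 i, hq1 i]
  have htnn : ∀ p : ℝ, 0 ≤ p → p ≤ 1 → ∀ r, 0 ≤ ∏ i ∈ Icc 1 r, (1 - p * q i) := by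
    intro p h0 h1 r
    exact Finset.prod_nonneg fun i _ => hfac p h0 h1 i
  have htle1 : ∀ p : ℝ, 0 ≤ p → p ≤ 1 → ∀ r, (∏ i ∈ Icc 1 r, (1 - p * q i)) ≤ 1 := by
    intro p h0 h1 r
    apply Finset.prod_le_one (fun i _ => hfac p h0 h1 i)
    intro i _
    nlinarith [mul_nonneg h0 (hq0 i)]
  obtain ⟨N, hN⟩ : ∃ N : ℕ, ∀ i ≥ N, (1:ℝ)/2 ≤ q i :=
    eventually_atTop.mp (hqlim.eventually (eventually_ge_nhds (by norm_num : (1:ℝ)/2 < 1)))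
  -- summability
  have hsumm : ∀ p ∈ Set.Ioo (0:ℝ) 1, Summable fun r : ℕ => ∏ i ∈ Icc 1 r, (1 - p * q i) := by
    rintro p ⟨hp0, hp1⟩
    apply summable_of_ratio_norm_eventually_le (r := 1 - p/2) (by linarith)
    filter_upwards [eventually_ge_atTop N] with n hn
    have hq12 : (1:ℝ)/2 ≤ q (n+1) := hN (n+1) (le_trans hn (Nat.le_succ n))
    rw [Finset.prod_Icc_succ_top (Nat.succ_le_succ (Nat.zero_le n)), Real.norm_eq_abs,
      Real.norm_eq_abs,
      abs_of_nonneg (mul_nonneg (htnn p hp0.le hp1.le n) (hfac p hp0.le hp1.le (n+1))),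
      abs_of_nonneg (htnn p hp0.le hp1.le n)]
    nlinarith [mul_nonneg (mul_nonneg (htnn p hp0.le hp1.le n) hp0.le)
      (by linarith : (0:ℝ) ≤ q (n+1) - 1/2)]
  -- continuity of the tsum on compact subintervals
  have hcont : ∀ a b : ℝ, 0 < a → a ≤ b → b < 1 →
      ContinuousOn (fun p : ℝ => ∑' r : ℕ, ∏ i ∈ Icc 1 r, (1 - p * q i)) (Set.Icc a b) := by
    intro a b ha hab hb
    have hu := hsumm a ⟨ha, lt_of_le_of_lt hab hb⟩
    have hbd : ∀ (r : ℕ), ∀ p ∈ Set.Icc a b,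
        ‖∏ i ∈ Icc 1 r, (1 - p * q i)‖ ≤ ∏ i ∈ Icc 1 r, (1 - a * q i) := by
      intro r p hp
      rw [Real.norm_eq_abs,
        abs_of_nonneg (htnn p (le_trans ha.le hp.1) (le_trans hp.2 hb.le) r)]
      apply Finset.prod_le_prod (fun i _ => hfac p (le_trans ha.le hp.1) (le_trans hp.2 hb.le) i)
      intro i _
      have := mul_le_mul_of_nonneg_right hp.1 (hq0 i)
      linarith
    exact (tendstoUniformlyOn_tsum hu hbd).continuousOn
      (Filter.Eventually.frequently <| Filter.Eventually.of_forall fun t => Continuous.continuousOn (by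
        apply continuous_finset_sum
        intro r _
        apply continuous_finset_prod
        intro i _
        exact continuous_const.sub (continuous_id.mul continuous_const)))
  -- tsum ≥ 1
  have hge1 : ∀ p ∈ Set.Ioo (0:ℝ) 1, 1 ≤ ∑' r : ℕ, ∏ i ∈ Icc 1 r, (1 - p * q i) := by
    intro p hp
    have h0 : (∏ i ∈ Icc 1 0, (1 - p * q i)) = 1 := by simp
    calc (1:ℝ) = ∏ i ∈ Icc 1 0, (1 - p * q i) := h0.symm
      _ ≤ _ := Summable.le_tsum (hsumm p hp) 0 (fun j _ => htnn p hp.1.le hp.2.le j)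
  -- antitone in p
  have hanti : ∀ p ∈ Set.Ioo (0:ℝ) 1, ∀ p' ∈ Set.Ioo (0:ℝ) 1, p ≤ p' →
      (∑' r : ℕ, ∏ i ∈ Icc 1 r, (1 - p' * q i)) ≤ ∑' r : ℕ, ∏ i ∈ Icc 1 r, (1 - p * q i) := by
    intro p hp p' hp' hle
    apply Summable.tsum_le_tsum _ (hsumm p' hp') (hsumm p hp)
    intro r
    apply Finset.prod_le_prod (fun i _ => hfac p' hp'.1.le hp'.2.le i)
    intro i _
    have := mul_le_mul_of_nonneg_right hle (hq0 i)
    linarith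
  have hstrict : StrictAntiOn
      (fun p : ℝ => (1 - p) * ∑' r : ℕ, ∏ i ∈ Icc 1 r, (1 - p * q i)) (Set.Ioo (0:ℝ) 1) := by
    intro p hp p' hp' hlt
    dsimp only
    have h1 : (1 - p') * (∑' r : ℕ, ∏ i ∈ Icc 1 r, (1 - p' * q i))
        < (1 - p) * ∑' r : ℕ, ∏ i ∈ Icc 1 r, (1 - p' * q i) := by
      apply mul_lt_mul_of_pos_right (by linarith)
      linarith [hge1 p' hp']
    have h2 : (1 - p) * (∑' r : ℕ, ∏ i ∈ Icc 1 r, (1 - p' * q i))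
        ≤ (1 - p) * ∑' r : ℕ, ∏ i ∈ Icc 1 r, (1 - p * q i) :=
      mul_le_mul_of_nonneg_left (hanti p hp p' hp' hlt.le) (by linarith [hp.2])
    linarith
  -- the endpoint b close to 1
  have hN0 : (0:ℝ) ≤ (N:ℝ) := Nat.cast_nonneg N
  obtain ⟨b, hbdef⟩ : ∃ b : ℝ, b = 1 - 1/(2*((N:ℝ) + 4)) := ⟨_, rfl⟩
  have hb78 : 7/8 ≤ b := by
    have h8 : (1:ℝ)/(2*((N:ℝ)+4)) ≤ 1/8 :=
      one_div_le_one_div_of_le (by norm_num) (by linarith)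
    rw [hbdef]; linarith
  have hb1 : b < 1 := by
    have : (0:ℝ) < 1/(2*((N:ℝ)+4)) := by positivity
    rw [hbdef]; linarith
  have hbmem : b ∈ Set.Ioo (0:ℝ) 1 := ⟨by linarith, hb1⟩
  -- f(1/4) > 1
  have hfa : 1 < (1 - (1/4:ℝ)) * ∑' r : ℕ, ∏ i ∈ Icc 1 r, (1 - (1/4:ℝ) * q i) := by
    have hsa := hsumm (1/4) ⟨by norm_num, by norm_num⟩
    have hsum2 : (∑ r ∈ range 2, ∏ i ∈ Icc 1 r, (1 - (1/4:ℝ) * q i)) ≤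
        ∑' r : ℕ, ∏ i ∈ Icc 1 r, (1 - (1/4:ℝ) * q i) :=
      Summable.sum_le_tsum (range 2) (fun j _ => htnn (1/4) (by norm_num) (by norm_num) j) hsa
    have heq : (∑ r ∈ range 2, ∏ i ∈ Icc 1 r, (1 - (1/4:ℝ) * q i))
        = 1 + (1 - (1/4:ℝ) * q 1) := by
      simp [Finset.sum_range_succ]
    rw [heq] at hsum2
    nlinarith [hq1 1, hq0 1]
  -- f(b) < 1
  have hfb : (1 - b) * (∑' r : ℕ, ∏ i ∈ Icc 1 r, (1 - b * q i)) < 1 := by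
    obtain ⟨c, hcdef⟩ : ∃ c : ℝ, c = 1 - b/2 := ⟨_, rfl⟩
    have hc0 : 0 ≤ c := by rw [hcdef]; linarith
    have hc1 : c < 1 := by rw [hcdef]; linarith
    have hub : ∀ r : ℕ, (∏ i ∈ Icc 1 r, (1 - b * q i)) ≤ c ^ (r - N) := by
      intro r
      rcases le_or_gt r N with h | h
      · rw [Nat.sub_eq_zero_of_le h, pow_zero]
        exact htle1 b hbmem.1.le hbmem.2.le r
      · have key : Icc 1 r = Ioc 0 r := Finset.Icc_add_one_left_eq_Ioc 0 r
        rw [key, ← Finset.prod_Ioc_consecutive _ (Nat.zero_le N) h.le]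
        calc (∏ i ∈ Ioc 0 N, (1 - b * q i)) * ∏ i ∈ Ioc N r, (1 - b * q i)
            ≤ ∏ i ∈ Ioc N r, (1 - b * q i) := by
              apply mul_le_of_le_one_left
                (Finset.prod_nonneg fun i _ => hfac b hbmem.1.le hbmem.2.le i)
              have key2 : Ioc 0 N = Icc 1 N := (Finset.Icc_add_one_left_eq_Ioc 0 N).symm
              rw [key2]
              exact htle1 b hbmem.1.le hbmem.2.le N
          _ ≤ ∏ _i ∈ Ioc N r, c := by
              apply Finset.prod_le_prod (fun i _ => hfac b hbmem.1.le hbmem.2.le i)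
              intro i hi
              have hiN : N ≤ i := le_of_lt (Finset.mem_Ioc.mp hi).1
              have hqi := hN i hiN
              rw [hcdef]
              nlinarith [hbmem.1]
          _ = c ^ (r - N) := by rw [Finset.prod_const, Nat.card_Ioc]
    have hgsum : Summable (fun k : ℕ => c ^ k) := summable_geometric_of_lt_one hc0 hc1
    have husum : Summable (fun r : ℕ => c ^ (r - N)) := by
      apply (summable_nat_add_iff N).mp
      simpa using hgsum
    have hts : (∑' r : ℕ, c ^ (r - N)) = (N:ℝ) + (1 - c)⁻¹ := by
      rw [← Summable.sum_add_tsum_nat_add N husum]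
      congr 1
      · rw [Finset.sum_congr rfl
          (fun i hi => by rw [Nat.sub_eq_zero_of_le (Finset.mem_range.mp hi).le, pow_zero])]
        simp
      · simp only [Nat.add_sub_cancel]
        exact tsum_geometric_of_lt_one hc0 hc1
    have hle : (∑' r : ℕ, ∏ i ∈ Icc 1 r, (1 - b * q i)) ≤ (N:ℝ) + (1 - c)⁻¹ := by
      rw [← hts]
      exact Summable.tsum_le_tsum hub (hsumm b hbmem) husum
    have h1c : (1 - c) = b/2 := by rw [hcdef]; ring
    have hinv : (1 - c)⁻¹ ≤ 4 := by
      rw [h1c, inv_div, div_le_iff₀ (by linarith : (0:ℝ) < b)]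
      linarith
    have hhalf : (1 - b) * ((N:ℝ) + 4) = 1/2 := by
      have hBne : (N:ℝ) + 4 ≠ 0 := by linarith
      rw [hbdef]
      field_simp
      ring
    calc (1 - b) * (∑' r : ℕ, ∏ i ∈ Icc 1 r, (1 - b * q i))
        ≤ (1 - b) * ((N:ℝ) + 4) :=
          mul_le_mul_of_nonneg_left (by linarith) (by linarith)
      _ = 1/2 := hhalf
      _ < 1 := by norm_num
  -- intermediate value theorem
  have hab : (1/4:ℝ) ≤ b := by linarith
  have hconts : ContinuousOn
      (fun p : ℝ => (1 - p) * ∑' r : ℕ, ∏ i ∈ Icc 1 r, (1 - p * q i)) (Set.Icc (1/4:ℝ) b) :=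
    ContinuousOn.mul ((continuous_const.sub continuous_id).continuousOn)
      (hcont (1/4) b (by norm_num) hab hb1)
  have hiv := intermediate_value_Icc' hab hconts
  have h1mem : (1:ℝ) ∈ Set.Icc
      ((1 - b) * ∑' r : ℕ, ∏ i ∈ Icc 1 r, (1 - b * q i))
      ((1 - (1/4:ℝ)) * ∑' r : ℕ, ∏ i ∈ Icc 1 r, (1 - (1/4:ℝ) * q i)) := ⟨hfb.le, hfa.le⟩
  obtain ⟨pc, hpcIcc, hfpc0⟩ := hiv h1mem
  have hfpc : (1 - pc) * (∑' r : ℕ, ∏ i ∈ Icc 1 r, (1 - pc * q i)) = 1 := hfpc0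
  have hpcmem : pc ∈ Set.Ioo (0:ℝ) 1 :=
    ⟨lt_of_lt_of_le (by norm_num) hpcIcc.1, lt_of_le_of_lt hpcIcc.2 hb1⟩
  refine ⟨hsumm, hstrict, pc, hpcmem, hfpc, ?_, ?_, ?_⟩
  · intro p hp hfp
    exact hstrict.injOn hp hpcmem (hfp.trans hfpc.symm : _)
  · intro p hpcp hp1
    have hpmem : p ∈ Set.Ioo (0:ℝ) 1 := ⟨lt_trans hpcmem.1 hpcp, hp1⟩
    have h := hstrict hpcmem hpmem hpcp
    dsimp only at h
    rw [hfpc] at h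
    exact h
  · intro p hp0 hppc
    have hpmem : p ∈ Set.Ioo (0:ℝ) 1 := ⟨hp0, lt_trans hppc hpcmem.2⟩
    have h := hstrict hpmem hpcmem hppc
    dsimp only at h
    rw [hfpc] at h
    exact h
end

section
/- For every p ∈ (0,1), with θ_i(p) := (1−p)·q_i / (1 − p·q_i) ∈ [0,1], one has E[ ∑_{i=1}^{R_p − 1} θ_i(p) ] = (1−p)/p; equivalently, ∑_{r=1}^{∞} ( ∑_{i=1}^{r−1} θ_i(p) ) · p·q_r · ∏_{i=1}^{r−1}(1 − p·q_i) = (1−p)/p. -/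
/-- With `θ i = (1−p)·q i/(1 − p·q i) ∈ [0,1]` and
`P(R_p = r) = p·q r·∏_{i=1}^{r-1}(1 − p·q i)`, one has
`E[∑_{i=1}^{R_p − 1} θ i] = (1−p)/p`, i.e.
`∑_{r≥1} (∑_{i=1}^{r−1} θ i)·p·q r·∏_{i=1}^{r−1}(1 − p·q i) = (1−p)/p`. -/
theorem stmt4 (q : ℕ → ℝ) (hq0 : ∀ i, 0 ≤ q i) (hq1 : ∀ i, q i ≤ 1)
    (hqmono : Monotone q) (hqlim : Filter.Tendsto q Filter.atTop (nhds 1))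
    (p : ℝ) (hp : p ∈ Set.Ioo (0 : ℝ) 1)
    (θ : ℕ → ℝ) (hθ : θ = fun i => (1 - p) * q i / (1 - p * q i)) :
    (∀ i : ℕ, θ i ∈ Set.Icc (0 : ℝ) 1) ∧
    ∑' r : ℕ,
        (∑ i ∈ Finset.Icc 1 r, θ i) * (p * q (r + 1)) * ∏ i ∈ Finset.Icc 1 r, (1 - p * q i)
      = (1 - p) / p := by
  obtain ⟨hp0, hp1⟩ := hp
  have hden : ∀ i, 0 < 1 - p * q i := by
    intro i; nlinarith [hq0 i, hq1 i]
  have hθmem : ∀ i, θ i ∈ Set.Icc (0:ℝ) 1 := by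
    intro i
    subst hθ
    constructor
    · exact div_nonneg (by nlinarith [hq0 i]) (hden i).le
    · rw [div_le_one (hden i)]; nlinarith [hq1 i, hq0 i]
  refine ⟨hθmem, ?_⟩
  set c : ℕ → ℝ := fun r => ∏ i ∈ Finset.Icc 1 r, (1 - p * q i) with hc
  set T : ℕ → ℝ := fun r => ∑ i ∈ Finset.Icc 1 r, θ i with hT
  have hc0 : c 0 = 1 := by simp [hc]
  have hT0 : T 0 = 0 := by simp [hT]
  have hcsucc : ∀ r, c (r+1) = c r * (1 - p * q (r+1)) := by
    intro r; simp [hc, Finset.prod_Icc_succ_top (Nat.le_add_left 1 r)]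
  have hTsucc : ∀ r, T (r+1) = T r + θ (r+1) := by
    intro r; simp [hT, Finset.sum_Icc_succ_top (Nat.le_add_left 1 r)]
  have hcpos : ∀ r, 0 < c r := fun r => Finset.prod_pos (fun i _ => hden i)
  have hcle1 : ∀ r, c r ≤ 1 := fun r =>
    Finset.prod_le_one (fun i _ => (hden i).le) (fun i _ => by nlinarith [hq0 i])
  have hTnn : ∀ r, 0 ≤ T r := fun r =>
    Finset.sum_nonneg (fun i _ => (hθmem i).1)
  have hTle : ∀ r, T r ≤ r := by
    intro r
    calc T r ≤ ∑ i ∈ Finset.Icc 1 r, (1:ℝ) :=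
          Finset.sum_le_sum (fun i _ => (hθmem i).2)
      _ = r := by simp
  have hp' : p ≠ 0 := ne_of_gt hp0
  have key : ∀ N, ∑ r ∈ Finset.range N, T r * (p * q (r+1)) * c r
      = (1-p)/p * (1 - c N) - T N * c N := by
    intro N
    induction N with
    | zero => simp [hc0, hT0]
    | succ N ih =>
      rw [Finset.sum_range_succ, ih, hcsucc N, hTsucc N]
      have hθN : θ (N+1) * (1 - p * q (N+1)) = (1-p) * q (N+1) := by
        rw [hθ]; exact div_mul_cancel₀ _ (hden (N+1)).ne'
      field_simp
      linear_combination (p * c N) * hθN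
  -- geometric decay
  obtain ⟨M, hM⟩ : ∃ M, ∀ n ≥ M, (1:ℝ)/2 ≤ q n := by
    have := hqlim.eventually (eventually_ge_nhds (by norm_num : (1:ℝ)/2 < 1))
    exact Filter.eventually_atTop.mp this
  set ρ : ℝ := 1 - p/2 with hρdef
  have hρ0 : 0 < ρ := by simp only [hρdef]; linarith
  have hρ1 : ρ < 1 := by simp only [hρdef]; linarith
  have hgeo : ∀ N ≥ M, c N ≤ c M * ρ ^ (N - M) := by
    intro N hN
    induction N, hN using Nat.le_induction with
    | base => simp
    | succ N hMN ih =>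
      have hq' : (1:ℝ)/2 ≤ q (N+1) := hM (N+1) (by omega)
      have h1 : 1 - p * q (N+1) ≤ ρ := by simp only [hρdef]; nlinarith
      have : c (N+1) ≤ (c M * ρ ^ (N - M)) * ρ := by
        rw [hcsucc N]
        have := hcpos N
        nlinarith [hden (N+1)]
      calc c (N+1) ≤ (c M * ρ ^ (N - M)) * ρ := this
        _ = c M * ρ ^ (N + 1 - M) := by
            rw [Nat.succ_sub hMN, pow_succ]; ring
  have hpow : ∀ N ≥ M, ρ ^ (N - M) = ρ ^ N / ρ ^ M := by
    intro N hN
    rw [eq_div_iff (pow_ne_zero M (ne_of_gt hρ0)), ← pow_add]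
    congr 1; omega
  -- c N → 0
  have hctend : Filter.Tendsto c Filter.atTop (nhds 0) := by
    apply squeeze_zero' (Filter.Eventually.of_forall (fun n => (hcpos n).le))
      (g := fun N => (c M / ρ ^ M) * ρ ^ N)
    · filter_upwards [Filter.eventually_ge_atTop M] with N hN
      have := hgeo N hN
      rw [hpow N hN] at this
      calc c N ≤ c M * (ρ ^ N / ρ ^ M) := this
        _ = (c M / ρ ^ M) * ρ ^ N := by ring
    · have := tendsto_pow_atTop_nhds_zero_of_lt_one hρ0.le hρ1
      simpa using this.const_mul (c M / ρ ^ M)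
  -- T N * c N → 0
  have hnpow : Filter.Tendsto (fun N : ℕ => (N:ℝ) * ρ ^ N) Filter.atTop (nhds 0) := by
    have hs : Summable (fun n : ℕ => (n:ℝ) ^ 1 * ρ ^ n) :=
      summable_pow_mul_geometric_of_norm_lt_one 1 (by
        rw [Real.norm_eq_abs, abs_of_pos hρ0]; exact hρ1)
    simpa using hs.tendsto_atTop_zero
  have hTctend : Filter.Tendsto (fun N => T N * c N) Filter.atTop (nhds 0) := by
    apply squeeze_zero' (f := fun N => T N * c N)
      (g := fun N => (c M / ρ ^ M) * ((N:ℝ) * ρ ^ N))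
      (Filter.Eventually.of_forall (fun n : ℕ => mul_nonneg (hTnn n) (hcpos n).le))
    · filter_upwards [Filter.eventually_ge_atTop M] with N hN
      have h1 := hgeo N hN
      rw [hpow N hN] at h1
      have h2 : T N * c N ≤ (N:ℝ) * (c M * (ρ ^ N / ρ ^ M)) := by
        have hcN := (hcpos N).le
        have := hTle N
        have := hTnn N
        nlinarith [Nat.cast_nonneg (α := ℝ) N]
      calc T N * c N ≤ (N:ℝ) * (c M * (ρ ^ N / ρ ^ M)) := h2
        _ = (c M / ρ ^ M) * ((N:ℝ) * ρ ^ N) := by ring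
    · simpa using hnpow.const_mul (c M / ρ ^ M)
  have hlim : Filter.Tendsto
      (fun N => ∑ r ∈ Finset.range N, T r * (p * q (r+1)) * c r)
      Filter.atTop (nhds ((1-p)/p)) := by
    have : Filter.Tendsto (fun N => (1-p)/p * (1 - c N) - T N * c N)
        Filter.atTop (nhds ((1-p)/p * (1 - 0) - 0)) := by
      exact (((tendsto_const_nhds.sub hctend).const_mul _).sub hTctend)
    simp only [sub_zero, mul_one] at this
    simpa only [key] using this
  have hnn : ∀ r : ℕ, 0 ≤ T r * (p * q (r+1)) * c r := by
    intro r
    exact mul_nonneg (mul_nonneg (hTnn r) (mul_nonneg hp0.le (hq0 _))) (hcpos r).le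
  have := (hasSum_iff_tendsto_nat_of_nonneg hnn ((1-p)/p)).mpr hlim
  exact this.tsum_eq
end

section
/- For every r ≥ 1 with P(R_p = r) > 0, the conditional distribution of J_p given {R_p = r} is equal to the distribution of ∑_{i=1}^{r−1} B_i, where B_1, ..., B_{r−1} are independent Bernoulli random variables with P(B_i = 1) = (1−p)/(1 − p·q_i). In particular, J_p ≤ R_p − 1 almost surely. -/
open MeasureTheory ProbabilityTheory Finset

namespace Stmt5Aux

variable {Ω : Type*} (W ξ : ℕ → Ω → ℕ) (r : ℕ) (S : Finset ℕ)

/-- per-coordinate event -/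
def G : ℕ ⊕ ℕ → Set Ω :=
  Sum.elim (fun i => if i ∈ S then {x | W i x = 0} else {x | W i x = 1})
           (fun i => if i = r then {x | ξ i x ≤ i} else {x | ¬ ξ i x ≤ i})

/-- index set -/
def T : Finset (ℕ ⊕ ℕ) :=
  ((insert r (Finset.Ico 1 r)).image Sum.inl) ∪
    ((insert r (Finset.Ico 1 r \ S)).image Sum.inr)

/-- the elementary event -/
def E : Set Ω := ⋂ t ∈ T r S, G W ξ r S t

theorem mem_E {x : Ω} :
    x ∈ E W ξ r S ↔ (∀ i, (i = r ∨ i ∈ Finset.Ico 1 r) → x ∈ G W ξ r S (Sum.inl i)) ∧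
      (∀ i, (i = r ∨ i ∈ Finset.Ico 1 r \ S) → x ∈ G W ξ r S (Sum.inr i)) := by
  simp only [E, T, Set.mem_iInter, Finset.mem_union, Finset.mem_image, Finset.mem_insert]
  constructor
  · intro h
    exact ⟨fun i hi => h _ (Or.inl ⟨i, hi, rfl⟩), fun i hi => h _ (Or.inr ⟨i, hi, rfl⟩)⟩
  · rintro ⟨h1, h2⟩ t (⟨i, hi, rfl⟩ | ⟨i, hi, rfl⟩)
    exacts [h1 i hi, h2 i hi]

theorem mem_E' {x : Ω} (hrS : r ∉ S) :
    x ∈ E W ξ r S ↔ (W r x = 1 ∧ ξ r x ≤ r ∧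
      ∀ i ∈ Finset.Ico 1 r, (i ∈ S → W i x = 0) ∧ (i ∉ S → W i x = 1 ∧ ¬ ξ i x ≤ i)) := by
  rw [mem_E]
  constructor
  · rintro ⟨h1, h2⟩
    have hw := h1 r (Or.inl rfl)
    simp only [G, Sum.elim_inl, if_neg hrS, Set.mem_setOf_eq] at hw
    have hx := h2 r (Or.inl rfl)
    simp only [G, Sum.elim_inr, if_pos rfl, Set.mem_setOf_eq] at hx
    refine ⟨hw, hx, fun i hi => ⟨fun hiS => ?_, fun hiS => ?_⟩⟩
    · have := h1 i (Or.inr hi)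
      simpa only [G, Sum.elim_inl, if_pos hiS, Set.mem_setOf_eq] using this
    · have hir : i ≠ r := by
        rintro rfl
        have := Finset.mem_Ico.mp hi
        omega
      have hwi := h1 i (Or.inr hi)
      simp only [G, Sum.elim_inl, if_neg hiS, Set.mem_setOf_eq] at hwi
      have hxi := h2 i (Or.inr (Finset.mem_sdiff.mpr ⟨hi, hiS⟩))
      simp only [G, Sum.elim_inr, if_neg hir, Set.mem_setOf_eq] at hxi
      exact ⟨hwi, hxi⟩
  · rintro ⟨hw, hx, h⟩
    constructor
    · rintro i (rfl | hi)
      · simpa only [G, Sum.elim_inl, if_neg hrS, Set.mem_setOf_eq] using hw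
      · rcases Decidable.em (i ∈ S) with hiS | hiS
        · simpa only [G, Sum.elim_inl, if_pos hiS, Set.mem_setOf_eq] using (h i hi).1 hiS
        · simpa only [G, Sum.elim_inl, if_neg hiS, Set.mem_setOf_eq] using ((h i hi).2 hiS).1
    · rintro i (rfl | hi)
      · simpa only [G, Sum.elim_inr, if_pos rfl, if_true, Set.mem_setOf_eq] using hx
      · rw [Finset.mem_sdiff] at hi
        have hir : i ≠ r := by
          rintro rfl
          have := Finset.mem_Ico.mp hi.1
          omega
        simpa only [G, Sum.elim_inr, if_neg hir, Set.mem_setOf_eq] using ((h i hi.1).2 hi.2).2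

end Stmt5Aux

/-- In the renewal construction (`(ξ i)` i.i.d. with `q i = P(ξ₁ ≤ i)`,
`(W i)` i.i.d. Bernoulli(`p`) encoded in `{0,1} ⊆ ℕ`, jointly independent,
`R = inf {r ≥ 1 : W r = 1 ∧ ξ r ≤ r}`, `J = #{1 ≤ i < R : W i = 0}`), for every `r ≥ 1` with
`P(R = r) > 0` the conditional law of `J` given `{R = r}` is that of a sum of independent
Bernoulli variables `B₁, …, B_{r−1}` with `P(Bᵢ = 1) = (1−p)/(1 − p·q i)` (expressed through
the Poisson–binomial point probabilities); in particular `J ≤ R − 1` almost surely. -/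
theorem stmt5
    {Ω : Type*} [MeasurableSpace Ω] (P : MeasureTheory.Measure Ω)
    [MeasureTheory.IsProbabilityMeasure P]
    (p : ℝ) (hp : p ∈ Set.Ioo (0 : ℝ) 1)
    (ξ W : ℕ → Ω → ℕ) (q : ℕ → ℝ)
    (hξmeas : ∀ i, Measurable (ξ i)) (hWmeas : ∀ i, Measurable (W i))
    (hξpos : ∀ i x, 1 ≤ ξ i x) (hWval : ∀ i x, W i x ≤ 1)
    (hξid : ∀ i j, ProbabilityTheory.IdentDistrib (ξ i) (ξ j) P P)
    (hWlaw : ∀ i, P {x | W i x = 1} = ENNReal.ofReal p)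
    (hq : ∀ j, (P {x | ξ 1 x ≤ j}).toReal = q j)
    (hindep : ProbabilityTheory.iIndepFun (Sum.elim W ξ) P)
    (R J : Ω → ℕ)
    (hR : R = fun x => sInf {r : ℕ | 1 ≤ r ∧ W r x = 1 ∧ ξ r x ≤ r})
    (hJ : J = fun x => ((Finset.Ico 1 (R x)).filter fun i => W i x = 0).card) :
    (∀ r : ℕ, 1 ≤ r → 0 < P {x | R x = r} → ∀ k : ℕ,
      (P {x | J x = k ∧ R x = r}).toReal =
        (∑ S ∈ Finset.powersetCard k (Finset.Icc 1 (r - 1)),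
          (∏ i ∈ S, (1 - p) / (1 - p * q i)) *
            ∏ i ∈ Finset.Icc 1 (r - 1) \ S, (1 - (1 - p) / (1 - p * q i))) *
          (P {x | R x = r}).toReal) ∧
    (∀ᵐ x ∂P, J x ≤ R x - 1) := by
  classical
  obtain ⟨hp0, hp1⟩ := hp
  have hq0 : ∀ j, 0 ≤ q j := fun j => (hq j) ▸ ENNReal.toReal_nonneg
  have hq1 : ∀ j, q j ≤ 1 := by
    intro j
    rw [← hq j]
    calc (P {x | ξ 1 x ≤ j}).toReal ≤ (1 : ENNReal).toReal :=
          ENNReal.toReal_mono ENNReal.one_ne_top prob_le_one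
      _ = 1 := by simp
  have hden : ∀ i, 0 < 1 - p * q i := by
    intro i
    have h1 : p * q i ≤ p := mul_le_of_le_one_right hp0.le (hq1 i)
    linarith
  have hmW1 : ∀ i, MeasurableSet {x | W i x = 1} := fun i =>
    hWmeas i (measurableSet_singleton 1)
  have hmC : ∀ i j, MeasurableSet {x | ξ i x ≤ j} := fun i j =>
    measurableSet_le (hξmeas i) measurable_const
  have hPW0 : ∀ i, P {x | W i x = 0} = ENNReal.ofReal (1 - p) := by
    intro i
    have hset : {x | W i x = 0} = {x | W i x = 1}ᶜ := by
      ext x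
      have := hWval i x
      simp only [Set.mem_setOf_eq, Set.mem_compl_iff]
      omega
    rw [hset, measure_compl (hmW1 i) (measure_ne_top _ _), measure_univ, hWlaw i,
      ENNReal.ofReal_sub 1 hp0.le, ENNReal.ofReal_one]
  have hPC : ∀ i j, P {x | ξ i x ≤ j} = ENNReal.ofReal (q j) := by
    intro i j
    have h1 : P {x | ξ i x ≤ j} = P {x | ξ 1 x ≤ j} :=
      (hξid i 1).measure_mem_eq (measurableSet_Iic (a := j))
    rw [h1, ← ENNReal.ofReal_toReal (measure_ne_top P _), hq j]
  have hPCc : ∀ i j, P {x | ¬ ξ i x ≤ j} = ENNReal.ofReal (1 - q j) := by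
    intro i j
    have hset : {x | ¬ ξ i x ≤ j} = {x | ξ i x ≤ j}ᶜ := rfl
    rw [hset, measure_compl (hmC i j) (measure_ne_top _ _), measure_univ, hPC i j,
      ENNReal.ofReal_sub 1 (hq0 j), ENNReal.ofReal_one]
  refine ⟨?_, ?_⟩
  swap
  · refine Filter.Eventually.of_forall fun x => ?_
    rw [hJ]
    calc ((Finset.Ico 1 (R x)).filter fun i => W i x = 0).card
        ≤ (Finset.Ico 1 (R x)).card := Finset.card_filter_le _ _
      _ = R x - 1 := Nat.card_Ico _ _
  intro r hr _hpos k
  have hrI : r ∉ Finset.Ico 1 r := by simp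
  -- core characterization of membership in E S
  have hcore : ∀ S : Finset ℕ, S ⊆ Finset.Ico 1 r → ∀ x : Ω,
      x ∈ Stmt5Aux.E W ξ r S ↔
        (R x = r ∧ (Finset.Ico 1 r).filter (fun i => W i x = 0) = S) := by
    intro S hS x
    have hrS : r ∉ S := fun h => hrI (hS h)
    rw [Stmt5Aux.mem_E' W ξ r S hrS]
    constructor
    · rintro ⟨hw, hx, h⟩
      have hRx : R x = r := by
        simp only [hR]
        have hrmem : r ∈ {n : ℕ | 1 ≤ n ∧ W n x = 1 ∧ ξ n x ≤ n} := ⟨hr, hw, hx⟩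
        refine le_antisymm (Nat.sInf_le hrmem) ?_
        by_contra hlt
        push_neg at hlt
        have hmem := Nat.sInf_mem (⟨r, hrmem⟩ :
          Set.Nonempty {n : ℕ | 1 ≤ n ∧ W n x = 1 ∧ ξ n x ≤ n})
        obtain ⟨hm1, hmw, hmx⟩ := hmem
        have hmI : sInf {n : ℕ | 1 ≤ n ∧ W n x = 1 ∧ ξ n x ≤ n} ∈ Finset.Ico 1 r :=
          Finset.mem_Ico.mpr ⟨hm1, hlt⟩
        rcases Decidable.em (sInf {n : ℕ | 1 ≤ n ∧ W n x = 1 ∧ ξ n x ≤ n} ∈ S) with h' | h'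
        · have := (h _ hmI).1 h'; omega
        · exact ((h _ hmI).2 h').2 hmx
      refine ⟨hRx, ?_⟩
      ext i
      simp only [Finset.mem_filter]
      constructor
      · rintro ⟨hi, hw0⟩
        by_contra hiS
        have := ((h i hi).2 hiS).1
        omega
      · intro hiS
        exact ⟨hS hiS, (h i (hS hiS)).1 hiS⟩
    · rintro ⟨hRx, hfilt⟩
      simp only [hR] at hRx
      have hne : {n : ℕ | 1 ≤ n ∧ W n x = 1 ∧ ξ n x ≤ n}.Nonempty := by
        by_contra hne
        rw [Set.not_nonempty_iff_eq_empty] at hne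
        rw [hne, Nat.sInf_empty] at hRx
        omega
      have hmem : r ∈ {n : ℕ | 1 ≤ n ∧ W n x = 1 ∧ ξ n x ≤ n} := by
        rw [← hRx]; exact Nat.sInf_mem hne
      have hnot : ∀ i ∈ Finset.Ico 1 r, ¬ (W i x = 1 ∧ ξ i x ≤ i) := by
        intro i hi hcon
        have hi' := Finset.mem_Ico.mp hi
        have hmem' : i ∈ {n : ℕ | 1 ≤ n ∧ W n x = 1 ∧ ξ n x ≤ n} := ⟨hi'.1, hcon⟩
        have := Nat.sInf_le hmem'
        omega
      refine ⟨hmem.2.1, hmem.2.2, fun i hi => ⟨fun hiS => ?_, fun hiS => ?_⟩⟩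
      · have : i ∈ (Finset.Ico 1 r).filter (fun i => W i x = 0) := hfilt ▸ hiS
        exact (Finset.mem_filter.mp this).2
      · have hWne : W i x ≠ 0 := by
          intro h0
          exact hiS (hfilt ▸ Finset.mem_filter.mpr ⟨hi, h0⟩)
        have hW1 : W i x = 1 := by have := hWval i x; omega
        exact ⟨hW1, fun hle => hnot i hi ⟨hW1, hle⟩⟩
  -- measurability of E S
  have hmeasE : ∀ S : Finset ℕ, MeasurableSet (Stmt5Aux.E W ξ r S) := by
    intro S
    simp only [Stmt5Aux.E]
    refine Finset.measurableSet_biInter _ fun t _ => ?_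
    rcases t with i | i
    · simp only [Stmt5Aux.G, Sum.elim_inl]
      split_ifs
      · exact hWmeas i (measurableSet_singleton 0)
      · exact hWmeas i (measurableSet_singleton 1)
    · simp only [Stmt5Aux.G, Sum.elim_inr]
      split_ifs
      · exact hmC i i
      · exact (hmC i i).compl
  -- probability of E S
  have hPE : ∀ S : Finset ℕ, S ⊆ Finset.Ico 1 r →
      P (Stmt5Aux.E W ξ r S) = (ENNReal.ofReal p * ENNReal.ofReal (q r)) *
        ((∏ i ∈ S, ENNReal.ofReal (1 - p)) *
          ∏ i ∈ Finset.Ico 1 r \ S, ENNReal.ofReal p * ENNReal.ofReal (1 - q i)) := by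
    intro S hS
    have hrS : r ∉ S := fun h => hrI (hS h)
    have step : P (Stmt5Aux.E W ξ r S)
        = ∏ t ∈ Stmt5Aux.T r S, P (Stmt5Aux.G W ξ r S t) := by
      simp only [Stmt5Aux.E]
      refine hindep.meas_biInter ?_
      intro t _
      rcases t with i | i
      · refine ⟨if i ∈ S then {0} else {1}, MeasurableSpace.measurableSet_top, ?_⟩
        simp only [Stmt5Aux.G, Sum.elim_inl]
        split_ifs <;> rfl
      · refine ⟨if i = r then Set.Iic i else (Set.Iic i)ᶜ,
          MeasurableSpace.measurableSet_top, ?_⟩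
        simp only [Stmt5Aux.G, Sum.elim_inr]
        split_ifs <;> rfl
    have hdisjT : Disjoint ((insert r (Finset.Ico 1 r)).image Sum.inl)
        ((insert r (Finset.Ico 1 r \ S)).image (Sum.inr : ℕ → ℕ ⊕ ℕ)) := by
      simp [Finset.disjoint_left]
    have hrIS : r ∉ Finset.Ico 1 r \ S := fun h => hrI (Finset.mem_sdiff.mp h).1
    rw [step, Stmt5Aux.T, Finset.prod_union hdisjT,
      Finset.prod_image (fun a _ b _ h => Sum.inl.inj h),
      Finset.prod_image (fun a _ b _ h => Sum.inr.inj h),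
      Finset.prod_insert hrI, Finset.prod_insert hrIS]
    have e1 : P (Stmt5Aux.G W ξ r S (Sum.inl r)) = ENNReal.ofReal p := by
      simp only [Stmt5Aux.G, Sum.elim_inl, if_neg hrS]
      exact hWlaw r
    have e2 : ∏ i ∈ Finset.Ico 1 r, P (Stmt5Aux.G W ξ r S (Sum.inl i))
        = (∏ i ∈ Finset.Ico 1 r \ S, ENNReal.ofReal p) *
          ∏ i ∈ S, ENNReal.ofReal (1 - p) := by
      rw [← Finset.prod_sdiff hS]
      congr 1
      · refine Finset.prod_congr rfl fun i hi => ?_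
        simp only [Stmt5Aux.G, Sum.elim_inl, if_neg (Finset.mem_sdiff.mp hi).2]
        exact hWlaw i
      · refine Finset.prod_congr rfl fun i hi => ?_
        simp only [Stmt5Aux.G, Sum.elim_inl, if_pos hi]
        exact hPW0 i
    have e3 : P (Stmt5Aux.G W ξ r S (Sum.inr r)) = ENNReal.ofReal (q r) := by
      simp only [Stmt5Aux.G, Sum.elim_inr, if_pos rfl]
      exact hPC r r
    have e4 : ∏ i ∈ Finset.Ico 1 r \ S, P (Stmt5Aux.G W ξ r S (Sum.inr i))
        = ∏ i ∈ Finset.Ico 1 r \ S, ENNReal.ofReal (1 - q i) := by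
      refine Finset.prod_congr rfl fun i hi => ?_
      have hir : i ≠ r := by
        have := Finset.mem_Ico.mp (Finset.mem_sdiff.mp hi).1
        omega
      simp only [Stmt5Aux.G, Sum.elim_inr, if_neg hir]
      exact hPCc i i
    rw [e1, e2, e3, e4, Finset.prod_mul_distrib]
    ring
  -- real value
  have hval : ∀ S : Finset ℕ, S ⊆ Finset.Ico 1 r →
      (P (Stmt5Aux.E W ξ r S)).toReal = (p * q r) *
        ((∏ i ∈ S, (1 - p)) * ∏ i ∈ Finset.Ico 1 r \ S, p * (1 - q i)) := by
    intro S hS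
    rw [hPE S hS, ENNReal.toReal_mul, ENNReal.toReal_mul, ENNReal.toReal_mul,
      ENNReal.toReal_prod, ENNReal.toReal_prod,
      ENNReal.toReal_ofReal hp0.le, ENNReal.toReal_ofReal (hq0 r)]
    congr 1
    congr 1
    · exact Finset.prod_congr rfl fun i _ => ENNReal.toReal_ofReal (by linarith)
    · refine Finset.prod_congr rfl fun i _ => ?_
      rw [ENNReal.toReal_mul, ENNReal.toReal_ofReal hp0.le,
        ENNReal.toReal_ofReal (by linarith [hq1 i])]
  -- disjointness
  have hdisj : ∀ S₁ : Finset ℕ, S₁ ⊆ Finset.Ico 1 r → ∀ S₂ : Finset ℕ,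
      S₂ ⊆ Finset.Ico 1 r → S₁ ≠ S₂ →
      Disjoint (Stmt5Aux.E W ξ r S₁) (Stmt5Aux.E W ξ r S₂) := by
    intro S₁ h1 S₂ h2 hne
    refine Set.disjoint_left.mpr fun x hx1 hx2 => hne ?_
    have e1 := ((hcore S₁ h1 x).mp hx1).2
    have e2 := ((hcore S₂ h2 x).mp hx2).2
    rw [← e1, ← e2]
  -- set decompositions
  have hset1 : {x | J x = k ∧ R x = r}
      = ⋃ S ∈ Finset.powersetCard k (Finset.Ico 1 r), Stmt5Aux.E W ξ r S := by
    ext x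
    simp only [Set.mem_setOf_eq, Set.mem_iUnion, exists_prop]
    constructor
    · rintro ⟨hJx, hRx⟩
      refine ⟨(Finset.Ico 1 r).filter (fun i => W i x = 0), ?_, ?_⟩
      · rw [Finset.mem_powersetCard]
        refine ⟨Finset.filter_subset _ _, ?_⟩
        simp only [hJ] at hJx
        rw [hRx] at hJx
        exact hJx
      · exact (hcore _ (Finset.filter_subset _ _) x).mpr ⟨hRx, rfl⟩
    · rintro ⟨S, hSk, hx⟩
      rw [Finset.mem_powersetCard] at hSk
      obtain ⟨hRx, hfilt⟩ := (hcore S hSk.1 x).mp hx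
      refine ⟨?_, hRx⟩
      simp only [hJ]
      rw [hRx, hfilt]
      exact hSk.2
  have hset2 : {x | R x = r}
      = ⋃ S ∈ (Finset.Ico 1 r).powerset, Stmt5Aux.E W ξ r S := by
    ext x
    simp only [Set.mem_setOf_eq, Set.mem_iUnion, exists_prop]
    constructor
    · intro hRx
      exact ⟨(Finset.Ico 1 r).filter (fun i => W i x = 0),
        Finset.mem_powerset.mpr (Finset.filter_subset _ _),
        (hcore _ (Finset.filter_subset _ _) x).mpr ⟨hRx, rfl⟩⟩
    · rintro ⟨S, hSk, hx⟩
      exact ((hcore S (Finset.mem_powerset.mp hSk) x).mp hx).1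
  -- sums
  have hsum1 : P {x | J x = k ∧ R x = r}
      = ∑ S ∈ Finset.powersetCard k (Finset.Ico 1 r), P (Stmt5Aux.E W ξ r S) := by
    rw [hset1]
    refine measure_biUnion_finset ?_ fun S _ => hmeasE S
    intro S₁ h1 S₂ h2 hne
    rw [Finset.mem_coe, Finset.mem_powersetCard] at h1 h2
    exact hdisj S₁ h1.1 S₂ h2.1 hne
  have hsum2 : P {x | R x = r}
      = ∑ S ∈ (Finset.Ico 1 r).powerset, P (Stmt5Aux.E W ξ r S) := by
    rw [hset2]
    refine measure_biUnion_finset ?_ fun S _ => hmeasE S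
    intro S₁ h1 S₂ h2 hne
    rw [Finset.mem_coe, Finset.mem_powerset] at h1 h2
    exact hdisj S₁ h1 S₂ h2 hne
  have hPR : (P {x | R x = r}).toReal
      = (∏ i ∈ Finset.Ico 1 r, (1 - p * q i)) * (p * q r) := by
    rw [hsum2, ENNReal.toReal_sum (fun S _ => measure_ne_top _ _),
      Finset.sum_congr rfl (fun S hS => hval S (Finset.mem_powerset.mp hS))]
    rw [← Finset.mul_sum, ← Finset.prod_add]
    rw [Finset.prod_congr rfl (fun i _ => by ring :
      ∀ i ∈ Finset.Ico 1 r, (1 - p + p * (1 - q i)) = 1 - p * q i)]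
    ring
  have hIcc : Finset.Icc 1 (r - 1) = Finset.Ico 1 r := by
    ext i
    simp only [Finset.mem_Icc, Finset.mem_Ico]
    omega
  rw [hIcc, hsum1, ENNReal.toReal_sum (fun S _ => measure_ne_top _ _),
    Finset.sum_congr rfl (fun S hS => hval S (Finset.mem_powersetCard.mp hS).1),
    hPR, Finset.sum_mul]
  refine Finset.sum_congr rfl fun S hS => ?_
  have hSsub := (Finset.mem_powersetCard.mp hS).1
  have e1 : ∏ i ∈ S, (1 - p) = ∏ i ∈ S, ((1 - p) / (1 - p * q i) * (1 - p * q i)) :=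
    Finset.prod_congr rfl fun i _ => (div_mul_cancel₀ _ (hden i).ne').symm
  have e2 : ∏ i ∈ Finset.Ico 1 r \ S, (p * (1 - q i))
      = ∏ i ∈ Finset.Ico 1 r \ S, ((1 - (1 - p) / (1 - p * q i)) * (1 - p * q i)) := by
    refine Finset.prod_congr rfl fun i _ => ?_
    have h := (hden i).ne'
    field_simp
    ring
  rw [e1, e2, ← Finset.prod_sdiff hSsub, Finset.prod_mul_distrib, Finset.prod_mul_distrib]
  ring
end

section
/- For every p ∈ (0,1), E[J_p] = (1−p)·E[R_p]; equivalently, E[J_p | R_p] = (1−p)(R_p − 1) + p·∑_{i=1}^{R_p−1} θ_i(p) almost surely, where θ_i(p) := (1−p)·q_i/(1 − p·q_i), and taking expectations yields E[J_p] = (1−p)·E[R_p]. -/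
open MeasureTheory ProbabilityTheory Finset Sum
open scoped ENNReal NNReal

section Aux

variable {Ω : Type*} [MeasurableSpace Ω] {P : MeasureTheory.Measure Ω}

private lemma sInf_eq_pos_iff (T : Set ℕ) (r : ℕ) (hr : 1 ≤ r) :
    sInf T = r ↔ r ∈ T ∧ ∀ j < r, j ∉ T := by
  constructor
  · rintro rfl
    have hne : T.Nonempty := by
      by_contra h
      rw [Set.not_nonempty_iff_eq_empty] at h
      simp [h, Nat.sInf_empty] at hr
    exact ⟨Nat.sInf_mem hne, fun j hj => Nat.notMem_of_lt_sInf hj⟩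
  · rintro ⟨hrT, hmin⟩
    refine le_antisymm (Nat.sInf_le hrT) ?_
    by_contra h
    push_neg at h
    exact hmin _ h (Nat.sInf_mem ⟨r, hrT⟩)

private lemma sInf_eq_zero_iff' (T : Set ℕ) (hT : 0 ∉ T) : sInf T = 0 ↔ T = ∅ := by
  constructor
  · intro h
    by_contra hne
    rw [← Ne, ← Set.nonempty_iff_ne_empty] at hne
    exact hT (h ▸ Nat.sInf_mem hne)
  · intro h; simp [h, Nat.sInf_empty]

private lemma forall_notmem_iff (T : Set ℕ) (hT : 0 ∉ T) (n : ℕ) :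
    (∀ j ≤ n, j ∉ T) ↔ (T = ∅ ∨ n < sInf T) := by
  constructor
  · intro h
    rcases Set.eq_empty_or_nonempty T with he | hne
    · exact Or.inl he
    · refine Or.inr ?_
      by_contra hle
      push_neg at hle
      exact h _ hle (Nat.sInf_mem hne)
  · rintro (rfl | hlt) j hj hjT
    · exact hjT
    · exact absurd (Nat.sInf_le hjT) (by omega)

private theorem block_indep (ξ W : ℕ → Ω → ℕ)
    (hξmeas : ∀ i, Measurable (ξ i)) (hWmeas : ∀ i, Measurable (W i))
    (hindep : ProbabilityTheory.iIndepFun (Sum.elim W ξ) P) :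
    iIndep (fun j => MeasurableSpace.comap (W j) inferInstance ⊔
      MeasurableSpace.comap (ξ j) inferInstance) P := by
  set mN : MeasurableSpace ℕ := inferInstance
  have hmeasN : ∀ s : Set ℕ, MeasurableSet s := fun s => s.to_countable.measurableSet
  set π : ℕ → Set (Set Ω) := fun j =>
    {B | ∃ s t : Set ℕ, B = W j ⁻¹' s ∩ ξ j ⁻¹' t} with hπ
  have hpi : ∀ j, IsPiSystem (π j) := by
    rintro j _ ⟨s1, t1, rfl⟩ _ ⟨s2, t2, rfl⟩ _
    exact ⟨s1 ∩ s2, t1 ∩ t2, by simp [Set.preimage_inter]; ac_rfl⟩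
  have hgen : ∀ j, (MeasurableSpace.comap (W j) mN ⊔ MeasurableSpace.comap (ξ j) mN)
      = MeasurableSpace.generateFrom (π j) := by
    intro j
    refine le_antisymm (sup_le ?_ ?_) (MeasurableSpace.generateFrom_le ?_)
    · rintro _ ⟨s, _, rfl⟩
      exact MeasurableSpace.measurableSet_generateFrom ⟨s, Set.univ, by simp⟩
    · rintro _ ⟨t, _, rfl⟩
      exact MeasurableSpace.measurableSet_generateFrom ⟨Set.univ, t, by simp⟩
    · rintro _ ⟨s, t, rfl⟩
      exact MeasurableSet.inter
        ((le_sup_left : MeasurableSpace.comap (W j) mN ≤ _) _ ⟨s, hmeasN s, rfl⟩)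
        ((le_sup_right : MeasurableSpace.comap (ξ j) mN ≤ _) _ ⟨t, hmeasN t, rfl⟩)
  have hsets : iIndepSets π P := by
    rw [iIndepSets_iff]
    intro S f hf
    choose s' t' hst using hf
    classical
    set s'' : ℕ → Set ℕ := fun i => if h : i ∈ S then s' i h else Set.univ with hs''
    set t'' : ℕ → Set ℕ := fun i => if h : i ∈ S then t' i h else Set.univ with ht''
    have hf' : ∀ i ∈ S, f i = W i ⁻¹' (s'' i) ∩ ξ i ⁻¹' (t'' i) := by
      intro i hi; simp only [hs'', ht'', dif_pos hi]; exact hst i hi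
    set F : ℕ ⊕ ℕ → Set Ω := Sum.elim (fun i => W i ⁻¹' (s'' i)) (fun i => ξ i ⁻¹' (t'' i))
      with hF
    have hmeas : ∀ k ∈ S.disjSum S,
        MeasurableSet[MeasurableSpace.comap (Sum.elim W ξ k) mN] (F k) := by
      rintro (i | i) _
      · exact ⟨s'' i, hmeasN _, rfl⟩
      · exact ⟨t'' i, hmeasN _, rfl⟩
    have key := hindep.meas_biInter (S := S.disjSum S) (s := F) hmeas
    have hInter : (⋂ k ∈ S.disjSum S, F k) = ⋂ i ∈ S, f i := by
      ext x
      simp only [Set.mem_iInter, Finset.mem_disjSum]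
      constructor
      · intro h i hi
        rw [hf' i hi]
        exact ⟨h (inl i) (Or.inl ⟨i, hi, rfl⟩), h (inr i) (Or.inr ⟨i, hi, rfl⟩)⟩
      · rintro h k (⟨i, hi, rfl⟩ | ⟨i, hi, rfl⟩)
        · exact ((hf' i hi ▸ h i hi) : _).1
        · exact ((hf' i hi ▸ h i hi) : _).2
    have hpair : ∀ i ∈ S, P (f i) = P (W i ⁻¹' (s'' i)) * P (ξ i ⁻¹' (t'' i)) := by
      intro i hi
      have h2 := hindep.meas_biInter (S := ({inl i, inr i} : Finset (ℕ ⊕ ℕ)))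
        (s := F) (by rintro (k | k) hk <;> exact (by exact ⟨_, hmeasN _, rfl⟩))
      rw [hf' i hi]
      have : (⋂ k ∈ ({inl i, inr i} : Finset (ℕ ⊕ ℕ)), F k)
          = W i ⁻¹' (s'' i) ∩ ξ i ⁻¹' (t'' i) := by
        simp [hF, Set.iInter_inter_distrib]
      rw [← this, h2, Finset.prod_pair (by simp)]
      rfl
    rw [hInter] at key
    rw [key, Finset.prod_disjSum]
    rw [← Finset.prod_mul_distrib]
    exact (Finset.prod_congr rfl fun i hi => (hpair i hi).symm)
  exact iIndepSets.iIndep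
    (fun j => sup_le (MeasurableSpace.comap_le_iff_le_map.2 (hWmeas j).le_map)
      (MeasurableSpace.comap_le_iff_le_map.2 (hξmeas j).le_map)) π hpi hgen hsets

end Aux

/-- In the renewal construction, with `θ i = (1−p)·q i/(1 − p·q i)`,
the conditional expectation of the arrival count `J` given `R` satisfies
`E[J | R] = (1−p)(R − 1) + p·∑_{i=1}^{R−1} θ i` almost surely, and taking expectations,
`E[J] = (1−p)·E[R]`. -/
theorem stmt6
    {Ω : Type*} [MeasurableSpace Ω] (P : MeasureTheory.Measure Ω)
    [MeasureTheory.IsProbabilityMeasure P]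
    (p : ℝ) (hp : p ∈ Set.Ioo (0 : ℝ) 1)
    (ξ W : ℕ → Ω → ℕ) (q : ℕ → ℝ)
    (hξmeas : ∀ i, Measurable (ξ i)) (hWmeas : ∀ i, Measurable (W i))
    (hξpos : ∀ i x, 1 ≤ ξ i x) (hWval : ∀ i x, W i x ≤ 1)
    (hξid : ∀ i j, ProbabilityTheory.IdentDistrib (ξ i) (ξ j) P P)
    (hWlaw : ∀ i, P {x | W i x = 1} = ENNReal.ofReal p)
    (hq : ∀ j, (P {x | ξ 1 x ≤ j}).toReal = q j)
    (hindep : ProbabilityTheory.iIndepFun (Sum.elim W ξ) P)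
    (R J : Ω → ℕ)
    (hR : R = fun x => sInf {r : ℕ | 1 ≤ r ∧ W r x = 1 ∧ ξ r x ≤ r})
    (hJ : J = fun x => ((Finset.Ico 1 (R x)).filter fun i => W i x = 0).card) :
    (MeasureTheory.condExp (MeasurableSpace.comap R inferInstance) P (fun x => (J x : ℝ)) =ᵐ[P]
      fun x => (1 - p) * ((R x : ℝ) - 1) +
        p * ∑ i ∈ Finset.Icc 1 (R x - 1), (1 - p) * q i / (1 - p * q i)) ∧
    ∫ x, (J x : ℝ) ∂P = (1 - p) * ∫ x, (R x : ℝ) ∂P := by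
  classical
  obtain ⟨hp0, hp1⟩ := hp
  have hmeasN : ∀ s : Set ℕ, MeasurableSet s := fun s => s.to_countable.measurableSet
  -- block σ-algebras and events
  set A : ℕ → Set Ω := fun j => W j ⁻¹' {1} ∩ ξ j ⁻¹' (Set.Iic j) with hA_def
  have hAmeas : ∀ j, MeasurableSet (A j) := fun j =>
    ((hWmeas j) (hmeasN _)).inter ((hξmeas j) (hmeasN _))
  set m : ℕ → MeasurableSpace Ω := fun j => MeasurableSpace.comap (W j) inferInstance ⊔
      MeasurableSpace.comap (ξ j) inferInstance with hm_def
  have hblock : iIndep m P := block_indep ξ W hξmeas hWmeas hindep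
  have hAm : ∀ j, MeasurableSet[m j] (A j) := fun j =>
    ((le_sup_left : _ ≤ m j) _ ⟨{1}, hmeasN _, rfl⟩).inter
      ((le_sup_right : _ ≤ m j) _ ⟨Set.Iic j, hmeasN _, rfl⟩)
  have hW0m : ∀ j, MeasurableSet[m j] (W j ⁻¹' {0}) := fun j =>
    (le_sup_left : _ ≤ m j) _ ⟨{0}, hmeasN _, rfl⟩
  -- basic probabilities
  have hq01 : ∀ j, 0 ≤ q j ∧ q j ≤ 1 := by
    intro j
    rw [← hq j]
    exact ⟨ENNReal.toReal_nonneg, by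
      apply ENNReal.toReal_le_of_le_ofReal zero_le_one
      simpa using prob_le_one⟩
  have hqpre : ∀ j, P (ξ j ⁻¹' Set.Iic j) = ENNReal.ofReal (q j) := by
    intro j
    have h1 : P (ξ j ⁻¹' Set.Iic j) = P (ξ 1 ⁻¹' Set.Iic j) :=
      (hξid j 1).measure_mem_eq (hmeasN _)
    rw [h1]
    have : {x | ξ 1 x ≤ j} = ξ 1 ⁻¹' Set.Iic j := rfl
    rw [← hq j, this, ENNReal.ofReal_toReal (measure_ne_top P _)]
  have hWpre : ∀ i, P (W i ⁻¹' {1}) = ENNReal.ofReal p := by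
    intro i
    rw [← hWlaw i]; rfl
  have hW0 : ∀ i, P (W i ⁻¹' {0}) = ENNReal.ofReal (1 - p) := by
    intro i
    have hc : W i ⁻¹' {0} = (W i ⁻¹' {1})ᶜ := by
      ext x
      have := hWval i x
      simp only [Set.mem_preimage, Set.mem_singleton_iff, Set.mem_compl_iff]
      omega
    rw [hc, measure_compl ((hWmeas i) (hmeasN _)) (measure_ne_top P _), hWpre,
      measure_univ, ENNReal.ofReal_sub _ hp0.le, ENNReal.ofReal_one]
  have hPA : ∀ j, P (A j) = ENNReal.ofReal (p * q j) := by
    intro j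
    have hIF : IndepFun (W j) (ξ j) P :=
      hindep.indepFun (i := Sum.inl j) (j := Sum.inr j) (by simp)
    have := hIF.measure_inter_preimage_eq_mul {1} (Set.Iic j) (hmeasN _) (hmeasN _)
    rw [hA_def]
    simp only []
    rw [this, hWpre, hqpre, ← ENNReal.ofReal_mul hp0.le]
  have hPAc : ∀ j, P ((A j)ᶜ) = ENNReal.ofReal (1 - p * q j) := by
    intro j
    rw [measure_compl (hAmeas j) (measure_ne_top P _), hPA, measure_univ,
      ENNReal.ofReal_sub _ (mul_nonneg hp0.le (hq01 j).1), ENNReal.ofReal_one]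
  -- real-valued products
  set c : ℕ → ℝ := fun j => 1 - p * q j with hc_def
  have hc_pos : ∀ j, 0 < c j := by
    intro j
    have h1 := (hq01 j).1
    have h2 := (hq01 j).2
    have : p * q j ≤ p * 1 := by nlinarith
    simp only [hc_def]; nlinarith
  have hc_le1 : ∀ j, c j ≤ 1 := by
    intro j
    have h1 := (hq01 j).1
    simp only [hc_def]; nlinarith
  set Pi' : ℕ → ℝ := fun n => ∏ j ∈ Finset.Icc 1 n, c j with hPi_def
  have hPi_pos : ∀ n, 0 < Pi' n := fun n => Finset.prod_pos fun j _ => hc_pos j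
  have hPi_le1 : ∀ n, Pi' n ≤ 1 := fun n =>
    Finset.prod_le_one (fun j _ => (hc_pos j).le) (fun j _ => hc_le1 j)
  -- the product rule
  have prodRule : ∀ (S : Finset ℕ) (f : ℕ → Set Ω), (∀ i ∈ S, MeasurableSet[m i] (f i)) →
      P (⋂ i ∈ S, f i) = ∏ i ∈ S, P (f i) := fun S f hf => hblock.meas_biInter hf
  -- product of complements
  have hDn : ∀ (s : Finset ℕ), P (⋂ j ∈ s, (A j)ᶜ) = ENNReal.ofReal (∏ j ∈ s, c j) := by
    intro s
    rw [prodRule s _ (fun i _ => (hAm i).compl),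
      ENNReal.ofReal_prod_of_nonneg (fun j _ => (hc_pos j).le)]
    exact Finset.prod_congr rfl fun j _ => hPAc j
  -- identification of the events of R
  have hIcoIcc : ∀ r : ℕ, 1 ≤ r → Finset.Ico 1 r = Finset.Icc 1 (r - 1) := by
    intro r hr; ext j; simp only [Finset.mem_Ico, Finset.mem_Icc]; omega
  have hRx : ∀ x, R x = sInf {r : ℕ | 1 ≤ r ∧ W r x = 1 ∧ ξ r x ≤ r} := fun x => by rw [hR]
  have hmemT : ∀ (x : Ω) (j : ℕ), j ∈ {r : ℕ | 1 ≤ r ∧ W r x = 1 ∧ ξ r x ≤ r} ↔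
      1 ≤ j ∧ x ∈ A j := by
    intro x j
    simp only [Set.mem_setOf_eq, hA_def, Set.mem_inter_iff, Set.mem_preimage,
      Set.mem_singleton_iff, Set.mem_Iic]
  have hT0 : ∀ x : Ω, 0 ∉ {r : ℕ | 1 ≤ r ∧ W r x = 1 ∧ ξ r x ≤ r} := by
    intro x h
    exact absurd h.1 (by omega)
  have hRr : ∀ r : ℕ, 1 ≤ r → {x | R x = r} = A r ∩ ⋂ j ∈ Finset.Ico 1 r, (A j)ᶜ := by
    intro r hr
    ext x
    rw [Set.mem_setOf_eq, hRx, sInf_eq_pos_iff _ r hr]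
    simp only [Set.mem_inter_iff, Set.mem_iInter, Finset.mem_Ico, Set.mem_compl_iff]
    constructor
    · rintro ⟨h1, h2⟩
      refine ⟨((hmemT x r).1 h1).2, ?_⟩
      rintro j ⟨hj1, hjr⟩ hxA
      exact h2 j hjr ((hmemT x j).2 ⟨hj1, hxA⟩)
    · rintro ⟨h1, h2⟩
      refine ⟨(hmemT x r).2 ⟨hr, h1⟩, ?_⟩
      intro j hjr hjT
      obtain ⟨hj1, hxA⟩ := (hmemT x j).1 hjT
      exact h2 j ⟨hj1, hjr⟩ hxA
  have hRgt : ∀ n : ℕ, {x | n < R x} ∪ {x | R x = 0} = ⋂ j ∈ Finset.Icc 1 n, (A j)ᶜ := by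
    intro n
    ext x
    simp only [Set.mem_union, Set.mem_setOf_eq, hRx, Set.mem_iInter, Finset.mem_Icc,
      Set.mem_compl_iff]
    constructor
    · rintro h j ⟨hj1, hjn⟩ hxA
      have hjT := (hmemT x j).2 ⟨hj1, hxA⟩
      rcases h with hlt | h0
      · exact absurd (Nat.sInf_le hjT) (by omega)
      · rw [sInf_eq_zero_iff' _ (hT0 x)] at h0
        rw [h0] at hjT
        exact hjT
    · intro h
      have h2 : ∀ j ≤ n, j ∉ {r : ℕ | 1 ≤ r ∧ W r x = 1 ∧ ξ r x ≤ r} := by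
        intro j hjn hjT
        obtain ⟨hj1, hxA⟩ := (hmemT x j).1 hjT
        exact h j ⟨hj1, hjn⟩ hxA
      rcases (forall_notmem_iff _ (hT0 x) n).1 h2 with he | hlt
      · right
        rw [sInf_eq_zero_iff' _ (hT0 x)]
        exact he
      · left
        exact hlt
  have hR0sub : ∀ n : ℕ, {x | R x = 0} ⊆ ⋂ j ∈ Finset.Icc 1 n, (A j)ᶜ := fun n =>
    (Set.subset_union_right).trans (hRgt n).subset
  have hR0eq : {x | R x = 0} = ⋂ j ∈ {j : ℕ | 1 ≤ j}, (A j)ᶜ := by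
    ext x
    rw [Set.mem_setOf_eq, hRx, sInf_eq_zero_iff' _ (hT0 x), Set.eq_empty_iff_forall_notMem]
    simp only [Set.mem_iInter, Set.mem_setOf_eq, Set.mem_compl_iff]
    constructor
    · intro h j hj1 hxA
      exact h j ((hmemT x j).2 ⟨hj1, hxA⟩)
    · intro h j hjT
      obtain ⟨hj1, hxA⟩ := (hmemT x j).1 hjT
      exact h j hj1 hxA
  have hRmeasSet : ∀ r : ℕ, MeasurableSet {x | R x = r} := by
    intro r
    rcases Nat.eq_zero_or_pos r with rfl | hr
    · rw [hR0eq]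
      exact MeasurableSet.biInter (Set.to_countable _) fun j _ => (hAmeas j).compl
    · rw [hRr r hr]
      exact (hAmeas r).inter
        (Finset.measurableSet_biInter _ fun j _ => (hAmeas j).compl)
  have hRmeas : Measurable R := measurable_to_countable' hRmeasSet
  -- q tends to 1, geometric tail bound
  have hq_tendsto : Filter.Tendsto q Filter.atTop (nhds 1) := by
    have hmono : Monotone (fun j => ξ 1 ⁻¹' Set.Iic j) := by
      intro a b hab x hx
      exact le_trans hx hab
    have hU : (⋃ j, ξ 1 ⁻¹' Set.Iic j) = Set.univ := by
      ext x
      simp only [Set.mem_iUnion, Set.mem_preimage, Set.mem_Iic, Set.mem_univ, iff_true]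
      exact ⟨ξ 1 x, le_refl _⟩
    have h1 : Filter.Tendsto (fun j => P (ξ 1 ⁻¹' Set.Iic j)) Filter.atTop
        (nhds (P (⋃ j, ξ 1 ⁻¹' Set.Iic j))) := tendsto_measure_iUnion_atTop hmono
    rw [hU, measure_univ] at h1
    have h2 : Filter.Tendsto (fun j => (P (ξ 1 ⁻¹' Set.Iic j)).toReal) Filter.atTop
        (nhds (1 : ℝ≥0∞).toReal) := by
      rw [ENNReal.tendsto_toReal_iff (fun j => measure_ne_top P _) ENNReal.one_ne_top]
      exact h1
    have hqq : ∀ j, (P (ξ 1 ⁻¹' Set.Iic j)).toReal = q j := fun j => hq j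
    simpa only [hqq, ENNReal.toReal_one] using h2
  have hsum : Summable Pi' := by
    obtain ⟨N, hN⟩ : ∃ N : ℕ, ∀ j ≥ N, (1 : ℝ)/2 ≤ q j := by
      have hev : ∀ᶠ j in Filter.atTop, (1:ℝ)/2 ≤ q j :=
        hq_tendsto.eventually (eventually_ge_nhds (show (1:ℝ)/2 < 1 by norm_num))
      rcases (Filter.eventually_atTop).1 hev with ⟨N, hN⟩
      exact ⟨N, hN⟩
    have hgeo : ∀ k : ℕ, Pi' (N + k) ≤ (1 - p/2)^k := by
      intro k
      induction k with
      | zero => simpa using hPi_le1 N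
      | succ k ih =>
        have hstep : Pi' (N + (k+1)) = Pi' (N + k) * c (N + k + 1) := by
          show (∏ j ∈ Finset.Icc 1 (N + k + 1), c j) = _
          rw [Finset.prod_Icc_succ_top (by omega)]
        rw [hstep, pow_succ]
        have hc2 : c (N + k + 1) ≤ 1 - p/2 := by
          have hq2 := hN (N + k + 1) (by omega)
          simp only [hc_def]
          nlinarith
        exact mul_le_mul ih hc2 (hc_pos _).le (pow_nonneg (by nlinarith) k)
    have hsub : Summable (fun k => Pi' (N + k)) := by
      refine Summable.of_nonneg_of_le (fun k => (hPi_pos _).le) hgeo ?_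
      exact summable_geometric_of_lt_one (by nlinarith : (0:ℝ) ≤ 1 - p/2) (by nlinarith : 1 - p/2 < 1)
    refine (summable_nat_add_iff N).1 ?_
    simpa only [add_comm] using hsub
  have hPi_to0 : Filter.Tendsto Pi' Filter.atTop (nhds 0) := hsum.tendsto_atTop_zero
  have hPR0 : P {x | R x = 0} = 0 := by
    have hbound : ∀ n, P {x | R x = 0} ≤ ENNReal.ofReal (Pi' n) := by
      intro n
      refine le_trans (measure_mono (hR0sub n)) ?_
      rw [hDn (Finset.Icc 1 n)]
    have htend : Filter.Tendsto (fun n => ENNReal.ofReal (Pi' n)) Filter.atTop (nhds 0) := by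
      have := ENNReal.tendsto_ofReal hPi_to0
      simpa using this
    have := ge_of_tendsto' htend hbound
    exact le_antisymm this (by simp)
  -- P(R = r)
  have hPRr : ∀ r : ℕ, 1 ≤ r → P {x | R x = r} = ENNReal.ofReal (p * q r * Pi' (r - 1)) := by
    intro r hr
    have hrmem : r ∉ Finset.Ico 1 r := by simp
    set f : ℕ → Set Ω := fun j => if j = r then A r else (A j)ᶜ with hf
    have hfm : ∀ j ∈ insert r (Finset.Ico 1 r), MeasurableSet[m j] (f j) := by
      intro j _
      simp only [hf]
      split_ifs with h
      · subst h; exact hAm j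
      · exact (hAm j).compl
    have hint : (⋂ j ∈ insert r (Finset.Ico 1 r), f j) = {x | R x = r} := by
      rw [hRr r hr, Finset.set_biInter_insert]
      congr 1
      · simp [hf]
      · refine Set.iInter₂_congr fun j hj => ?_
        simp only [hf]
        exact if_neg (by rintro rfl; exact hrmem hj)
    rw [← hint, prodRule _ f hfm, Finset.prod_insert hrmem]
    have h1 : f r = A r := by simp [hf]
    have h2 : ∏ j ∈ Finset.Ico 1 r, P (f j) = ENNReal.ofReal (Pi' (r - 1)) := by
      have : ∀ j ∈ Finset.Ico 1 r, P (f j) = ENNReal.ofReal (c j) := by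
        intro j hj
        have hjr : j ≠ r := by rintro rfl; exact hrmem hj
        rw [show f j = (A j)ᶜ by simp [hf, hjr], hPAc]
      rw [Finset.prod_congr rfl this,
        ← ENNReal.ofReal_prod_of_nonneg (fun j _ => (hc_pos j).le), hIcoIcc r hr]
    rw [h1, hPA, h2, ← ENNReal.ofReal_mul (mul_nonneg hp0.le (hq01 r).1)]
  -- P(R = r ∩ W i = 0)
  have hPRrW : ∀ r : ℕ, 1 ≤ r → ∀ i ∈ Finset.Ico 1 r,
      P ({x | R x = r} ∩ W i ⁻¹' {0}) =
        ENNReal.ofReal (p * q r * ((1 - p) * ∏ j ∈ (Finset.Ico 1 r).erase i, c j)) := by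
    intro r hr i hiIco
    have hrmem : r ∉ Finset.Ico 1 r := by simp
    have hir : i ≠ r := by rintro rfl; exact hrmem hiIco
    set g : ℕ → Set Ω := fun j =>
      if j = r then A r else if j = i then W i ⁻¹' {0} else (A j)ᶜ with hg
    have hgm : ∀ j ∈ insert r (Finset.Ico 1 r), MeasurableSet[m j] (g j) := by
      intro j _
      simp only [hg]
      split_ifs with h1 h2
      · subst h1; exact hAm j
      · subst h2; exact hW0m j
      · exact (hAm j).compl
    have hint : (⋂ j ∈ insert r (Finset.Ico 1 r), g j) = {x | R x = r} ∩ W i ⁻¹' {0} := by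
      rw [hRr r hr]
      ext x
      simp only [Set.mem_iInter, Set.mem_inter_iff, Set.mem_compl_iff, Finset.mem_insert,
        Set.mem_preimage, Set.mem_singleton_iff, hg]
      constructor
      · intro h
        have hxr := h r (Or.inl rfl)
        rw [if_pos rfl] at hxr
        have hxi := h i (Or.inr hiIco)
        rw [if_neg hir, if_pos rfl] at hxi
        refine ⟨⟨hxr, fun j hj => ?_⟩, hxi⟩
        have hjr : j ≠ r := by
          have := Finset.mem_Ico.1 hj; omega
        have hxj := h j (Or.inr hj)
        rw [if_neg hjr] at hxj
        by_cases hji : j = i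
        · subst hji
          rw [if_pos rfl] at hxj
          intro hA
          have h1 : W j x = 1 := hA.1
          have h0 : W j x = 0 := hxj
          omega
        · rw [if_neg hji] at hxj
          exact hxj
      · rintro ⟨⟨hxr, hAll⟩, hWi⟩ j hj
        rcases hj with rfl | hj
        · rw [if_pos rfl]; exact hxr
        · have hjr : j ≠ r := by
            have := Finset.mem_Ico.1 hj; omega
          rw [if_neg hjr]
          by_cases hji : j = i
          · subst hji; rw [if_pos rfl]; exact hWi
          · rw [if_neg hji]; exact hAll j hj
    rw [← hint, prodRule _ g hgm, Finset.prod_insert hrmem]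
    have h1 : g r = A r := by simp [hg]
    have h2 : ∏ j ∈ Finset.Ico 1 r, P (g j) =
        ENNReal.ofReal ((1 - p) * ∏ j ∈ (Finset.Ico 1 r).erase i, c j) := by
      rw [← Finset.mul_prod_erase _ _ hiIco]
      have hgi : g i = W i ⁻¹' {0} := by simp [hg, hir]
      have hco : ∀ j ∈ (Finset.Ico 1 r).erase i, P (g j) = ENNReal.ofReal (c j) := by
        intro j hj
        have hji : j ≠ i := Finset.ne_of_mem_erase hj
        have hjr : j ≠ r := by
          have := Finset.mem_Ico.1 (Finset.mem_of_mem_erase hj); omega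
        rw [show g j = (A j)ᶜ by simp [hg, hji, hjr], hPAc]
      have hrest : ∏ j ∈ (Finset.Ico 1 r).erase i, P (g j) =
          ENNReal.ofReal (∏ j ∈ (Finset.Ico 1 r).erase i, c j) := by
        rw [Finset.prod_congr rfl hco,
          ← ENNReal.ofReal_prod_of_nonneg (fun j _ => (hc_pos j).le)]
      rw [hgi, hW0, hrest, ← ENNReal.ofReal_mul (by nlinarith)]
    rw [h1, hPA, h2, ← ENNReal.ofReal_mul (mul_nonneg hp0.le (hq01 r).1)]
  -- P(n < R)
  have hPRgt : ∀ n : ℕ, P {x | n < R x} = ENNReal.ofReal (Pi' n) := by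
    intro n
    refine le_antisymm ?_ ?_
    · rw [← hDn (Finset.Icc 1 n)]
      exact measure_mono ((Set.subset_union_left).trans (hRgt n).subset)
    · rw [← hDn (Finset.Icc 1 n), ← hRgt n]
      refine le_trans (measure_union_le _ _) ?_
      rw [hPR0, add_zero]
  -- lintegral of R
  have hRpt : ∀ x : Ω, (R x : ℝ≥0∞) =
      ∑' n : ℕ, Set.indicator {y : Ω | n < R y} (fun _ => (1 : ℝ≥0∞)) x := by
    intro x
    have hz : ∀ n ∉ Finset.range (R x),
        Set.indicator {y : Ω | n < R y} (fun _ => (1 : ℝ≥0∞)) x = 0 := by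
      intro n hn
      rw [Finset.mem_range, not_lt] at hn
      exact Set.indicator_of_notMem (by simp only [Set.mem_setOf_eq, not_lt]; omega) (fun _ => (1 : ℝ≥0∞))
    rw [tsum_eq_sum hz]
    have : ∀ n ∈ Finset.range (R x),
        Set.indicator {y : Ω | n < R y} (fun _ => (1 : ℝ≥0∞)) x = 1 := by
      intro n hn
      exact Set.indicator_of_mem (Finset.mem_range.1 hn) (fun _ => (1 : ℝ≥0∞))
    rw [Finset.sum_congr rfl this, Finset.sum_const, Finset.card_range, nsmul_eq_mul, mul_one]
  have hlR : ∫⁻ x, (R x : ℝ≥0∞) ∂P = ∑' n : ℕ, ENNReal.ofReal (Pi' n) := by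
    calc ∫⁻ x, (R x : ℝ≥0∞) ∂P
        = ∫⁻ x, ∑' n : ℕ, Set.indicator {y : Ω | n < R y} (fun _ => (1 : ℝ≥0∞)) x ∂P :=
          lintegral_congr hRpt
      _ = ∑' n : ℕ, ∫⁻ x, Set.indicator {y : Ω | n < R y} (fun _ => (1 : ℝ≥0∞)) x ∂P :=
          lintegral_tsum fun n => (Measurable.indicator
            (measurable_const : Measurable fun _ : Ω => (1 : ℝ≥0∞))
            (measurableSet_lt measurable_const hRmeas)).aemeasurable
      _ = ∑' n : ℕ, P {y : Ω | n < R y} := by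
          refine tsum_congr fun n => ?_
          exact lintegral_indicator_one (measurableSet_lt measurable_const hRmeas)
      _ = ∑' n : ℕ, ENNReal.ofReal (Pi' n) := tsum_congr fun n => hPRgt n
  have hlR_lt : ∫⁻ x, (R x : ℝ≥0∞) ∂P < ⊤ := by
    rw [hlR, ← ENNReal.ofReal_tsum_of_nonneg (fun n => (hPi_pos n).le) hsum]
    exact ENNReal.ofReal_lt_top
  have hRint : Integrable (fun x => (R x : ℝ)) P := by
    refine ⟨(measurable_from_top.comp hRmeas).aestronglyMeasurable, ?_⟩
    rw [hasFiniteIntegral_iff_ofReal (Filter.Eventually.of_forall fun x => by positivity)]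
    calc ∫⁻ x, ENNReal.ofReal ((R x : ℝ)) ∂P = ∫⁻ x, (R x : ℝ≥0∞) ∂P := by
          refine lintegral_congr fun x => ?_
          exact ENNReal.ofReal_natCast _
      _ < ⊤ := hlR_lt
  -- measurability and integrability of J
  have hJle : ∀ x, J x ≤ R x := by
    intro x
    rw [hJ]
    calc ((Finset.Ico 1 (R x)).filter fun i => W i x = 0).card
        ≤ (Finset.Ico 1 (R x)).card := Finset.card_filter_le _ _
      _ = R x - 1 := Nat.card_Ico 1 (R x)
      _ ≤ R x := Nat.sub_le _ _
  have hKmeas : ∀ r : ℕ, Measurable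
      (fun x => ((Finset.Ico 1 r).filter fun i => W i x = 0).card) := by
    intro r
    have : (fun x => ((Finset.Ico 1 r).filter fun i => W i x = 0).card)
        = fun x => ∑ i ∈ Finset.Ico 1 r, if W i x = 0 then 1 else 0 := by
      funext x
      rw [Finset.card_filter]
    rw [this]
    exact Finset.measurable_sum _ fun i _ =>
      Measurable.ite ((hWmeas i) (hmeasN {0})) measurable_const measurable_const
  have hJmeas : Measurable J := by
    apply measurable_to_countable'
    intro k
    have : {x | J x = k} = ⋃ r : ℕ, {x | R x = r} ∩
        {x | ((Finset.Ico 1 r).filter fun i => W i x = 0).card = k} := by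
      ext x
      simp only [Set.mem_setOf_eq, Set.mem_iUnion, Set.mem_inter_iff, hJ]
      constructor
      · intro h
        exact ⟨R x, rfl, h⟩
      · rintro ⟨r, h1, h2⟩
        rw [h1]
        exact h2
    rw [show J ⁻¹' {k} = {x | J x = k} from rfl, this]
    exact MeasurableSet.iUnion fun r => (hRmeasSet r).inter ((hKmeas r) (hmeasN {k}))
  have hJint : Integrable (fun x => (J x : ℝ)) P := by
    refine hRint.mono (measurable_from_top.comp hJmeas).aestronglyMeasurable ?_
    refine Filter.Eventually.of_forall fun x => ?_
    simp only [Real.norm_natCast]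
    exact_mod_cast hJle x
  -- part 2 : expectations
  -- the events for J
  set V : ℕ → Set Ω := fun i => {x | 1 ≤ i ∧ i < R x ∧ W i x = 0} with hV_def
  have hVmeas : ∀ i, MeasurableSet (V i) := by
    intro i
    rcases Nat.eq_zero_or_pos i with rfl | hi
    · have : V 0 = ∅ := by
        ext x; simp [hV_def]
      rw [this]; exact MeasurableSet.empty
    · have : V i = {x | i < R x} ∩ W i ⁻¹' {0} := by
        ext x
        simp only [hV_def, Set.mem_setOf_eq, Set.mem_inter_iff, Set.mem_preimage,
          Set.mem_singleton_iff]
        constructor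
        · rintro ⟨_, h2, h3⟩; exact ⟨h2, h3⟩
        · rintro ⟨h2, h3⟩; exact ⟨hi, h2, h3⟩
      rw [this]
      exact (measurableSet_lt measurable_const hRmeas).inter ((hWmeas i) (hmeasN _))
  have hJpt : ∀ x : Ω, (J x : ℝ≥0∞) =
      ∑' i : ℕ, Set.indicator (V i) (fun _ => (1 : ℝ≥0∞)) x := by
    intro x
    have hz : ∀ i ∉ Finset.Ico 1 (R x),
        Set.indicator (V i) (fun _ => (1 : ℝ≥0∞)) x = 0 := by
      intro i hi
      rw [Finset.mem_Ico] at hi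
      refine Set.indicator_of_notMem ?_ (fun _ => (1 : ℝ≥0∞))
      simp only [hV_def, Set.mem_setOf_eq, not_and]
      intro h1 h2
      omega
    rw [tsum_eq_sum hz, hJ]
    have hcast : (((Finset.Ico 1 (R x)).filter fun i => W i x = 0).card : ℝ≥0∞)
        = ∑ i ∈ Finset.Ico 1 (R x), if W i x = 0 then (1 : ℝ≥0∞) else 0 := by
      rw [Finset.card_filter]
      push_cast
      exact Finset.sum_congr rfl fun i _ => by split_ifs <;> simp
    rw [hcast]
    refine Finset.sum_congr rfl fun i hi => ?_
    rw [Finset.mem_Ico] at hi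
    rw [Set.indicator_apply]
    refine if_congr ?_ rfl rfl
    simp only [hV_def, Set.mem_setOf_eq]
    constructor
    · intro h; exact ⟨hi.1, hi.2, h⟩
    · rintro ⟨_, _, h⟩; exact h
  have hlJ : ∫⁻ x, (J x : ℝ≥0∞) ∂P = ∑' i : ℕ, P (V i) := by
    calc ∫⁻ x, (J x : ℝ≥0∞) ∂P
        = ∫⁻ x, ∑' i : ℕ, Set.indicator (V i) (fun _ => (1 : ℝ≥0∞)) x ∂P :=
          lintegral_congr hJpt
      _ = ∑' i : ℕ, ∫⁻ x, Set.indicator (V i) (fun _ => (1 : ℝ≥0∞)) x ∂P :=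
          lintegral_tsum fun i => (Measurable.indicator
            (measurable_const : Measurable fun _ : Ω => (1 : ℝ≥0∞)) (hVmeas i)).aemeasurable
      _ = ∑' i : ℕ, P (V i) := tsum_congr fun i => lintegral_indicator_one (hVmeas i)
  have hPV : ∀ k : ℕ, P (V (k + 1)) = ENNReal.ofReal ((1 - p) * Pi' k) := by
    intro k
    set i : ℕ := k + 1 with hi_def
    have hi1 : 1 ≤ i := by omega
    have himem : i ∉ Finset.Ico 1 i := by simp
    set U : Set Ω := W i ⁻¹' {0} ∩ ⋂ j ∈ Finset.Ico 1 i, (A j)ᶜ with hU_def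
    have hIcc : Finset.Icc 1 (i - 1) = Finset.Ico 1 i := (hIcoIcc i hi1).symm
    have hD := hRgt (i - 1)
    rw [hIcc] at hD
    have hVU : V i ⊆ U := by
      rintro x ⟨h1, h2, h3⟩
      refine ⟨h3, ?_⟩
      rw [← hD]
      left
      simp only [Set.mem_setOf_eq]
      omega
    have hUV : U ⊆ V i ∪ {x | R x = 0} := by
      rintro x ⟨h3, h4⟩
      rw [← hD] at h4
      rcases h4 with h4 | h4
      · simp only [Set.mem_setOf_eq] at h4
        left
        refine ⟨hi1, ?_, h3⟩
        have hne : R x ≠ i := by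
          intro heq
          have := (sInf_eq_pos_iff {r : ℕ | 1 ≤ r ∧ W r x = 1 ∧ ξ r x ≤ r} i hi1).1
            ((hRx x) ▸ heq)
          have hW1 : W i x = 1 := this.1.2.1
          have hW0 : W i x = 0 := h3
          omega
        omega
      · right; exact h4
    have hPU : P U = ENNReal.ofReal ((1 - p) * Pi' k) := by
      set g : ℕ → Set Ω := fun j => if j = i then W i ⁻¹' {0} else (A j)ᶜ with hg
      have hgm : ∀ j ∈ insert i (Finset.Ico 1 i), MeasurableSet[m j] (g j) := by
        intro j _
        simp only [hg]
        split_ifs with h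
        · subst h; exact hW0m i
        · exact (hAm j).compl
      have hint : (⋂ j ∈ insert i (Finset.Ico 1 i), g j) = U := by
        rw [Finset.set_biInter_insert, hU_def]
        congr 1
        · simp [hg]
        · refine Set.iInter₂_congr fun j hj => ?_
          simp only [hg]
          exact if_neg (by rintro rfl; exact himem hj)
      have hco : ∀ j ∈ Finset.Ico 1 i, P (g j) = ENNReal.ofReal (c j) := by
        intro j hj
        have hji : j ≠ i := by rintro rfl; exact himem hj
        rw [show g j = (A j)ᶜ by simp [hg, hji], hPAc]
      rw [← hint, prodRule _ g hgm, Finset.prod_insert himem,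
        show g i = W i ⁻¹' {0} by simp [hg], hW0, Finset.prod_congr rfl hco,
        ← ENNReal.ofReal_prod_of_nonneg (fun j _ => (hc_pos j).le), hIcoIcc i hi1,
        ← ENNReal.ofReal_mul (by nlinarith)]
      congr 2
    refine le_antisymm ?_ ?_
    · rw [← hPU]; exact measure_mono hVU
    · rw [← hPU]
      calc P U ≤ P (V i) + P {x | R x = 0} := le_trans (measure_mono hUV) (measure_union_le _ _)
        _ = P (V i) := by rw [hPR0, add_zero]
  have hlJ2 : ∫⁻ x, (J x : ℝ≥0∞) ∂P = ENNReal.ofReal (1 - p) * ∫⁻ x, (R x : ℝ≥0∞) ∂P := by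
    rw [hlJ, tsum_eq_zero_add' ENNReal.summable]
    have hV0 : P (V 0) = 0 := by
      have : V 0 = ∅ := by ext x; simp [hV_def]
      rw [this, measure_empty]
    rw [hV0, zero_add]
    calc (∑' k : ℕ, P (V (k + 1)))
        = ∑' k : ℕ, ENNReal.ofReal (1 - p) * ENNReal.ofReal (Pi' k) := by
          refine tsum_congr fun k => ?_
          rw [hPV k, ENNReal.ofReal_mul (by nlinarith)]
      _ = ENNReal.ofReal (1 - p) * ∑' k : ℕ, ENNReal.ofReal (Pi' k) := ENNReal.tsum_mul_left
      _ = ENNReal.ofReal (1 - p) * ∫⁻ x, (R x : ℝ≥0∞) ∂P := by rw [hlR]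
  have hpart2 : ∫ x, (J x : ℝ) ∂P = (1 - p) * ∫ x, (R x : ℝ) ∂P := by
    have hJr : ∫ x, (J x : ℝ) ∂P = (∫⁻ x, (J x : ℝ≥0∞) ∂P).toReal := by
      rw [integral_eq_lintegral_of_nonneg_ae
        (Filter.Eventually.of_forall fun x => (Nat.cast_nonneg (J x) : (0:ℝ) ≤ (J x : ℝ)))
        (show Measurable fun x => (J x : ℝ) from
          measurable_from_top.comp hJmeas).aestronglyMeasurable]
      congr 1
      exact lintegral_congr fun x => ENNReal.ofReal_natCast _
    have hRr' : ∫ x, (R x : ℝ) ∂P = (∫⁻ x, (R x : ℝ≥0∞) ∂P).toReal := by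
      rw [integral_eq_lintegral_of_nonneg_ae
        (Filter.Eventually.of_forall fun x => (Nat.cast_nonneg (R x) : (0:ℝ) ≤ (R x : ℝ)))
        (show Measurable fun x => (R x : ℝ) from
          measurable_from_top.comp hRmeas).aestronglyMeasurable]
      congr 1
      exact lintegral_congr fun x => ENNReal.ofReal_natCast _
    rw [hJr, hRr', hlJ2, ENNReal.toReal_mul, ENNReal.toReal_ofReal (by nlinarith)]
  -- part 1 : conditional expectation
  set θ : ℕ → ℝ := fun i => (1 - p) * q i / (1 - p * q i) with hθ_def
  set G : ℕ → ℝ := fun r => (1 - p) * ((r : ℝ) - 1) + p * ∑ i ∈ Finset.Icc 1 (r - 1), θ i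
    with hG_def
  have hθ0 : ∀ i, 0 ≤ θ i := fun i =>
    div_nonneg (mul_nonneg (by nlinarith) (hq01 i).1) (hc_pos i).le
  have hθ1 : ∀ i, θ i ≤ 1 := by
    intro i
    have hci := hc_pos i
    simp only [hc_def] at hci
    rw [hθ_def]
    rw [div_le_one hci]
    nlinarith [(hq01 i).1, (hq01 i).2]
  have hGbound : ∀ r : ℕ, |G r| ≤ (r : ℝ) + 1 := by
    intro r
    have hsum_le : ∑ i ∈ Finset.Icc 1 (r - 1), θ i ≤ (r : ℝ) := by
      calc ∑ i ∈ Finset.Icc 1 (r - 1), θ i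
          ≤ (Finset.Icc 1 (r - 1)).card • (1 : ℝ) :=
            Finset.sum_le_card_nsmul _ _ _ fun i _ => hθ1 i
        _ = ((r - 1 : ℕ) : ℝ) := by rw [Nat.card_Icc]; simp
        _ ≤ (r : ℝ) := by
            have : (r - 1 : ℕ) ≤ r := Nat.sub_le _ _
            exact_mod_cast this
    have hsum_0 : 0 ≤ ∑ i ∈ Finset.Icc 1 (r - 1), θ i :=
      Finset.sum_nonneg fun i _ => hθ0 i
    have habs : |(r : ℝ) - 1| ≤ (r : ℝ) + 1 := by
      rw [abs_le]
      constructor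
      · have : (0 : ℝ) ≤ r := Nat.cast_nonneg r
        linarith
      · linarith
    rw [hG_def]
    calc |(1 - p) * ((r : ℝ) - 1) + p * ∑ i ∈ Finset.Icc 1 (r - 1), θ i|
        ≤ |(1 - p) * ((r : ℝ) - 1)| + |p * ∑ i ∈ Finset.Icc 1 (r - 1), θ i| := abs_add_le _ _
      _ = (1 - p) * |(r : ℝ) - 1| + p * (∑ i ∈ Finset.Icc 1 (r - 1), θ i) := by
          rw [abs_mul, abs_mul, abs_of_nonneg (by nlinarith : (0:ℝ) ≤ 1 - p),
            abs_of_nonneg hp0.le, abs_of_nonneg hsum_0]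
      _ ≤ (r : ℝ) + 1 := by nlinarith
  have hGR_meas : Measurable[MeasurableSpace.comap R inferInstance] fun x => G (R x) := by
    intro s _
    exact ⟨G ⁻¹' s, hmeasN _, rfl⟩
  have hm_le : MeasurableSpace.comap R inferInstance ≤ ‹MeasurableSpace Ω› :=
    MeasurableSpace.comap_le_iff_le_map.2 hRmeas.le_map
  have hGint : Integrable (fun x => G (R x)) P := by
    refine Integrable.mono (hRint.add (integrable_const 1))
      ((hGR_meas.mono hm_le le_rfl).aestronglyMeasurable) ?_
    refine Filter.Eventually.of_forall fun x => ?_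
    have h1 := hGbound (R x)
    rw [Real.norm_eq_abs, Real.norm_eq_abs, Pi.add_apply,
      abs_of_nonneg (by positivity : (0:ℝ) ≤ (R x : ℝ) + 1)]
    exact h1
  -- per-fiber integral identity
  have hfiber : ∀ r : ℕ, ∫ x in {x | R x = r}, G (R x) ∂P =
      ∫ x in {x | R x = r}, (J x : ℝ) ∂P := by
    intro r
    rcases Nat.eq_zero_or_pos r with rfl | hr
    · rw [Measure.restrict_eq_zero.2 hPR0]
      simp
    · -- left side
      have hL : ∫ x in {x | R x = r}, G (R x) ∂P = (P {x | R x = r}).toReal * G r := by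
        rw [setIntegral_congr_fun (hRmeasSet r)
          (fun x hx => by show G (R x) = G r; rw [(hx : R x = r)] :
            Set.EqOn (fun x => G (R x)) (fun _ => G r) _),
          setIntegral_const, smul_eq_mul, measureReal_def]
      -- right side
      have hRS : ∫ x in {x | R x = r}, (J x : ℝ) ∂P =
          ∑ i ∈ Finset.Ico 1 r, (P ({x | R x = r} ∩ W i ⁻¹' {0})).toReal := by
        have hEq : Set.EqOn (fun x => (J x : ℝ))
            (fun x => ∑ i ∈ Finset.Ico 1 r,
              Set.indicator (W i ⁻¹' {0}) (fun _ => (1 : ℝ)) x) {x | R x = r} := by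
          intro x hx
          have hx' : R x = r := hx
          simp only [hJ, hx']
          rw [Finset.card_filter]
          push_cast
          refine Finset.sum_congr rfl fun i _ => ?_
          rw [Set.indicator_apply]
          refine (if_congr ?_ rfl rfl).symm
          simp [Set.mem_preimage]
        rw [setIntegral_congr_fun (hRmeasSet r) hEq, integral_finset_sum _ (fun i _ =>
          ((integrable_const (1:ℝ)).indicator ((hWmeas i) (hmeasN _))).integrableOn)]
        refine Finset.sum_congr rfl fun i _ => ?_
        rw [setIntegral_indicator ((hWmeas i) (hmeasN _)), setIntegral_const, smul_eq_mul,
          mul_one, Set.inter_comm, measureReal_def]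
      rw [hL, hRS]
      -- numeric computation
      have hIco := hIcoIcc r hr
      have hsum_id : ∑ i ∈ Finset.Icc 1 (r-1), (1 - p)/(c i) = G r := by
        have hterm2 : ∀ i ∈ Finset.Icc 1 (r-1), (1 - p)/(c i) = (1 - p) + p * θ i := by
          intro i _
          have hci := hc_pos i
          simp only [hc_def] at hci
          simp only [hθ_def, hc_def]
          field_simp
          ring
        rw [Finset.sum_congr rfl hterm2, Finset.sum_add_distrib, Finset.sum_const,
          ← Finset.mul_sum, Nat.card_Icc, hG_def]
        have hcast : ((r - 1 + 1 - 1 : ℕ) : ℝ) = (r : ℝ) - 1 := by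
          have h1 : (r - 1 + 1 - 1 : ℕ) = r - 1 := by omega
          rw [h1, Nat.cast_sub hr, Nat.cast_one]
        rw [nsmul_eq_mul, hcast]
        ring
      have hkey : ∀ i ∈ Finset.Icc 1 (r-1),
          (1 - p) * ∏ j ∈ (Finset.Icc 1 (r-1)).erase i, c j = ((1 - p)/(c i)) * Pi' (r-1) := by
        intro i hi
        have hprod : ∏ j ∈ (Finset.Icc 1 (r-1)).erase i, c j = Pi' (r-1) / c i := by
          rw [eq_div_iff (hc_pos i).ne', mul_comm]
          exact Finset.mul_prod_erase _ _ hi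
        rw [hprod]
        ring
      have halg : ∑ i ∈ Finset.Icc 1 (r-1), (1 - p) * ∏ j ∈ (Finset.Icc 1 (r-1)).erase i, c j
          = Pi' (r-1) * G r := by
        rw [Finset.sum_congr rfl hkey, ← Finset.sum_mul, hsum_id, mul_comm]
      have hterm : ∀ i ∈ Finset.Ico 1 r, (P ({x | R x = r} ∩ W i ⁻¹' {0})).toReal =
          p * q r * ((1 - p) * ∏ j ∈ (Finset.Ico 1 r).erase i, c j) := by
        intro i hi
        rw [hPRrW r hr i hi, ENNReal.toReal_ofReal]
        have h1 : 0 ≤ ∏ j ∈ (Finset.Ico 1 r).erase i, c j :=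
          Finset.prod_nonneg fun j _ => (hc_pos j).le
        have h2 := (hq01 r).1
        exact mul_nonneg (mul_nonneg hp0.le h2) (mul_nonneg (by linarith) h1)
      rw [Finset.sum_congr rfl hterm, hPRr r hr, ENNReal.toReal_ofReal
        (mul_nonneg (mul_nonneg hp0.le (hq01 r).1) (hPi_pos (r-1)).le)]
      rw [← Finset.mul_sum]
      simp only [hIco]
      rw [halg]
      ring
  -- set-integral equality on the comap σ-algebra
  have hsetint : ∀ B : Set ℕ, ∫ x in R ⁻¹' B, G (R x) ∂P = ∫ x in R ⁻¹' B, (J x : ℝ) ∂P := by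
    intro B
    haveI : Countable ↥B := (Set.to_countable B).to_subtype
    have hU : R ⁻¹' B = ⋃ r : B, {x | R x = (r : ℕ)} := by
      ext x
      simp only [Set.mem_preimage, Set.mem_iUnion, Set.mem_setOf_eq]
      constructor
      · intro h; exact ⟨⟨R x, h⟩, rfl⟩
      · rintro ⟨r, hr⟩; rw [hr]; exact r.2
    have hdisj : Pairwise (Function.onFun Disjoint fun r : B => {x | R x = (r : ℕ)}) := by
      intro r r' hne
      refine Set.disjoint_left.2 fun x hx hx' => ?_
      exact hne (Subtype.ext (by rw [← (hx : R x = (r:ℕ)), ← (hx' : R x = (r':ℕ))]))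
    rw [hU, integral_iUnion (fun r => hRmeasSet _) hdisj hGint.integrableOn,
      integral_iUnion (fun r => hRmeasSet _) hdisj hJint.integrableOn]
    exact tsum_congr fun r => hfiber (r : ℕ)
  have hgm' : AEStronglyMeasurable[MeasurableSpace.comap R inferInstance]
      (fun x => G (R x)) P :=
    ⟨fun x => G (R x), hGR_meas.stronglyMeasurable, Filter.EventuallyEq.rfl⟩
  have hmain : (fun x => G (R x)) =ᵐ[P]
      MeasureTheory.condExp (MeasurableSpace.comap R inferInstance) P (fun x => (J x : ℝ)) := by
    refine ae_eq_condExp_of_forall_setIntegral_eq hm_le hJint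
      (fun s _ _ => hGint.integrableOn) (fun s hs _ => ?_) hgm'
    obtain ⟨B, _, rfl⟩ := hs
    exact hsetint B
  refine ⟨?_, hpart2⟩
  exact hmain.symm
end

section
/- For every p ∈ (0,1) and every real z > 1−p, setting p̂ := p·z/(1 − p + p·z) ∈ (0,1), one has E[z^{−J_p}] = E[(p̂/p)^{−R_{p̂}}] < ∞, where R_{p̂} is a random variable with P(R_{p̂} = r) = p̂·q_r·∏_{i=1}^{r−1}(1 − p̂·q_i) for r ≥ 1. Equivalently, as convergent series, ∑_{r=1}^{∞} z^{1−r}·p·q_r·∏_{i=1}^{r−1}(1 − p + p·z·(1−q_i)) = ∑_{r=1}^{∞} ((1−p+p·z)/z)^r · (p·z/(1−p+p·z)) · q_r · ∏_{i=1}^{r−1}(1 − p̂·q_i) < ∞. -/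
open MeasureTheory ProbabilityTheory ENNReal Finset

lemma prod_lintegral_aux {Ω : Type*} [MeasurableSpace Ω] (P : MeasureTheory.Measure Ω)
    [MeasureTheory.IsProbabilityMeasure P]
    (ξ W : ℕ → Ω → ℕ)
    (hξmeas : ∀ i, Measurable (ξ i)) (hWmeas : ∀ i, Measurable (W i))
    (hindep : ProbabilityTheory.iIndepFun (Sum.elim W ξ) P)
    (φ : ℕ → ℕ × ℕ → ℝ≥0∞) (s : Finset ℕ) :
    ∫⁻ x, ∏ i ∈ s, φ i (W i x, ξ i x) ∂P = ∏ i ∈ s, ∫⁻ x, φ i (W i x, ξ i x) ∂P := by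
  classical
  have hmφ : ∀ b : ℕ, Measurable fun x => φ b (W b x, ξ b x) := fun b =>
    (measurable_of_countable (φ b)).comp ((hWmeas b).prodMk (hξmeas b))
  induction s using Finset.induction_on with
  | empty => simp
  | @insert a s ha ih =>
    have hmeasf : ∀ i : ℕ ⊕ ℕ, Measurable (Sum.elim W ξ i) := by
      rintro (i | i)
      exacts [hWmeas i, hξmeas i]
    set S : Finset (ℕ ⊕ ℕ) := {Sum.inl a, Sum.inr a} with hS
    set T : Finset (ℕ ⊕ ℕ) := s.image Sum.inl ∪ s.image Sum.inr with hT
    have hST : Disjoint S T := by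
      rw [Finset.disjoint_left]
      intro x hxS hxT
      simp only [hS, Finset.mem_insert, Finset.mem_singleton] at hxS
      simp only [hT, Finset.mem_union, Finset.mem_image] at hxT
      rcases hxS with rfl | rfl <;>
        rcases hxT with ⟨b, hb, hbe⟩ | ⟨b, hb, hbe⟩ <;>
          first
            | (cases hbe; exact ha hb)
            | exact absurd hbe (by simp)
    have base := hindep.indepFun_finset S T hST hmeasf
    have hmemS₁ : Sum.inl a ∈ S := by simp [hS]
    have hmemS₂ : Sum.inr a ∈ S := by simp [hS]
    set ψ₁ : ({x // x ∈ S} → ℕ) → ℝ≥0∞ := fun v =>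
      φ a (v ⟨Sum.inl a, hmemS₁⟩, v ⟨Sum.inr a, hmemS₂⟩) with hψ₁
    set ψ₂ : ({x // x ∈ T} → ℕ) → ℝ≥0∞ := fun v =>
      ∏ i ∈ s.attach, φ i.1
        (v ⟨Sum.inl i.1, Finset.mem_union_left _ (Finset.mem_image_of_mem _ i.2)⟩,
         v ⟨Sum.inr i.1, Finset.mem_union_right _ (Finset.mem_image_of_mem _ i.2)⟩) with hψ₂
    have mψ₁ : Measurable ψ₁ := measurable_of_countable _
    have mψ₂ : Measurable ψ₂ := measurable_of_countable _
    have key := (base.comp mψ₁ mψ₂ :)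
    have e₂ : (ψ₂ ∘ fun x (i : {x // x ∈ T}) => Sum.elim W ξ i x)
        = fun x => ∏ i ∈ s, φ i (W i x, ξ i x) := by
      funext x
      exact Finset.prod_attach s fun i => φ i (W i x, ξ i x)
    rw [e₂] at key
    have e₁ : (ψ₁ ∘ fun x (i : {x // x ∈ S}) => Sum.elim W ξ i x)
        = fun x => φ a (W a x, ξ a x) := rfl
    rw [e₁] at key
    simp_rw [Finset.prod_insert ha]
    rw [lintegral_mul_eq_lintegral_mul_lintegral_of_indepFun'' (hmφ a).aemeasurable
      (Finset.measurable_prod s fun i _ => hmφ i).aemeasurable key, ih]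

set_option maxHeartbeats 1000000 in
/-- In the renewal construction, for every `z > 1 − p`, with
`p̂ = p·z/(1 − p + p·z)`, the transform `E[z^{−J_p}]` is finite and equals
`E[(p̂/p)^{−R_{p̂}}]`, where `R_{p̂}` has `P(R_{p̂} = r) = p̂·q r·∏_{i=1}^{r−1}(1 − p̂·q i)`;
equivalently, as convergent series,
`∑_{r≥1} z^{1−r}·p·q r·∏_{i=1}^{r−1}(1 − p + p·z·(1 − q i))
  = ∑_{r≥1} ((1−p+pz)/z)^r·(pz/(1−p+pz))·q r·∏_{i=1}^{r−1}(1 − p̂·q i) < ∞`. -/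
theorem stmt7
    {Ω : Type*} [MeasurableSpace Ω] (P : MeasureTheory.Measure Ω)
    [MeasureTheory.IsProbabilityMeasure P]
    (p : ℝ) (hp : p ∈ Set.Ioo (0 : ℝ) 1)
    (ξ W : ℕ → Ω → ℕ) (q : ℕ → ℝ)
    (hξmeas : ∀ i, Measurable (ξ i)) (hWmeas : ∀ i, Measurable (W i))
    (hξpos : ∀ i x, 1 ≤ ξ i x) (hWval : ∀ i x, W i x ≤ 1)
    (hξid : ∀ i j, ProbabilityTheory.IdentDistrib (ξ i) (ξ j) P P)
    (hWlaw : ∀ i, P {x | W i x = 1} = ENNReal.ofReal p)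
    (hq : ∀ j, (P {x | ξ 1 x ≤ j}).toReal = q j)
    (hindep : ProbabilityTheory.iIndepFun (Sum.elim W ξ) P)
    (R J : Ω → ℕ)
    (hR : R = fun x => sInf {r : ℕ | 1 ≤ r ∧ W r x = 1 ∧ ξ r x ≤ r})
    (hJ : J = fun x => ((Finset.Ico 1 (R x)).filter fun i => W i x = 0).card)
    (z phat : ℝ) (hz : 1 - p < z) (hphat : phat = p * z / (1 - p + p * z)) :
    phat ∈ Set.Ioo (0 : ℝ) 1 ∧
    MeasureTheory.Integrable (fun x => z ^ (-(J x : ℤ))) P ∧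
    (∫ x, z ^ (-(J x : ℤ)) ∂P =
      ∑' r : ℕ, (phat / p) ^ (-((r : ℤ) + 1)) *
        (phat * q (r + 1) * ∏ i ∈ Finset.Icc 1 r, (1 - phat * q i))) ∧
    Summable (fun r : ℕ =>
      z ^ (1 - ((r : ℤ) + 1)) * (p * q (r + 1)) *
        ∏ i ∈ Finset.Icc 1 r, (1 - p + p * z * (1 - q i))) ∧
    (∑' r : ℕ,
        z ^ (1 - ((r : ℤ) + 1)) * (p * q (r + 1)) *
          ∏ i ∈ Finset.Icc 1 r, (1 - p + p * z * (1 - q i)) =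
      ∑' r : ℕ, ((1 - p + p * z) / z) ^ (r + 1) * (p * z / (1 - p + p * z)) * q (r + 1) *
        ∏ i ∈ Finset.Icc 1 r, (1 - phat * q i)) := by
  classical
  obtain ⟨hp0, hp1⟩ := hp
  have h1p : (0:ℝ) < 1 - p := by linarith
  have hz0 : (0:ℝ) < z := lt_trans h1p hz
  have hc1 : (0:ℝ) < 1 - p + p * z := by nlinarith
  have hzne : z ≠ 0 := ne_of_gt hz0
  have hc1ne : (1 - p + p * z) ≠ 0 := ne_of_gt hc1
  have hphat0 : 0 < phat := by rw [hphat]; positivity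
  have hphat1 : phat < 1 := by
    rw [hphat, div_lt_one hc1]; nlinarith
  -- basic facts about q
  set qq : ℕ → ℝ≥0∞ := fun j => P {x | ξ 1 x ≤ j} with hqq
  have hqq_le : ∀ j, qq j ≤ 1 := fun j => prob_le_one
  have hqq_ne : ∀ j, qq j ≠ ⊤ := fun j => (lt_of_le_of_lt (hqq_le j) one_lt_top).ne
  have hq0 : ∀ j, 0 ≤ q j := fun j => (hq j) ▸ ENNReal.toReal_nonneg
  have hq1 : ∀ j, q j ≤ 1 := fun j => by
    rw [← hq j]
    simpa using ENNReal.toReal_mono one_ne_top (hqq_le j)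
  have hqof : ∀ j, ENNReal.ofReal (q j) = qq j := fun j => by
    rw [← hq j, ENNReal.ofReal_toReal (hqq_ne j)]
  have hξlaw : ∀ i j : ℕ, P {x | ξ i x ≤ j} = qq j := fun i j =>
    (hξid i 1).measure_mem_eq (s := {n : ℕ | n ≤ j}) .of_discrete
  have hWξindep : ∀ i : ℕ, ProbabilityTheory.IndepFun (W i) (ξ i) P := fun i =>
    hindep.indepFun (show (Sum.inl i : ℕ ⊕ ℕ) ≠ Sum.inr i by simp)
  have hA : ∀ r : ℕ, P (W r ⁻¹' {1} ∩ ξ r ⁻¹' {n | n ≤ r}) = ENNReal.ofReal (p * q r) := by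
    intro r
    rw [(hWξindep r).measure_inter_preimage_eq_mul {1} {n | n ≤ r} .of_discrete .of_discrete]
    have h1 : W r ⁻¹' {1} = {x | W r x = 1} := rfl
    have h2 : ξ r ⁻¹' {n | n ≤ r} = {x | ξ r x ≤ r} := rfl
    rw [h1, hWlaw r, h2, hξlaw r r, ← hqof r, ← ENNReal.ofReal_mul hp0.le]
  set φh : ℕ → ℕ × ℕ → ℝ≥0∞ := fun i ws =>
    if ws.1 = 1 then (if ws.2 ≤ i then 0 else 1) else ENNReal.ofReal z⁻¹ with hφh
  set φg : ℕ → ℕ × ℕ → ℝ≥0∞ := fun r ws => if ws.1 = 1 ∧ ws.2 ≤ r then 1 else 0 with hφg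
  set φc : ℕ → ℕ × ℕ → ℝ≥0∞ := fun r ws => if ws.1 = 1 ∧ ws.2 ≤ r then 0 else 1 with hφc
  set u : ℕ → ℝ := fun i => p * (1 - q i) + z⁻¹ * (1 - p) with hu
  have hu0 : ∀ i, 0 ≤ u i := fun i =>
    add_nonneg (mul_nonneg hp0.le (by linarith [hq1 i]))
      (mul_nonneg (inv_nonneg.2 hz0.le) h1p.le)
  have hint_g : ∀ r : ℕ, ∫⁻ x, φg r (W r x, ξ r x) ∂P = ENNReal.ofReal (p * q r) := by
    intro r
    have hfun : (fun x => φg r (W r x, ξ r x))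
        = (W r ⁻¹' {1} ∩ ξ r ⁻¹' {n | n ≤ r}).indicator (fun _ => (1:ℝ≥0∞)) := by
      funext x
      by_cases h : W r x = 1 ∧ ξ r x ≤ r <;>
        simp [hφg, h, Set.indicator_apply, Set.mem_inter_iff, Set.mem_preimage,
          Set.mem_singleton_iff, Set.mem_setOf_eq]
    rw [hfun, lintegral_indicator_const
      ((hWmeas r .of_discrete).inter (hξmeas r .of_discrete)), one_mul, hA r]
  have hint_c : ∀ r : ℕ, ∫⁻ x, φc r (W r x, ξ r x) ∂P = 1 - ENNReal.ofReal (p * q r) := by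
    intro r
    have hfun : (fun x => φc r (W r x, ξ r x))
        = ((W r ⁻¹' {1} ∩ ξ r ⁻¹' {n | n ≤ r})ᶜ).indicator (fun _ => (1:ℝ≥0∞)) := by
      funext x
      by_cases h : W r x = 1 ∧ ξ r x ≤ r <;>
        simp [hφc, h, Set.indicator_apply, Set.mem_inter_iff, Set.mem_preimage,
          Set.mem_singleton_iff, Set.mem_setOf_eq]
    rw [hfun, lintegral_indicator_const
      ((hWmeas r .of_discrete).inter (hξmeas r .of_discrete)).compl, one_mul,
      measure_compl ((hWmeas r .of_discrete).inter (hξmeas r .of_discrete))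
        (measure_ne_top P _), measure_univ, hA r]
  have hint_h : ∀ i : ℕ, ∫⁻ x, φh i (W i x, ξ i x) ∂P = ENNReal.ofReal (u i) := by
    intro i
    have hm1 : MeasurableSet (W i ⁻¹' {1} ∩ ξ i ⁻¹' {n | ¬ n ≤ i}) :=
      (hWmeas i .of_discrete).inter (hξmeas i .of_discrete)
    have hm2 : MeasurableSet ((W i ⁻¹' {1})ᶜ) := (hWmeas i .of_discrete).compl
    have hfun : (fun x => φh i (W i x, ξ i x))
        = fun x => (W i ⁻¹' {1} ∩ ξ i ⁻¹' {n | ¬ n ≤ i}).indicator (fun _ => (1:ℝ≥0∞)) x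
            + ((W i ⁻¹' {1})ᶜ).indicator (fun _ => ENNReal.ofReal z⁻¹) x := by
      funext x
      simp only [hφh, Set.indicator_apply, Set.mem_inter_iff, Set.mem_preimage,
        Set.mem_singleton_iff, Set.mem_setOf_eq, Set.mem_compl_iff]
      by_cases h1 : W i x = 1 <;> by_cases h2 : ξ i x ≤ i <;> simp [h1, h2]
    rw [hfun, lintegral_add_left (measurable_const.indicator hm1),
      lintegral_indicator_const hm1, lintegral_indicator_const hm2, one_mul]
    have hPC : P (W i ⁻¹' {1} ∩ ξ i ⁻¹' {n | ¬ n ≤ i}) = ENNReal.ofReal (p * (1 - q i)) := by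
      rw [(hWξindep i).measure_inter_preimage_eq_mul {1} {n | ¬ n ≤ i} .of_discrete .of_discrete]
      have h1 : W i ⁻¹' {1} = {x | W i x = 1} := rfl
      have h2 : ξ i ⁻¹' {n | ¬ n ≤ i} = {x | ξ i x ≤ i}ᶜ := rfl
      rw [h1, hWlaw i, h2, measure_compl
          (show MeasurableSet {x | ξ i x ≤ i} from hξmeas i (MeasurableSet.of_discrete (s := {n : ℕ | n ≤ i}))) (measure_ne_top P _),
        measure_univ, hξlaw i i, ← hqof i, ← ENNReal.ofReal_one,
        ← ENNReal.ofReal_sub 1 (hq0 i), ← ENNReal.ofReal_mul hp0.le]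
    have hPB : P ((W i ⁻¹' {1})ᶜ) = ENNReal.ofReal (1 - p) := by
      have h1 : W i ⁻¹' {1} = {x | W i x = 1} := rfl
      rw [h1, measure_compl
          (show MeasurableSet {x | W i x = 1} from hWmeas i (MeasurableSet.of_discrete (s := {(1 : ℕ)}))) (measure_ne_top P _),
        measure_univ, hWlaw i, ← ENNReal.ofReal_one, ← ENNReal.ofReal_sub 1 hp0.le]
    rw [hPC, hPB, ← ENNReal.ofReal_mul (inv_nonneg.2 hz0.le),
      ← ENNReal.ofReal_add (mul_nonneg hp0.le (by linarith [hq1 i]))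
        (mul_nonneg (inv_nonneg.2 hz0.le) h1p.le)]
  -- facts about R
  have hRx : ∀ x, R x = sInf {r : ℕ | 1 ≤ r ∧ W r x = 1 ∧ ξ r x ≤ r} := fun x => by
    simp only [hR]
  have hRmem : ∀ x, R x ≠ 0 → (1 ≤ R x ∧ W (R x) x = 1 ∧ ξ (R x) x ≤ R x) := by
    intro x hx
    rw [hRx x] at hx ⊢
    have hne : {r : ℕ | 1 ≤ r ∧ W r x = 1 ∧ ξ r x ≤ r}.Nonempty := by
      by_contra h
      rw [Set.not_nonempty_iff_eq_empty] at h
      rw [h, Nat.sInf_empty] at hx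
      exact hx rfl
    exact Nat.sInf_mem hne
  have hRle : ∀ x r, (1 ≤ r ∧ W r x = 1 ∧ ξ r x ≤ r) → R x ≤ r := fun x r h => by
    rw [hRx x]; exact Nat.sInf_le h
  have hRnot : ∀ x i, i < R x → ¬(1 ≤ i ∧ W i x = 1 ∧ ξ i x ≤ i) := fun x i hi h =>
    absurd (hRle x i h) (by omega)
  have hR0all : ∀ x, R x = 0 → ∀ i, ¬(1 ≤ i ∧ W i x = 1 ∧ ξ i x ≤ i) := by
    intro x h0 i hi
    have hne : {r : ℕ | 1 ≤ r ∧ W r x = 1 ∧ ξ r x ≤ r}.Nonempty := ⟨i, hi⟩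
    have hmem := Nat.sInf_mem hne
    rw [← hRx x, h0] at hmem
    exact absurd hmem.1 (by norm_num)
  have hAsetmeas : ∀ i : ℕ, MeasurableSet {x : Ω | 1 ≤ i ∧ W i x = 1 ∧ ξ i x ≤ i} := by
    intro i
    rcases Nat.eq_zero_or_pos i with h | h
    · subst h
      convert MeasurableSet.empty (α := Ω)
      ext x; simp
    · have heq : {x : Ω | 1 ≤ i ∧ W i x = 1 ∧ ξ i x ≤ i}
          = W i ⁻¹' {1} ∩ ξ i ⁻¹' {n | n ≤ i} := by
        ext x
        simp only [Set.mem_setOf_eq, Set.mem_inter_iff, Set.mem_preimage,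
          Set.mem_singleton_iff]
        omega
      rw [heq]
      exact (hWmeas i .of_discrete).inter (hξmeas i .of_discrete)
  have hDmeas : ∀ r : ℕ, MeasurableSet {x | R x = r} := by
    intro r
    match r with
    | 0 =>
      have heq : {x | R x = 0} = ⋂ (i : ℕ), {x : Ω | 1 ≤ i ∧ W i x = 1 ∧ ξ i x ≤ i}ᶜ := by
        ext x
        simp only [Set.mem_iInter, Set.mem_setOf_eq, Set.mem_compl_iff]
        constructor
        · intro h0 i
          exact hR0all x h0 i
        · intro h
          rw [hRx x]
          have : {r : ℕ | 1 ≤ r ∧ W r x = 1 ∧ ξ r x ≤ r} = ∅ := by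
            rw [Set.eq_empty_iff_forall_notMem]; exact h
          rw [this, Nat.sInf_empty]
      rw [heq]
      exact MeasurableSet.iInter fun i => (hAsetmeas i).compl
    | (m+1) =>
      have heq : {x | R x = m+1} = {x : Ω | 1 ≤ m+1 ∧ W (m+1) x = 1 ∧ ξ (m+1) x ≤ m+1}
          ∩ ⋂ (i : ℕ) (_ : i ≤ m), {x : Ω | 1 ≤ i ∧ W i x = 1 ∧ ξ i x ≤ i}ᶜ := by
        ext x
        simp only [Set.mem_inter_iff, Set.mem_iInter, Set.mem_setOf_eq, Set.mem_compl_iff]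
        constructor
        · intro hx
          constructor
          · have := hRmem x (by rw [hx]; exact Nat.succ_ne_zero m)
            rwa [hx] at this
          · intro i hi
            exact hRnot x i (by omega)
        · rintro ⟨h1, h2⟩
          have hle := hRle x (m+1) h1
          have hmem := Nat.sInf_mem (⟨m+1, h1⟩ :
            Set.Nonempty {r : ℕ | 1 ≤ r ∧ W r x = 1 ∧ ξ r x ≤ r})
          rw [← hRx x] at hmem
          by_contra hne
          exact h2 (R x) (by omega) hmem
      rw [heq]
      exact (hAsetmeas (m+1)).inter
        (MeasurableSet.iInter fun i => MeasurableSet.iInter fun _ => (hAsetmeas i).compl)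
  have hcardmeas : ∀ r : ℕ,
      Measurable fun x => ((Finset.Ico 1 r).filter fun i => W i x = 0).card := by
    intro r
    have heq : (fun x => ((Finset.Ico 1 r).filter fun i => W i x = 0).card)
        = (fun v : {i // i ∈ Finset.Ico 1 r} → ℕ =>
            ((Finset.Ico 1 r).attach.filter (fun i => v i = 0)).card)
          ∘ (fun x i => W i.1 x) := by
      funext x
      simp only [Function.comp_apply]
      rw [Finset.filter_attach (fun j => W j x = 0), Finset.card_map, Finset.card_attach]
    rw [heq]
    exact (measurable_of_countable _).comp (measurable_pi_lambda _ fun i => hWmeas i.1)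
  have hJmeas : Measurable J := by
    apply measurable_to_countable'
    intro n
    have heq : J ⁻¹' {n} = ⋃ r : ℕ, ({x | R x = r}
        ∩ {x | ((Finset.Ico 1 r).filter fun i => W i x = 0).card = n}) := by
      ext x
      simp only [Set.mem_preimage, Set.mem_singleton_iff, Set.mem_iUnion, Set.mem_inter_iff,
        Set.mem_setOf_eq, hJ]
      constructor
      · intro h
        exact ⟨R x, rfl, h⟩
      · rintro ⟨r, hr, hc⟩
        rw [hr]
        exact hc
    rw [heq]
    exact MeasurableSet.iUnion fun r => (hDmeas r).inter (hcardmeas r (measurableSet_singleton n))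
  -- key pointwise identity
  set Φ : ℕ → ℕ → ℕ × ℕ → ℝ≥0∞ := fun m i => if i = m + 1 then φg (m+1) else φh i with hΦ
  have hkey : ∀ m : ℕ, (fun x => ∏ i ∈ Finset.Icc 1 (m+1), Φ m i (W i x, ξ i x))
      = Set.indicator {x | R x = m + 1} (fun x => ENNReal.ofReal (z ^ (-(J x : ℤ)))) := by
    intro m
    funext x
    rw [Set.indicator_apply]
    by_cases hx : x ∈ {x : Ω | R x = m + 1}
    · rw [if_pos hx]
      simp only [Set.mem_setOf_eq] at hx
      rw [Finset.prod_Icc_succ_top (by omega : 1 ≤ m + 1)]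
      have hg : Φ m (m+1) (W (m+1) x, ξ (m+1) x) = 1 := by
        have hmem := hRmem x (by rw [hx]; exact Nat.succ_ne_zero m)
        rw [hx] at hmem
        simp [hΦ, hφg, hmem.2.1, hmem.2.2]
      rw [hg, mul_one]
      have hstep : ∀ i ∈ Finset.Icc 1 m, Φ m i (W i x, ξ i x)
          = if W i x = 1 then 1 else ENNReal.ofReal z⁻¹ := by
        intro i hi
        simp only [Finset.mem_Icc] at hi
        have hne : i ≠ m + 1 := by omega
        have hnot := hRnot x i (by omega)
        by_cases hw : W i x = 1
        · have hξi : ¬ ξ i x ≤ i := fun hc => hnot ⟨hi.1, hw, hc⟩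
          simp [hΦ, hφh, hne, hw, hξi]
        · simp [hΦ, hφh, hne, hw]
      rw [Finset.prod_congr rfl hstep, Finset.prod_ite (fun _ => (1:ℝ≥0∞))
        (fun _ => ENNReal.ofReal z⁻¹), Finset.prod_const_one, Finset.prod_const, one_mul]
      have hJx : J x = ((Finset.Icc 1 m).filter fun i => ¬ W i x = 1).card := by
        simp only [hJ, hx]
        rw [← Finset.Ico_add_one_right_eq_Icc]
        congr 1
        apply Finset.filter_congr
        intro i _
        have := hWval i x
        constructor <;> omega
      rw [hJx, ← ENNReal.ofReal_pow (inv_nonneg.2 hz0.le)]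
      congr 1
      rw [zpow_neg, zpow_natCast, inv_pow]
    · rw [if_neg hx]
      simp only [Set.mem_setOf_eq] at hx
      by_cases hg : W (m+1) x = 1 ∧ ξ (m+1) x ≤ m+1
      · have hprop : 1 ≤ m+1 ∧ W (m+1) x = 1 ∧ ξ (m+1) x ≤ m+1 := ⟨by omega, hg.1, hg.2⟩
        have hne : {r : ℕ | 1 ≤ r ∧ W r x = 1 ∧ ξ r x ≤ r}.Nonempty := ⟨m+1, hprop⟩
        have hmem := Nat.sInf_mem hne
        rw [← hRx x] at hmem
        have hle := hRle x (m+1) hprop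
        have hRm : R x ∈ Finset.Icc 1 (m+1) := Finset.mem_Icc.2 ⟨hmem.1, hle⟩
        apply Finset.prod_eq_zero hRm
        have hne2 : R x ≠ m + 1 := hx
        simp [hΦ, hφh, hne2, hmem.2.1, hmem.2.2]
      · apply Finset.prod_eq_zero (Finset.mem_Icc.2 ⟨by omega, le_refl (m+1)⟩)
        simp only [hΦ, hφg, if_pos rfl]
        rw [if_neg hg]
  -- lintegral over each fiber
  have hDint : ∀ m : ℕ, ∫⁻ x in {x | R x = m+1}, ENNReal.ofReal (z ^ (-(J x : ℤ))) ∂P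
      = (∏ i ∈ Finset.Icc 1 m, ENNReal.ofReal (u i)) * ENNReal.ofReal (p * q (m+1)) := by
    intro m
    rw [← lintegral_indicator (hDmeas (m+1))]
    rw [show (fun x => Set.indicator {x | R x = m+1}
        (fun x => ENNReal.ofReal (z ^ (-(J x : ℤ)))) x)
      = fun x => ∏ i ∈ Finset.Icc 1 (m+1), Φ m i (W i x, ξ i x) from (hkey m).symm]
    rw [prod_lintegral_aux P ξ W hξmeas hWmeas hindep (Φ m) (Finset.Icc 1 (m+1)),
      Finset.prod_Icc_succ_top (by omega : 1 ≤ m + 1)]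
    congr 1
    · refine Finset.prod_congr rfl fun i hi => ?_
      have hne : i ≠ m+1 := by
        simp only [Finset.mem_Icc] at hi; omega
      rw [show Φ m i = φh i from by simp [hΦ, hne], hint_h i]
    · rw [show Φ m (m+1) = φg (m+1) from by simp [hΦ], hint_g (m+1)]
  -- q tends to 1
  have hqtend : Filter.Tendsto qq Filter.atTop (nhds 1) := by
    have hmono : Monotone fun j => {x : Ω | ξ 1 x ≤ j} := fun i j hij x hx => le_trans hx hij
    have h := tendsto_measure_iUnion_atTop (μ := P) hmono
    have huniv : ⋃ j, {x : Ω | ξ 1 x ≤ j} = Set.univ := by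
      ext x
      simp only [Set.mem_iUnion, Set.mem_setOf_eq, Set.mem_univ, iff_true]
      exact ⟨ξ 1 x, le_rfl⟩
    rwa [huniv, measure_univ] at h
  have hq_eps : ∀ ε : ℝ, 0 < ε → ∃ N, ∀ i, N ≤ i → 1 - ε ≤ q i := by
    intro ε hε
    rcases le_or_gt (1 - ε) 0 with h | h
    · exact ⟨0, fun i _ => le_trans h (hq0 i)⟩
    · have h1 : ENNReal.ofReal (1 - ε) < 1 := ENNReal.ofReal_lt_one.2 (by linarith)
      have hev := hqtend.eventually (eventually_gt_nhds h1)
      obtain ⟨N, hN⟩ := Filter.eventually_atTop.1 hev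
      refine ⟨N, fun i hi => ?_⟩
      have h2 := ENNReal.toReal_mono (hqq_ne i) (hN i hi).le
      rwa [ENNReal.toReal_ofReal h.le, hq i] at h2
  -- P(R = 0) = 0
  have hPR0 : P {x | R x = 0} = 0 := by
    obtain ⟨N, hN⟩ := hq_eps (1/2) one_half_pos
    have hbound : ∀ n : ℕ, P {x | R x = 0} ≤ ENNReal.ofReal (1 - p/2) ^ n := by
      intro n
      have hPeq : P {x | R x = 0}
          = ∫⁻ x, Set.indicator {x : Ω | R x = 0} (fun _ => (1:ℝ≥0∞)) x ∂P := by
        rw [lintegral_indicator_const (hDmeas 0), one_mul]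
      have hmono2 : P {x | R x = 0}
          ≤ ∫⁻ x, ∏ i ∈ Finset.Icc (N+1) (N+n), φc i (W i x, ξ i x) ∂P := by
        rw [hPeq]
        apply lintegral_mono
        intro x
        dsimp only
        by_cases hx : x ∈ {x : Ω | R x = 0}
        · rw [Set.indicator_of_mem hx]
          have hall : ∀ i ∈ Finset.Icc (N+1) (N+n), φc i (W i x, ξ i x) = 1 := by
            intro i hi
            simp only [Finset.mem_Icc] at hi
            have hnot := hR0all x hx i
            have : ¬ (W i x = 1 ∧ ξ i x ≤ i) := fun hc => hnot ⟨by omega, hc.1, hc.2⟩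
            simp [hφc, this]
          rw [Finset.prod_congr rfl hall, Finset.prod_const_one]
        · rw [Set.indicator_of_notMem hx]
          exact zero_le
      refine le_trans hmono2 ?_
      rw [prod_lintegral_aux P ξ W hξmeas hWmeas hindep φc (Finset.Icc (N+1) (N+n))]
      have hle : ∀ i ∈ Finset.Icc (N+1) (N+n),
          ∫⁻ x, φc i (W i x, ξ i x) ∂P ≤ ENNReal.ofReal (1 - p/2) := by
        intro i hi
        simp only [Finset.mem_Icc] at hi
        rw [hint_c i]
        have hqi : (1:ℝ)/2 ≤ q i := by
          have := hN i (by omega)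
          linarith
        have h1 : (1:ℝ≥0∞) - ENNReal.ofReal (p * q i) = ENNReal.ofReal (1 - p * q i) := by
          rw [ENNReal.ofReal_sub 1 (mul_nonneg hp0.le (hq0 i)), ENNReal.ofReal_one]
        rw [h1]
        apply ENNReal.ofReal_le_ofReal
        nlinarith
      calc ∏ i ∈ Finset.Icc (N+1) (N+n), ∫⁻ x, φc i (W i x, ξ i x) ∂P
          ≤ ∏ _i ∈ Finset.Icc (N+1) (N+n), ENNReal.ofReal (1 - p/2) :=
            Finset.prod_le_prod' hle
        _ = ENNReal.ofReal (1 - p/2) ^ n := by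
            rw [Finset.prod_const, Nat.card_Icc]
            congr 1
            omega
    have htend := ENNReal.tendsto_pow_atTop_nhds_zero_of_lt_one
      (ENNReal.ofReal_lt_one.2 (by linarith : 1 - p/2 < 1))
    have hle0 := ge_of_tendsto' htend hbound
    exact le_antisymm (by simpa using hle0) (zero_le)
  -- total lintegral
  have hunion : (Set.univ : Set Ω) = ⋃ r : ℕ, {x | R x = r} := by
    ext x
    simp only [Set.mem_univ, Set.mem_iUnion, Set.mem_setOf_eq, true_iff]
    exact ⟨R x, rfl⟩
  have hdisj : Pairwise (Function.onFun Disjoint fun r : ℕ => {x : Ω | R x = r}) := by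
    intro r s hrs
    simp only [Function.onFun]
    apply Set.disjoint_left.2
    intro x hx1 hx2
    exact hrs (by rw [← hx1, ← hx2])
  have htotal : ∫⁻ x, ENNReal.ofReal (z ^ (-(J x : ℤ))) ∂P
      = ∑' m : ℕ, ((∏ i ∈ Finset.Icc 1 m, ENNReal.ofReal (u i))
          * ENNReal.ofReal (p * q (m+1))) := by
    have hcompl : (⋃ m : ℕ, {x : Ω | R x = m + 1})ᶜ = {x : Ω | R x = 0} := by
      ext x
      simp only [Set.mem_compl_iff, Set.mem_iUnion, Set.mem_setOf_eq, not_exists]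
      constructor
      · intro h
        rcases Nat.eq_zero_or_pos (R x) with h0 | h0
        · exact h0
        · have := h (R x - 1)
          omega
      · intro h0 m
        omega
    have hae : (⋃ m : ℕ, {x : Ω | R x = m + 1}) =ᵐ[P] (Set.univ : Set Ω) := by
      rw [MeasureTheory.ae_eq_univ, hcompl]
      exact hPR0
    have hdisj' : Pairwise (Function.onFun Disjoint fun m : ℕ => {x : Ω | R x = m + 1}) :=
      fun a b hab => hdisj (show a + 1 ≠ b + 1 by omega)
    rw [← setLIntegral_univ, ← setLIntegral_congr hae,
      lintegral_iUnion (fun m => hDmeas (m+1)) hdisj']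
    exact tsum_congr fun m => hDint m
  -- the real-valued series
  set t : ℕ → ℝ := fun m => p * q (m+1) * ∏ i ∈ Finset.Icc 1 m, u i with ht
  have hprodu0 : ∀ m, 0 ≤ ∏ i ∈ Finset.Icc 1 m, u i := fun m =>
    Finset.prod_nonneg fun i _ => hu0 i
  have ht0 : ∀ m, 0 ≤ t m := fun m => mul_nonneg (mul_nonneg hp0.le (hq0 _)) (hprodu0 m)
  -- summability via ratio test
  have hθ00 : (0:ℝ) ≤ z⁻¹ * (1 - p) := mul_nonneg (inv_nonneg.2 hz0.le) h1p.le
  have hθ01 : z⁻¹ * (1 - p) < 1 := by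
    rw [inv_mul_eq_div, div_lt_one hz0]
    linarith
  set θ : ℝ := (1 + z⁻¹ * (1 - p)) / 2 with hθ
  have hθ1 : θ < 1 := by rw [hθ]; linarith
  have hθ0θ : z⁻¹ * (1 - p) < θ := by rw [hθ]; linarith
  obtain ⟨N, hN⟩ := hq_eps ((θ - z⁻¹ * (1 - p)) / p) (div_pos (by linarith) hp0)
  have huθ : ∀ i, N ≤ i → u i ≤ θ := by
    intro i hi
    have h1 : 1 - (θ - z⁻¹ * (1 - p)) / p ≤ q i := hN i hi
    have h2 : 1 - q i ≤ (θ - z⁻¹ * (1 - p)) / p := by linarith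
    have h3 : p * (1 - q i) ≤ p * ((θ - z⁻¹ * (1 - p)) / p) :=
      mul_le_mul_of_nonneg_left h2 hp0.le
    have h4 : p * ((θ - z⁻¹ * (1 - p)) / p) = θ - z⁻¹ * (1 - p) := by
      field_simp
    simp only [hu]
    linarith
  set d : ℕ → ℝ := fun m => p * ∏ i ∈ Finset.Icc 1 m, u i with hd
  have hd0 : ∀ m, 0 ≤ d m := fun m => mul_nonneg hp0.le (hprodu0 m)
  have hdsum : Summable d := by
    apply summable_of_ratio_norm_eventually_le hθ1
    filter_upwards [Filter.eventually_ge_atTop N] with m hm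
    have hrec : d (m+1) = d m * u (m+1) := by
      simp only [hd]
      rw [Finset.prod_Icc_succ_top (by omega : 1 ≤ m + 1)]
      ring
    rw [Real.norm_eq_abs, Real.norm_eq_abs, abs_of_nonneg (hd0 _), abs_of_nonneg (hd0 _), hrec]
    calc d m * u (m+1) ≤ d m * θ :=
          mul_le_mul_of_nonneg_left (huθ (m+1) (by omega)) (hd0 m)
      _ = θ * d m := mul_comm _ _
  have htsum : Summable t := by
    refine Summable.of_nonneg_of_le ht0 (fun m => ?_) hdsum
    have h1 : p * q (m+1) ≤ p := by nlinarith [hq1 (m+1), hq0 (m+1)]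
    exact mul_le_mul_of_nonneg_right h1 (hprodu0 m)
  -- bridge to ENNReal
  have hterm_ofReal : ∀ m, (∏ i ∈ Finset.Icc 1 m, ENNReal.ofReal (u i))
      * ENNReal.ofReal (p * q (m+1)) = ENNReal.ofReal (t m) := by
    intro m
    rw [← ENNReal.ofReal_prod_of_nonneg (fun i _ => hu0 i),
      ← ENNReal.ofReal_mul (hprodu0 m)]
    congr 1
    simp only [ht]
    ring
  have htotal' : ∫⁻ x, ENNReal.ofReal (z ^ (-(J x : ℤ))) ∂P = ENNReal.ofReal (∑' m, t m) := by
    rw [htotal, ENNReal.ofReal_tsum_of_nonneg ht0 htsum]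
    exact tsum_congr hterm_ofReal
  -- integrability
  have hmeasZJ : Measurable fun x => z ^ (-(J x : ℤ)) :=
    (measurable_of_countable (fun n : ℕ => z ^ (-(n : ℤ)))).comp hJmeas
  have hnnZJ : ∀ x, 0 ≤ z ^ (-(J x : ℤ)) := fun x => zpow_nonneg hz0.le _
  have hInt : MeasureTheory.Integrable (fun x => z ^ (-(J x : ℤ))) P := by
    refine ⟨hmeasZJ.aestronglyMeasurable, ?_⟩
    rw [MeasureTheory.hasFiniteIntegral_iff_norm]
    have heq : ∀ x : Ω, ENNReal.ofReal ‖z ^ (-(J x : ℤ))‖ = ENNReal.ofReal (z ^ (-(J x : ℤ))) :=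
      fun x => by rw [Real.norm_of_nonneg (hnnZJ x)]
    simp only [heq]
    rw [htotal']
    exact ENNReal.ofReal_lt_top
  have hInteq : ∫ x, z ^ (-(J x : ℤ)) ∂P = ∑' m, t m := by
    rw [MeasureTheory.integral_eq_lintegral_of_nonneg_ae
      (Filter.Eventually.of_forall hnnZJ) hmeasZJ.aestronglyMeasurable, htotal',
      ENNReal.toReal_ofReal (tsum_nonneg ht0)]
  -- termwise algebraic identities
  have hterm4 : ∀ m : ℕ, z ^ (1 - ((m:ℤ) + 1)) * (p * q (m + 1)) *
      ∏ i ∈ Finset.Icc 1 m, (1 - p + p * z * (1 - q i)) = t m := by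
    intro m
    have hzpow : z ^ (1 - ((m:ℤ) + 1)) = (z ^ m)⁻¹ := by
      rw [show (1 - ((m:ℤ) + 1)) = -(m:ℤ) by ring, zpow_neg, zpow_natCast]
    have hcgr : ∀ i ∈ Finset.Icc 1 m, (1 - p + p * z * (1 - q i)) = u i * z := by
      intro i _
      simp only [hu]
      field_simp
      ring
    rw [hzpow, Finset.prod_congr rfl hcgr, Finset.prod_mul_distrib, Finset.prod_const,
      Nat.card_Icc]
    simp only [ht, Nat.add_sub_cancel]
    have hzm : (z:ℝ) ^ m ≠ 0 := pow_ne_zero _ hzne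
    field_simp
  have hzpow3 : ∀ m : ℕ, (phat / p) ^ (-((m:ℤ) + 1)) = ((1 - p + p * z) / z) ^ (m + 1) := by
    intro m
    have hphatp : phat / p = z / (1 - p + p * z) := by
      rw [hphat]
      field_simp
    rw [hphatp, show (-((m:ℤ) + 1)) = -(((m+1 : ℕ)):ℤ) by push_cast; ring, zpow_neg,
      zpow_natCast, ← inv_pow, inv_div]
  have hterm3 : ∀ m : ℕ, t m = (phat / p) ^ (-((m:ℤ) + 1)) *
      (phat * q (m + 1) * ∏ i ∈ Finset.Icc 1 m, (1 - phat * q i)) := by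
    intro m
    have hui : ∀ i ∈ Finset.Icc 1 m, u i = (1 - phat * q i) * ((1 - p + p * z) / z) := by
      intro i _
      simp only [hu, hphat]
      field_simp
      ring
    rw [hzpow3 m]
    simp only [ht]
    rw [Finset.prod_congr rfl hui, Finset.prod_mul_distrib, Finset.prod_const, Nat.card_Icc]
    simp only [Nat.add_sub_cancel, hphat]
    rw [pow_succ, div_pow]
    have hzm : (z:ℝ) ^ m ≠ 0 := pow_ne_zero _ hzne
    have hcm : ((1:ℝ) - p + p * z) ^ m ≠ 0 := pow_ne_zero _ hc1ne
    field_simp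
  have hterm5 : ∀ m : ℕ, (phat / p) ^ (-((m:ℤ) + 1)) *
      (phat * q (m + 1) * ∏ i ∈ Finset.Icc 1 m, (1 - phat * q i))
      = ((1 - p + p * z) / z) ^ (m + 1) * (p * z / (1 - p + p * z)) * q (m + 1) *
        ∏ i ∈ Finset.Icc 1 m, (1 - phat * q i) := by
    intro m
    rw [hzpow3 m, hphat]
    ring
  refine ⟨⟨hphat0, hphat1⟩, hInt, ?_, ?_, ?_⟩
  · rw [hInteq]
    exact tsum_congr hterm3
  · exact (summable_congr fun m => hterm4 m).2 htsum
  · exact tsum_congr fun m => ((hterm4 m).trans (hterm3 m)).trans (hterm5 m)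
end

section
/- Assume E[ξ_1] < ∞. Then for every p ∈ (0,1) there exist constants 0 < c_p ≤ C_p < ∞ (depending only on p and the distribution of ξ_1) such that for every integer n ≥ 1: c_p·(1−p)^n ≤ P(J_p ≥ n) ≤ C_p·(1−p)^n. -/
open MeasureTheory ProbabilityTheory

lemma aux_indep_prod {Ω : Type*} [MeasurableSpace Ω] (P : Measure Ω)
    (ξ W : ℕ → Ω → ℕ)
    (hindep : iIndepFun (Sum.elim W ξ) P)
    (a b : Finset ℕ) (v u : ℕ → Set ℕ) :
    P ((⋂ i ∈ a, (W i) ⁻¹' (v i)) ∩ ⋂ i ∈ b, (ξ i) ⁻¹' (u i))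
      = (∏ i ∈ a, P ((W i) ⁻¹' (v i))) * ∏ i ∈ b, P ((ξ i) ⁻¹' (u i)) := by
  classical
  have hmeas : ∀ j ∈ (a.image Sum.inl ∪ b.image Sum.inr : Finset (ℕ ⊕ ℕ)),
      MeasurableSet[(inferInstance : MeasurableSpace ℕ).comap (Sum.elim W ξ j)]
        (Sum.elim (fun i => (W i) ⁻¹' (v i)) (fun i => (ξ i) ⁻¹' (u i)) j) := by
    rintro (i | i) _
    · exact ⟨v i, .of_discrete, rfl⟩
    · exact ⟨u i, .of_discrete, rfl⟩
  have h1 := hindep.meas_biInter hmeas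
  have hint : (⋂ j ∈ (a.image Sum.inl ∪ b.image Sum.inr : Finset (ℕ ⊕ ℕ)),
      Sum.elim (fun i => (W i) ⁻¹' (v i)) (fun i => (ξ i) ⁻¹' (u i)) j)
      = (⋂ i ∈ a, (W i) ⁻¹' (v i)) ∩ ⋂ i ∈ b, (ξ i) ⁻¹' (u i) := by
    ext x
    simp only [Set.mem_iInter, Finset.mem_union, Finset.mem_image, Set.mem_inter_iff]
    constructor
    · intro h
      exact ⟨fun i hi => h (Sum.inl i) (Or.inl ⟨i, hi, rfl⟩),
             fun i hi => h (Sum.inr i) (Or.inr ⟨i, hi, rfl⟩)⟩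
    · rintro ⟨h1, h2⟩ (i | i) hj
      · rcases hj with ⟨j, hj, hji⟩ | ⟨j, hj, hji⟩
        · cases hji; exact h1 _ hj
        · cases hji
      · rcases hj with ⟨j, hj, hji⟩ | ⟨j, hj, hji⟩
        · cases hji
        · cases hji; exact h2 _ hj
  have hdisj : Disjoint (a.image Sum.inl) (b.image Sum.inr : Finset (ℕ ⊕ ℕ)) := by
    simp [Finset.disjoint_left]
  rw [hint] at h1
  rw [h1, Finset.prod_union hdisj, Finset.prod_image (by simp), Finset.prod_image (by simp)]; rfl

lemma aux_tsum_prod_le (a : ℕ → ENNReal) (b : ℕ → ℝ) (hb0 : ∀ i, 0 ≤ b i)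
    (hab : ∀ i, a i ≤ ENNReal.ofReal (b i)) (hb : Summable b) :
    ∑' (T : Finset ℕ), ∏ i ∈ T, a i ≤ ENNReal.ofReal (Real.exp (∑' i, b i)) := by
  classical
  rw [ENNReal.tsum_eq_iSup_sum]
  apply iSup_le; intro F
  set K := (F.sup fun T => T.sup id) + 1 with hK
  have hsub : F ⊆ (Finset.range K).powerset := by
    intro T hT
    rw [Finset.mem_powerset]
    intro i hi
    exact Finset.mem_range.mpr (Nat.lt_succ_of_le (le_trans (Finset.le_sup (f := id) hi)
      (Finset.le_sup (f := fun T => T.sup id) hT)))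
  calc ∑ T ∈ F, ∏ i ∈ T, a i ≤ ∑ T ∈ (Finset.range K).powerset, ∏ i ∈ T, a i :=
        Finset.sum_le_sum_of_subset hsub
    _ = ∏ i ∈ Finset.range K, (a i + 1) := by
        rw [Finset.prod_add]; simp
    _ ≤ ∏ i ∈ Finset.range K, ENNReal.ofReal (Real.exp (b i)) := by
        apply Finset.prod_le_prod'
        intro i _
        calc a i + 1 ≤ ENNReal.ofReal (b i) + ENNReal.ofReal 1 := by
              rw [ENNReal.ofReal_one]; exact add_le_add (hab i) le_rfl
          _ = ENNReal.ofReal (b i + 1) := (ENNReal.ofReal_add (hb0 i) zero_le_one).symm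
          _ ≤ ENNReal.ofReal (Real.exp (b i)) :=
              ENNReal.ofReal_le_ofReal (by linarith [Real.add_one_le_exp (b i)])
    _ = ENNReal.ofReal (∏ i ∈ Finset.range K, Real.exp (b i)) :=
        (ENNReal.ofReal_prod_of_nonneg (fun i _ => (Real.exp_pos _).le)).symm
    _ = ENNReal.ofReal (Real.exp (∑ i ∈ Finset.range K, b i)) := by rw [Real.exp_sum]
    _ ≤ ENNReal.ofReal (Real.exp (∑' i, b i)) :=
        ENNReal.ofReal_le_ofReal (Real.exp_le_exp.mpr (Summable.sum_le_tsum _ (fun i _ => hb0 i) hb))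

lemma aux_summable_tail {Ω : Type*} [MeasurableSpace Ω] (P : Measure Ω)
    [IsProbabilityMeasure P] (f : Ω → ℕ) (hf : Measurable f)
    (hint : Integrable (fun x => (f x : ℝ)) P) :
    Summable (fun i => (P {x | i < f x}).toReal) := by
  classical
  apply summable_of_sum_range_le (c := ∫ x, (f x : ℝ) ∂P) (fun i => ENNReal.toReal_nonneg)
  intro K
  have hms : ∀ i : ℕ, MeasurableSet {x | i < f x} := fun i =>
    hf (MeasurableSet.of_discrete (s := {j | i < j}))
  have h1 : ∀ i : ℕ, (P {x | i < f x}).toReal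
      = ∫ x, Set.indicator {x | i < f x} (fun _ => (1:ℝ)) x ∂P := by
    intro i
    exact (MeasureTheory.integral_indicator_one (hms i)).symm
  have hintind : ∀ i : ℕ, Integrable (Set.indicator {x | i < f x} (fun _ => (1:ℝ))) P :=
    fun i => (integrable_const (1:ℝ)).indicator (hms i)
  calc ∑ i ∈ Finset.range K, (P {x | i < f x}).toReal
      = ∑ i ∈ Finset.range K, ∫ x, Set.indicator {x | i < f x} (fun _ => (1:ℝ)) x ∂P := by
        simp_rw [h1]
    _ = ∫ x, ∑ i ∈ Finset.range K, Set.indicator {x | i < f x} (fun _ => (1:ℝ)) x ∂P :=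
        (integral_finset_sum _ (fun i _ => hintind i)).symm
    _ ≤ ∫ x, (f x : ℝ) ∂P := by
        apply integral_mono (integrable_finset_sum _ (fun i _ => hintind i)) hint
        intro x
        dsimp only
        have : ∑ i ∈ Finset.range K, Set.indicator {x | i < f x} (fun _ => (1:ℝ)) x
            = ((Finset.range K).filter (fun i => i < f x)).card := by
          rw [Finset.card_filter]
          push_cast
          apply Finset.sum_congr rfl
          intro i _
          by_cases h : i < f x <;> simp [Set.indicator_apply, h]
        rw [this]
        have hsub : (Finset.range K).filter (fun i => i < f x) ⊆ Finset.range (f x) := by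
          intro i hi
          simp only [Finset.mem_filter, Finset.mem_range] at *
          exact hi.2
        have := Finset.card_le_card hsub
        simp only [Finset.card_range] at this
        exact_mod_cast this

/-- Assume `E[ξ₁] < ∞`. In the renewal construction, for every `p ∈ (0,1)`
there are constants `0 < c_p ≤ C_p < ∞` such that for every `n ≥ 1`,
`c_p·(1−p)^n ≤ P(J_p ≥ n) ≤ C_p·(1−p)^n`. -/
theorem stmt9
    {Ω : Type*} [MeasurableSpace Ω] (P : MeasureTheory.Measure Ω)
    [MeasureTheory.IsProbabilityMeasure P]
    (p : ℝ) (hp : p ∈ Set.Ioo (0 : ℝ) 1)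
    (ξ W : ℕ → Ω → ℕ) (q : ℕ → ℝ)
    (hξmeas : ∀ i, Measurable (ξ i)) (hWmeas : ∀ i, Measurable (W i))
    (hξpos : ∀ i x, 1 ≤ ξ i x) (hWval : ∀ i x, W i x ≤ 1)
    (hξid : ∀ i j, ProbabilityTheory.IdentDistrib (ξ i) (ξ j) P P)
    (hWlaw : ∀ i, P {x | W i x = 1} = ENNReal.ofReal p)
    (hq : ∀ j, (P {x | ξ 1 x ≤ j}).toReal = q j)
    (hindep : ProbabilityTheory.iIndepFun (Sum.elim W ξ) P)
    (R J : Ω → ℕ)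
    (hR : R = fun x => sInf {r : ℕ | 1 ≤ r ∧ W r x = 1 ∧ ξ r x ≤ r})
    (hJ : J = fun x => ((Finset.Ico 1 (R x)).filter fun i => W i x = 0).card)
    (hξint : MeasureTheory.Integrable (fun x => (ξ 1 x : ℝ)) P) :
    ∃ c C : ℝ, 0 < c ∧ c ≤ C ∧ ∀ n : ℕ, 1 ≤ n →
      c * (1 - p) ^ n ≤ (P {x | n ≤ J x}).toReal ∧
      (P {x | n ≤ J x}).toReal ≤ C * (1 - p) ^ n := by
  classical
  obtain ⟨hp0, hp1⟩ := hp
  set pbar := ENNReal.ofReal p with hpbar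
  set qbar := ENNReal.ofReal (1 - p) with hqbar
  have hW01 : ∀ i x, W i x = 0 ∨ W i x = 1 := fun i x =>
    Nat.le_one_iff_eq_zero_or_eq_one.mp (hWval i x)
  have hW1 : ∀ i, P ((W i) ⁻¹' {1}) = pbar := fun i => hWlaw i
  have hone_sub : (1 : ENNReal) - pbar = qbar := by
    rw [hqbar, ENNReal.ofReal_sub _ hp0.le, ENNReal.ofReal_one]
  have hW0 : ∀ i, P ((W i) ⁻¹' {0}) = qbar := by
    intro i
    have hc : (W i) ⁻¹' {0} = ((W i) ⁻¹' {1})ᶜ := by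
      ext x
      simp only [Set.mem_preimage, Set.mem_singleton_iff, Set.mem_compl_iff]
      rcases hW01 i x with h | h <;> simp [h]
    rw [hc, measure_compl (hWmeas i .of_discrete) (measure_ne_top P _), measure_univ,
      hW1 i, hone_sub]
  -- tails
  set r : ℕ → ENNReal := fun i => P ((ξ 1) ⁻¹' {j | i < j}) with hrdef
  set t : ℕ → ℝ := fun i => (r i).toReal with htdef
  have hrid : ∀ i : ℕ, P ((ξ i) ⁻¹' {j | (i:ℕ) < j}) = r ((i:ℕ)) := fun i =>
    (hξid i 1).measure_mem_eq .of_discrete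
  have hridgen : ∀ i k : ℕ, P ((ξ i) ⁻¹' {j | k < j}) = r k := fun i k =>
    (hξid i 1).measure_mem_eq .of_discrete
  have hrt : ∀ i, r i = ENNReal.ofReal (t i) :=
    fun i => (ENNReal.ofReal_toReal (measure_ne_top P _)).symm
  have ht0 : ∀ i, 0 ≤ t i := fun i => ENNReal.toReal_nonneg
  have hsumt : Summable t := aux_summable_tail P (ξ 1) (hξmeas 1) hξint
  set S := ∑' i, t i with hSdef
  have hS0 : 0 ≤ S := tsum_nonneg ht0
  have hqt : ∀ j, q j = 1 - t j := by
    intro j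
    have hcomp : {x | ξ 1 x ≤ j} = ((ξ 1) ⁻¹' {i | j < i})ᶜ := by
      ext x; simp [not_lt]
    rw [← hq j, hcomp, measure_compl ((hξmeas 1) .of_discrete) (measure_ne_top P _),
      measure_univ]
    rw [ENNReal.toReal_sub_of_le prob_le_one ENNReal.one_ne_top]
    simp [htdef, hrdef]
  have htmono : ∀ i j : ℕ, i ≤ j → t j ≤ t i := by
    intro i j hij
    apply ENNReal.toReal_mono (measure_ne_top P _)
    apply measure_mono
    intro x hx
    exact lt_of_le_of_lt hij hx
  -- choose m with 1 ≤ m and t m ≤ 1/2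
  obtain ⟨m, hm1, hmhalf⟩ : ∃ m : ℕ, 1 ≤ m ∧ t m ≤ 1/2 := by
    have h2 : ∀ᶠ i in Filter.atTop, t i < 1/2 :=
      hsumt.tendsto_atTop_zero.eventually_lt_const (by norm_num)
    obtain ⟨i, hi1, hi2⟩ := (h2.and (Filter.eventually_ge_atTop 1)).exists
    exact ⟨i, hi2, hi1.le⟩
  have hqhalf : ∀ j, m ≤ j → 1/2 ≤ q j := by
    intro j hj
    rw [hqt]
    have := htmono m j hj
    linarith
  have h1p0 : (0:ℝ) < 1 - p := by linarith
  set c := p * (1 - p) ^ (m - 1) * (1/2) with hcdef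
  set C := Real.exp (p * S) with hCdef
  have hc0 : 0 < c := by positivity
  have hC1 : 1 ≤ C := Real.one_le_exp (by positivity)
  have hcC : c ≤ C := by
    have h1 : (1 - p) ^ (m - 1) ≤ 1 := pow_le_one₀ h1p0.le (by linarith)
    nlinarith
  refine ⟨c, C, hc0, hcC, ?_⟩
  intro n hn
  constructor
  · -- LOWER BOUND
    set k := n + m with hkdef
    have hk1 : 1 ≤ k := by omega
    set L : Set Ω := (⋂ i ∈ Finset.Icc 1 k,
        (W i) ⁻¹' (if i = k then ({1} : Set ℕ) else {0})) ∩
        ⋂ i ∈ ({k} : Finset ℕ), (ξ i) ⁻¹' (Set.Iic i) with hLdef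
    have hPL : P L = qbar ^ (n + m - 1) * pbar * ENNReal.ofReal (q k) := by
      rw [hLdef, aux_indep_prod P ξ W hindep]
      have hqk : P ((ξ k) ⁻¹' (Set.Iic k)) = ENNReal.ofReal (q k) := by
        have : P ((ξ k) ⁻¹' (Set.Iic k)) = P ((ξ 1) ⁻¹' (Set.Iic k)) :=
          (hξid k 1).measure_mem_eq .of_discrete
        rw [this, ← hq k]
        exact (ENNReal.ofReal_toReal (measure_ne_top P _)).symm
      rw [Finset.prod_singleton, hqk]
      have hprod : (∏ i ∈ Finset.Icc 1 k,
          P ((W i) ⁻¹' (if i = k then ({1} : Set ℕ) else {0})))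
          = qbar ^ (n + m - 1) * pbar := by
        have hcongr : ∀ i ∈ Finset.Icc 1 k,
            P ((W i) ⁻¹' (if i = k then ({1} : Set ℕ) else {0}))
            = if i = k then pbar else qbar := by
          intro i _
          by_cases h : i = k <;> simp [h, hW1, hW0]
        rw [Finset.prod_congr rfl hcongr, Finset.prod_ite]
        have hf1 : (Finset.Icc 1 k).filter (fun i => i = k) = {k} := by
          ext i; simp only [Finset.mem_filter, Finset.mem_Icc, Finset.mem_singleton]; omega
        have hf2 : (Finset.Icc 1 k).filter (fun i => ¬ i = k) = Finset.Icc 1 (k - 1) := by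
          ext i; simp only [Finset.mem_filter, Finset.mem_Icc]; omega
        rw [hf1, hf2]
        simp only [Finset.prod_const, Finset.card_singleton, pow_one]
        rw [Nat.card_Icc]
        have : k - 1 + 1 - 1 = n + m - 1 := by omega
        rw [this, mul_comm]
      rw [hprod]
    have hsubL : L ⊆ {x | n ≤ J x} := by
      intro x hx
      obtain ⟨hxW, hxξ⟩ := hx
      simp only [Set.mem_iInter, Finset.mem_Icc, Finset.mem_singleton] at hxW hxξ
      have hWk : W k x = 1 := by
        have := hxW k ⟨hk1, le_refl k⟩
        simpa using this
      have hξk : ξ k x ≤ k := by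
        have := hxξ k rfl
        simpa using this
      have hW0s : ∀ i, 1 ≤ i → i < k → W i x = 0 := by
        intro i h1 h2
        have := hxW i ⟨h1, h2.le⟩
        rw [if_neg (by omega)] at this
        simpa using this
      have hRx : R x = k := by
        rw [hR]
        apply le_antisymm
        · exact Nat.sInf_le (show 1 ≤ k ∧ W k x = 1 ∧ ξ k x ≤ k from ⟨hk1, hWk, hξk⟩)
        · apply le_csInf ⟨k, show 1 ≤ k ∧ W k x = 1 ∧ ξ k x ≤ k from ⟨hk1, hWk, hξk⟩⟩
          rintro r ⟨hr1, hr2, _⟩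
          by_contra hlt
          push_neg at hlt
          rw [hW0s r hr1 hlt] at hr2
          exact absurd hr2 (by omega)
      simp only [Set.mem_setOf_eq, hJ]
      rw [hRx]
      have hfil : (Finset.Ico 1 k).filter (fun i => W i x = 0) = Finset.Ico 1 k := by
        apply Finset.filter_true_of_mem
        intro i hi
        rw [Finset.mem_Ico] at hi
        exact hW0s i hi.1 hi.2
      rw [hfil, Nat.card_Ico]
      omega
    have hle : ENNReal.ofReal (c * (1 - p) ^ n) ≤ P {x | n ≤ J x} := by
      refine le_trans ?_ (le_trans (le_of_eq hPL.symm) (measure_mono hsubL))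
      have heq : qbar ^ (n + m - 1) * pbar * ENNReal.ofReal (q k)
          = ENNReal.ofReal ((1 - p) ^ (n + m - 1) * p * q k) := by
        rw [ENNReal.ofReal_mul (by positivity), ENNReal.ofReal_mul (by positivity),
          ENNReal.ofReal_pow h1p0.le]
      rw [heq]
      apply ENNReal.ofReal_le_ofReal
      have hqk2 : 1/2 ≤ q k := hqhalf k (by omega)
      have hpow : (1 - p) ^ (n + m - 1) = (1 - p) ^ (m - 1) * (1 - p) ^ n := by
        rw [← pow_add]
        congr 1
        omega
      rw [hpow, hcdef]
      have hnn : (0:ℝ) ≤ p * ((1 - p) ^ (m - 1) * (1 - p) ^ n) := by positivity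
      nlinarith [pow_pos h1p0 (m-1), pow_pos h1p0 n]
    have := ENNReal.toReal_mono (measure_ne_top P _) hle
    rwa [ENNReal.toReal_ofReal (by positivity)] at this
  · -- UPPER BOUND
    set E : Finset ℕ → Set Ω := fun T =>
      if T ⊆ Finset.Ico 1 (n + T.card) then
        (⋂ i ∈ Finset.Icc 1 (n + T.card),
          (W i) ⁻¹' (if i ∈ T then ({1} : Set ℕ) else {0})) ∩
          ⋂ i ∈ T, (ξ i) ⁻¹' {j | i < j}
      else ∅ with hEdef
    have hcover : {x | n ≤ J x} ⊆ ⋃ T : Finset ℕ, E T := by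
      intro x hx
      simp only [Set.mem_setOf_eq] at hx
      rw [hJ] at hx
      simp only at hx
      -- R x facts
      have hRx : R x = sInf {r : ℕ | 1 ≤ r ∧ W r x = 1 ∧ ξ r x ≤ r} := by rw [hR]
      have hJle : n ≤ (Finset.Ico 1 (R x)).card := le_trans hx (Finset.card_filter_le _ _)
      rw [Nat.card_Ico] at hJle
      have hRge : n + 1 ≤ R x := by omega
      have hRmem : 1 ≤ R x ∧ W (R x) x = 1 ∧ ξ (R x) x ≤ R x := by
        have hne : {r : ℕ | 1 ≤ r ∧ W r x = 1 ∧ ξ r x ≤ r}.Nonempty := by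
          by_contra hemp
          rw [Set.not_nonempty_iff_eq_empty] at hemp
          rw [hemp, Nat.sInf_empty] at hRx
          omega
        have := Nat.sInf_mem hne
        rwa [← hRx] at this
      have hRmin : ∀ s, s < R x → ¬(1 ≤ s ∧ W s x = 1 ∧ ξ s x ≤ s) := by
        intro s hs
        rw [hRx] at hs
        exact Nat.notMem_of_lt_sInf hs
      -- the n-th zero
      set Z : ℕ → Finset ℕ := fun j => (Finset.Icc 1 j).filter (fun i => W i x = 0) with hZdef
      have hxZ : n ≤ (Z (R x - 1)).card := by
        have : Finset.Ico 1 (R x) = Finset.Icc 1 (R x - 1) := by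
          ext i; simp only [Finset.mem_Ico, Finset.mem_Icc]; omega
        rwa [this] at hx
      set k := sInf {j | n ≤ (Z j).card} with hkdef
      have hne2 : {j | n ≤ (Z j).card}.Nonempty := ⟨R x - 1, hxZ⟩
      have hkmem : n ≤ (Z k).card := Nat.sInf_mem hne2
      have hkle : k ≤ R x - 1 := Nat.sInf_le hxZ
      have hk0 : 1 ≤ k := by
        rcases Nat.eq_zero_or_pos k with h | h
        · exfalso
          rw [h] at hkmem
          have : Z 0 = ∅ := by simp [hZdef]
          rw [this] at hkmem
          simp at hkmem
          omega
        · exact h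
      have hkprev : (Z (k - 1)).card < n := by
        have hlt : k - 1 < k := by omega
        have := Nat.notMem_of_lt_sInf (hkdef ▸ hlt)
        simpa using this
      have hicc : Finset.Icc 1 k = insert k (Finset.Icc 1 (k - 1)) := by
        ext i; simp only [Finset.mem_Icc, Finset.mem_insert]; omega
      have hWk0 : W k x = 0 := by
        by_contra hWk
        have hsub2 : Z k ⊆ Z (k - 1) := by
          intro i hi
          simp only [hZdef, Finset.mem_filter, Finset.mem_Icc] at hi ⊢
          refine ⟨⟨hi.1.1, ?_⟩, hi.2⟩
          rcases Nat.lt_or_ge i k with h | h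
          · omega
          · exfalso; have : i = k := by omega
            rw [this] at hi; exact hWk hi.2
        have := Finset.card_le_card hsub2
        omega
      have hZk : Z k = insert k (Z (k - 1)) := by
        rw [hZdef]
        simp only
        rw [hicc, Finset.filter_insert, if_pos hWk0]
      have hknotmem : k ∉ Z (k - 1) := by
        intro hmem
        simp only [hZdef, Finset.mem_filter, Finset.mem_Icc] at hmem
        omega
      have hZkcard : (Z k).card = (Z (k - 1)).card + 1 := by
        rw [hZk, Finset.card_insert_of_notMem hknotmem]
      have hZcard : (Z k).card = n := by omega
      set T := (Finset.Ico 1 k).filter (fun i => W i x = 1) with hTdef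
      have hZprev : Z (k - 1) = (Finset.Ico 1 k).filter (fun i => W i x = 0) := by
        simp only [hZdef]
        ext i
        simp only [Finset.mem_filter, Finset.mem_Icc, Finset.mem_Ico]
        constructor
        · rintro ⟨⟨h1, h2⟩, h3⟩; exact ⟨⟨h1, by omega⟩, h3⟩
        · rintro ⟨⟨h1, h2⟩, h3⟩; exact ⟨⟨h1, by omega⟩, h3⟩
      have hpart : T.card + (Z (k-1)).card = k - 1 := by
        rw [hZprev, hTdef]
        have hneg : (Finset.Ico 1 k).filter (fun i => W i x = 0)
            = (Finset.Ico 1 k).filter (fun i => ¬ (W i x = 1)) := by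
          apply Finset.filter_congr
          intro i _
          rcases hW01 i x with h | h <;> simp [h]
        rw [hneg, Finset.card_filter_add_card_filter_not, Nat.card_Ico]
      have hkn : n ≤ k := by
        have h := Finset.card_le_card (Finset.filter_subset (fun i => W i x = 0) (Finset.Icc 1 k))
        have hZZ : Z k = (Finset.Icc 1 k).filter (fun i => W i x = 0) := by simp only [hZdef]
        rw [← hZZ, Nat.card_Icc] at h
        omega
      have hTcard : n + T.card = k := by omega
      apply Set.mem_iUnion.mpr
      refine ⟨T, ?_⟩
      rw [hEdef]
      simp only
      rw [hTcard, if_pos (Finset.filter_subset _ _)]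
      constructor
      · apply Set.mem_iInter₂.mpr
        intro i hi
        rw [Finset.mem_Icc] at hi
        by_cases hiT : i ∈ T
        · rw [if_pos hiT]
          have := (Finset.mem_filter.mp hiT).2
          simpa using this
        · rw [if_neg hiT]
          simp only [Set.mem_preimage, Set.mem_singleton_iff]
          rcases Nat.lt_or_ge i k with h | h
          · have : i ∉ (Finset.Ico 1 k).filter (fun i => W i x = 1) := hiT
            rw [Finset.mem_filter] at this
            push_neg at this
            have h2 := this (Finset.mem_Ico.mpr ⟨hi.1, h⟩)
            rcases hW01 i x with h3 | h3
            · exact h3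
            · exact absurd h3 h2
          · have : i = k := by omega
            rw [this]; exact hWk0
      · apply Set.mem_iInter₂.mpr
        intro i hiT
        have hiIco := Finset.mem_Ico.mp (Finset.mem_filter.mp hiT).1
        have hiW := (Finset.mem_filter.mp hiT).2
        simp only [Set.mem_preimage, Set.mem_setOf_eq]
        have hiR : i < R x := by omega
        have := hRmin i hiR
        push_neg at this
        have := this hiIco.1 hiW
        omega
    have hPE : ∀ T : Finset ℕ, P (E T) ≤ qbar ^ n * ∏ i ∈ T, (pbar * r i) := by
      intro T
      rw [hEdef]
      simp only
      by_cases hT : T ⊆ Finset.Ico 1 (n + T.card)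
      · rw [if_pos hT, aux_indep_prod P ξ W hindep]
        have hprodξ : (∏ i ∈ T, P ((ξ i) ⁻¹' {j | i < j})) = ∏ i ∈ T, r i :=
          Finset.prod_congr rfl (fun i _ => hridgen i i)
        have hprodW : (∏ i ∈ Finset.Icc 1 (n + T.card),
            P ((W i) ⁻¹' (if i ∈ T then ({1} : Set ℕ) else {0})))
            = pbar ^ T.card * qbar ^ n := by
          have hcongr : ∀ i ∈ Finset.Icc 1 (n + T.card),
              P ((W i) ⁻¹' (if i ∈ T then ({1} : Set ℕ) else {0}))
              = if i ∈ T then pbar else qbar := by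
            intro i _
            by_cases h : i ∈ T <;> simp [h, hW1, hW0]
          rw [Finset.prod_congr rfl hcongr, Finset.prod_ite]
          simp only [Finset.prod_const]
          have hf1 : (Finset.Icc 1 (n + T.card)).filter (fun i => i ∈ T) = T := by
            ext i
            simp only [Finset.mem_filter, Finset.mem_Icc]
            constructor
            · exact fun h => h.2
            · intro h
              have := Finset.mem_Ico.mp (hT h)
              exact ⟨⟨this.1, by omega⟩, h⟩
          have hcard2 : ((Finset.Icc 1 (n + T.card)).filter (fun i => ¬ i ∈ T)).card = n := by
            have := Finset.card_filter_add_card_filter_not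
              (s := Finset.Icc 1 (n + T.card)) (p := fun i => i ∈ T)
            rw [hf1, Nat.card_Icc] at this
            omega
          rw [hf1, hcard2]
        rw [hprodW, hprodξ, Finset.prod_mul_distrib, Finset.prod_const]
        apply le_of_eq
        ring
      · rw [if_neg hT]
        simp
    have hsum : P {x | n ≤ J x} ≤ ∑' T : Finset ℕ, P (E T) :=
      le_trans (measure_mono hcover) (measure_iUnion_le _)
    have habound : ∀ i, pbar * r i ≤ ENNReal.ofReal (p * t i) := by
      intro i
      rw [hrt i, hpbar, ← ENNReal.ofReal_mul hp0.le]
    have hsum2 : (∑' T : Finset ℕ, P (E T))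
        ≤ qbar ^ n * ENNReal.ofReal (Real.exp (p * S)) := by
      calc ∑' T : Finset ℕ, P (E T)
          ≤ ∑' T : Finset ℕ, qbar ^ n * ∏ i ∈ T, (pbar * r i) :=
            ENNReal.tsum_le_tsum hPE
        _ = qbar ^ n * ∑' T : Finset ℕ, ∏ i ∈ T, (pbar * r i) := ENNReal.tsum_mul_left
        _ ≤ qbar ^ n * ENNReal.ofReal (Real.exp (∑' i, p * t i)) := by
            apply mul_le_mul_right
            exact aux_tsum_prod_le _ _ (fun i => by positivity) habound (hsumt.mul_left p)
        _ = qbar ^ n * ENNReal.ofReal (Real.exp (p * S)) := by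
            rw [tsum_mul_left]
    have hfinal : P {x | n ≤ J x} ≤ ENNReal.ofReal (C * (1 - p) ^ n) := by
      refine le_trans hsum (le_trans hsum2 (le_of_eq ?_))
      rw [hqbar, ← ENNReal.ofReal_pow h1p0.le, ← ENNReal.ofReal_mul (by positivity), hCdef]
      ring_nf
    exact ENNReal.toReal_le_of_le_ofReal (by positivity) hfinal
end

section
/- Let j_0, z ∈ (0,1), let (X_i)_{i≥1} be i.i.d. with P(X_1 = k) = (1 − j_0)·j_0^k for every integer k ≥ 0, and let (Y_i)_{i≥1} be i.i.d. nonnegative-integer-valued random variables, independent of (X_i), satisfying c_1·z^{y} ≤ P(Y_1 ≥ y) ≤ c_2·z^{y} for all integers y ≥ 1, for some constants 0 < c_1 ≤ c_2 < ∞. Set S_t := ∑_{i=1}^{t} X_i and let T := sup{ t ≥ 1 : Y_t ≥ S_t } (with sup ∅ := 0). Then T < ∞ almost surely and there exist constants 0 < C_1 ≤ C_2 < ∞ such that for every integer t ≥ 1: C_1·γ^{t} ≤ P(T ≥ t) ≤ C_2·γ^{t}, where γ := (1 − j_0)/(1 − j_0·z) ∈ (0,1). -/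
open MeasureTheory ProbabilityTheory Filter ENNReal

/-- Let `(X i)` be i.i.d. Geometric(`1 − j₀`) (`P(X₁ = k) = (1−j₀)j₀ᵏ`) and
`(Y i)` i.i.d. ℕ-valued, independent of `(X i)`, with `c₁·z^y ≤ P(Y₁ ≥ y) ≤ c₂·z^y` for all
`y ≥ 1`. With `S t = ∑_{i=1}^t X i` and `T = sup{t ≥ 1 : Y t ≥ S t}` (`sup ∅ = 0`), the time
`T` is a.s. finite and `C₁·γ^t ≤ P(T ≥ t) ≤ C₂·γ^t` for all `t ≥ 1`, for some
`0 < C₁ ≤ C₂ < ∞`, where `γ = (1 − j₀)/(1 − j₀·z) ∈ (0,1)`. -/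
theorem stmt15
    {Ω : Type*} [MeasurableSpace Ω] (P : MeasureTheory.Measure Ω)
    [MeasureTheory.IsProbabilityMeasure P]
    (j0 z : ℝ) (hj0 : j0 ∈ Set.Ioo (0 : ℝ) 1) (hz : z ∈ Set.Ioo (0 : ℝ) 1)
    (X Y : ℕ → Ω → ℕ)
    (hXmeas : ∀ i, Measurable (X i)) (hYmeas : ∀ i, Measurable (Y i))
    (hindep : ProbabilityTheory.iIndepFun (Sum.elim X Y) P)
    (hXid : ∀ i j, 1 ≤ i → 1 ≤ j → ProbabilityTheory.IdentDistrib (X i) (X j) P P)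
    (hYid : ∀ i j, 1 ≤ i → 1 ≤ j → ProbabilityTheory.IdentDistrib (Y i) (Y j) P P)
    (hXgeom : ∀ k : ℕ, (P {x | X 1 x = k}).toReal = (1 - j0) * j0 ^ k)
    (c₁ c₂ : ℝ) (hc₁ : 0 < c₁) (hc₁₂ : c₁ ≤ c₂)
    (hYtail : ∀ y : ℕ, 1 ≤ y →
      c₁ * z ^ y ≤ (P {x | y ≤ Y 1 x}).toReal ∧ (P {x | y ≤ Y 1 x}).toReal ≤ c₂ * z ^ y)
    (S : ℕ → Ω → ℕ) (hS : S = fun t x => ∑ i ∈ Finset.Icc 1 t, X i x)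
    (T : Ω → ℕ) (hT : T = fun x => sSup {t : ℕ | 1 ≤ t ∧ S t x ≤ Y t x})
    (γ : ℝ) (hγ : γ = (1 - j0) / (1 - j0 * z)) :
    γ ∈ Set.Ioo (0 : ℝ) 1 ∧
    (∀ᵐ x ∂P, {t : ℕ | 1 ≤ t ∧ S t x ≤ Y t x}.Finite) ∧
    (∃ C₁ C₂ : ℝ, 0 < C₁ ∧ C₁ ≤ C₂ ∧ ∀ t : ℕ, 1 ≤ t →
      C₁ * γ ^ t ≤ (P {x | t ≤ T x}).toReal ∧ (P {x | t ≤ T x}).toReal ≤ C₂ * γ ^ t) := by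
  classical
  obtain ⟨hj0p, hj0l⟩ := hj0
  obtain ⟨hzp, hzl⟩ := hz
  have hS' : ∀ t x, S t x = ∑ i ∈ Finset.Icc 1 t, X i x := fun t x => by rw [hS]
  have hT' : ∀ x, T x = sSup {t : ℕ | 1 ≤ t ∧ S t x ≤ Y t x} := fun x => by rw [hT]
  have hjz : j0 * z < 1 := by nlinarith
  have hjzpos : 0 < 1 - j0 * z := by linarith
  have hγpos : 0 < γ := by rw [hγ]; exact div_pos (by linarith) hjzpos
  have hγlt : γ < 1 := by rw [hγ]; rw [div_lt_one hjzpos]; nlinarith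
  -- basic measurability
  have hfmeas : ∀ i : ℕ ⊕ ℕ, Measurable (Sum.elim X Y i) := by
    rintro (i | i)
    · exact hXmeas i
    · exact hYmeas i
  have hSmeas : ∀ s, Measurable (S s) := by
    intro s
    rw [hS]
    exact Finset.measurable_sum _ fun i _ => hXmeas i
  -- generic lintegral over ℕ-valued r.v.
  have hlint : ∀ (U : Ω → ℕ), Measurable U → ∀ g : ℕ → ℝ≥0∞,
      ∫⁻ x, g (U x) ∂P = ∑' k, g k * P {x | U x = k} := by
    intro U hU g
    rw [← lintegral_map (measurable_of_countable g) hU, lintegral_countable']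
    refine tsum_congr fun k => ?_
    rw [Measure.map_apply hU (measurableSet_singleton k)]
    rfl
  -- distribution transfers
  have hXd : ∀ i, 1 ≤ i → ∀ k : ℕ,
      P {x | X i x = k} = ENNReal.ofReal ((1 - j0) * j0 ^ k) := by
    intro i hi k
    have h1 : P {x | X i x = k} = P {x | X 1 x = k} :=
      (hXid i 1 hi le_rfl).measure_mem_eq (measurableSet_singleton k)
    rw [h1, ← hXgeom k, ENNReal.ofReal_toReal (measure_ne_top P _)]
  have hYd : ∀ s, 1 ≤ s → ∀ k : ℕ, P {x | k ≤ Y s x} = P {x | k ≤ Y 1 x} := by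
    intro s hs k
    exact (hYid s 1 hs le_rfl).measure_mem_eq (measurableSet_Ici (a := k))
  set zE : ℝ≥0∞ := ENNReal.ofReal z with hzE
  set γ' : ℝ≥0∞ := ENNReal.ofReal γ with hγ'
  have hpow : ∀ k : ℕ, zE ^ k = ENNReal.ofReal (z ^ k) := fun k =>
    (ENNReal.ofReal_pow hzp.le k).symm
  have hγ'lt : γ' < 1 := ENNReal.ofReal_lt_one.2 hγlt
  -- pgf of a single geometric
  have hgeomsum : ∑' k : ℕ, zE ^ k * ENNReal.ofReal ((1 - j0) * j0 ^ k) = γ' := by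
    have hjznn : (0:ℝ) ≤ j0 * z := by positivity
    have hsum : Summable fun k : ℕ => (1 - j0) * (j0 * z) ^ k :=
      (summable_geometric_of_lt_one hjznn hjz).mul_left _
    calc ∑' k : ℕ, zE ^ k * ENNReal.ofReal ((1 - j0) * j0 ^ k)
        = ∑' k : ℕ, ENNReal.ofReal ((1 - j0) * (j0 * z) ^ k) := by
          refine tsum_congr fun k => ?_
          rw [hpow, ← ENNReal.ofReal_mul (by positivity)]
          congr 1
          ring
      _ = ENNReal.ofReal (∑' k : ℕ, (1 - j0) * (j0 * z) ^ k) :=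
          (ENNReal.ofReal_tsum_of_nonneg (fun k => by nlinarith [pow_nonneg hjznn k]) hsum).symm
      _ = γ' := by
          rw [tsum_mul_left, tsum_geometric_of_lt_one hjznn hjz, hγ', hγ, div_eq_mul_inv]
  have hpgfX : ∀ i, 1 ≤ i → ∫⁻ x, zE ^ X i x ∂P = γ' := by
    intro i hi
    rw [hlint (X i) (hXmeas i) fun k => zE ^ k]
    simp only [hXd i hi]
    exact hgeomsum
  -- independence facts
  have hSelim : ∀ (s : ℕ) (i : ℕ ⊕ ℕ), (¬ ∃ j ∈ Finset.Icc 1 s, Sum.inl j = i) →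
      IndepFun (S s) (Sum.elim X Y i) P := by
    intro s i hi
    have h := hindep.indepFun_finset_sum_of_notMem hfmeas
      (s := (Finset.Icc 1 s).map ⟨Sum.inl, Sum.inl_injective⟩) (i := i)
      (by simpa using hi)
    have hsum : (∑ j ∈ (Finset.Icc 1 s).map ⟨Sum.inl, Sum.inl_injective⟩, Sum.elim X Y j)
        = S s := by
      funext x
      rw [Finset.sum_map]
      simp only [Finset.sum_apply, Function.Embedding.coeFn_mk, Sum.elim_inl]
      exact (hS' s x).symm
    rwa [hsum] at h
  have hSX : ∀ s : ℕ, IndepFun (S s) (X (s + 1)) P := by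
    intro s
    exact hSelim s (Sum.inl (s + 1)) (by simp)
  have hSY : ∀ s : ℕ, IndepFun (S s) (Y s) P := by
    intro s
    exact hSelim s (Sum.inr s) (by simp)
  -- pgf of S s
  have hq : ∀ s : ℕ, ∫⁻ x, zE ^ S s x ∂P = γ' ^ s := by
    intro s
    induction s with
    | zero =>
        have h0 : ∀ x, S 0 x = 0 := by
          intro x
          rw [hS' 0 x]
          simp
        simp only [h0, pow_zero, lintegral_one, measure_univ]
    | succ n ih =>
        have hins : ∀ x : Ω, S (n + 1) x = S n x + X (n + 1) x := by
          intro x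
          rw [hS' (n + 1) x, hS' n x]
          exact Finset.sum_Icc_succ_top (Nat.le_add_left 1 n) _
        have hme1 : Measurable fun x => zE ^ S n x :=
          (measurable_of_countable fun k : ℕ => zE ^ k).comp (hSmeas n)
        have hme2 : Measurable fun x => zE ^ X (n + 1) x :=
          (measurable_of_countable fun k : ℕ => zE ^ k).comp (hXmeas (n + 1))
        have hind : IndepFun (fun x => zE ^ S n x) (fun x => zE ^ X (n + 1) x) P :=
          (hSX n).comp (measurable_of_countable fun k : ℕ => zE ^ k)
            (measurable_of_countable fun k : ℕ => zE ^ k)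
        calc ∫⁻ x, zE ^ S (n + 1) x ∂P
            = ∫⁻ x, ((fun x => zE ^ S n x) * fun x => zE ^ X (n + 1) x) x ∂P := by
              refine lintegral_congr fun x => ?_
              rw [hins x, pow_add]
              rfl
          _ = (∫⁻ x, zE ^ S n x ∂P) * ∫⁻ x, zE ^ X (n + 1) x ∂P :=
              lintegral_mul_eq_lintegral_mul_lintegral_of_indepFun hme1 hme2 hind
          _ = γ' ^ n * γ' := by rw [ih, hpgfX (n + 1) (by omega)]
          _ = γ' ^ (n + 1) := by rw [pow_succ]
  have hqsum : ∀ s : ℕ, ∑' k : ℕ, zE ^ k * P {x | S s x = k} = γ' ^ s := by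
    intro s
    rw [← hlint (S s) (hSmeas s) fun k => zE ^ k]
    exact hq s
  -- the events
  set A : ℕ → Set Ω := fun s => {x | S s x ≤ Y s x} with hA
  have hAmeas : ∀ s, MeasurableSet (A s) :=
    fun s => measurableSet_le (hSmeas s) (hYmeas s)
  have hAeq : ∀ s, 1 ≤ s →
      P (A s) = ∑' k : ℕ, P {x | S s x = k} * P {x | k ≤ Y 1 x} := by
    intro s hs
    have hset : A s = ⋃ k : ℕ, ({x | S s x = k} ∩ {x | k ≤ Y s x}) := by
      ext x
      simp only [hA, Set.mem_setOf_eq, Set.mem_iUnion, Set.mem_inter_iff]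
      constructor
      · intro h
        exact ⟨S s x, rfl, h⟩
      · rintro ⟨k, hk, hle⟩
        exact hk ▸ hle
    rw [hset, measure_iUnion]
    · refine tsum_congr fun k => ?_
      have h := (hSY s).measure_inter_preimage_eq_mul {k} (Set.Ici k)
        (measurableSet_singleton k) measurableSet_Ici
      have h2 : ({x | S s x = k} ∩ {x | k ≤ Y s x})
          = S s ⁻¹' {k} ∩ Y s ⁻¹' Set.Ici k := rfl
      rw [h2, h]
      rw [show (S s ⁻¹' {k} : Set Ω) = {x | S s x = k} from rfl,
        show (Y s ⁻¹' Set.Ici k : Set Ω) = {x | k ≤ Y s x} from rfl, hYd s hs k]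
    · intro k l hkl
      refine Set.disjoint_left.2 fun x hx hx' => hkl ?_
      exact hx.1.symm.trans hx'.1
    · intro k
      exact ((hSmeas s) (measurableSet_singleton k)).inter ((hYmeas s) measurableSet_Ici)
  -- tail bounds
  have hBub : ∀ k : ℕ, P {x | k ≤ Y 1 x} ≤ ENNReal.ofReal (1 + c₂) * zE ^ k := by
    intro k
    cases k with
    | zero =>
        have huniv : {x | (0:ℕ) ≤ Y 1 x} = Set.univ := by
          ext x; simp
        rw [huniv, measure_univ, pow_zero, mul_one]
        exact ENNReal.one_le_ofReal.2 (by linarith)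
    | succ m =>
        have h := (hYtail (m + 1) (by omega)).2
        rw [← ENNReal.ofReal_toReal (measure_ne_top P {x | m + 1 ≤ Y 1 x})]
        refine le_trans (ENNReal.ofReal_le_ofReal h) ?_
        rw [hpow, ← ENNReal.ofReal_mul (by linarith)]
        exact ENNReal.ofReal_le_ofReal (by nlinarith [pow_nonneg hzp.le (m + 1)])
  have hBlb : ∀ k : ℕ, ENNReal.ofReal (min c₁ 1) * zE ^ k ≤ P {x | k ≤ Y 1 x} := by
    intro k
    cases k with
    | zero =>
        have huniv : {x | (0:ℕ) ≤ Y 1 x} = Set.univ := by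
          ext x; simp
        rw [huniv, measure_univ, pow_zero, mul_one]
        exact ENNReal.ofReal_le_one.2 (min_le_right _ _)
    | succ m =>
        have h := (hYtail (m + 1) (by omega)).1
        rw [hpow, ← ENNReal.ofReal_mul (le_min hc₁.le zero_le_one),
          ← ENNReal.ofReal_toReal (measure_ne_top P {x | m + 1 ≤ Y 1 x})]
        refine ENNReal.ofReal_le_ofReal ?_
        have hmin : min c₁ 1 * z ^ (m + 1) ≤ c₁ * z ^ (m + 1) := by
          have := min_le_left c₁ 1
          nlinarith [pow_nonneg hzp.le (m + 1)]
        linarith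
  have hAub : ∀ s, P (A s) ≤ ENNReal.ofReal (1 + c₂) * γ' ^ s := by
    intro s
    rcases Nat.eq_zero_or_pos s with h | hs
    · subst h
      rw [pow_zero, mul_one]
      exact le_trans prob_le_one (ENNReal.one_le_ofReal.2 (by linarith))
    · rw [hAeq s hs]
      calc ∑' k : ℕ, P {x | S s x = k} * P {x | k ≤ Y 1 x}
          ≤ ∑' k : ℕ, P {x | S s x = k} * (ENNReal.ofReal (1 + c₂) * zE ^ k) :=
            ENNReal.tsum_le_tsum fun k => mul_le_mul_right (hBub k) _
        _ = ENNReal.ofReal (1 + c₂) * ∑' k : ℕ, zE ^ k * P {x | S s x = k} := by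
            rw [← ENNReal.tsum_mul_left]
            exact tsum_congr fun k => by ring
        _ = ENNReal.ofReal (1 + c₂) * γ' ^ s := by rw [hqsum s]
  have hAlb : ∀ s, 1 ≤ s → ENNReal.ofReal (min c₁ 1) * γ' ^ s ≤ P (A s) := by
    intro s hs
    rw [hAeq s hs]
    calc ENNReal.ofReal (min c₁ 1) * γ' ^ s
        = ENNReal.ofReal (min c₁ 1) * ∑' k : ℕ, zE ^ k * P {x | S s x = k} := by
          rw [hqsum s]
      _ = ∑' k : ℕ, P {x | S s x = k} * (ENNReal.ofReal (min c₁ 1) * zE ^ k) := by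
          rw [← ENNReal.tsum_mul_left]
          exact tsum_congr fun k => by ring
      _ ≤ ∑' k : ℕ, P {x | S s x = k} * P {x | k ≤ Y 1 x} :=
          ENNReal.tsum_le_tsum fun k => mul_le_mul_right (hBlb k) _
  -- Borel–Cantelli
  have hsub_ne : (1 : ℝ≥0∞) - γ' ≠ 0 := by
    intro h
    exact absurd (tsub_eq_zero_iff_le.mp h) (not_le.mpr hγ'lt)
  have hsum_ne : (∑' s, P (A s)) ≠ ∞ := by
    have hle : (∑' s, P (A s)) ≤ ENNReal.ofReal (1 + c₂) * (1 - γ')⁻¹ := by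
      calc (∑' s, P (A s)) ≤ ∑' s, ENNReal.ofReal (1 + c₂) * γ' ^ s :=
            ENNReal.tsum_le_tsum hAub
        _ = ENNReal.ofReal (1 + c₂) * ∑' s, γ' ^ s := ENNReal.tsum_mul_left
        _ = ENNReal.ofReal (1 + c₂) * (1 - γ')⁻¹ := by rw [ENNReal.tsum_geometric]
    exact ne_top_of_le_ne_top
      (ENNReal.mul_ne_top ENNReal.ofReal_ne_top (ENNReal.inv_ne_top.2 hsub_ne)) hle
  have hL : P (limsup A atTop) = 0 := measure_limsup_atTop_eq_zero hsum_ne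
  have hfin : ∀ x, x ∉ limsup A atTop → {t : ℕ | 1 ≤ t ∧ S t x ≤ Y t x}.Finite := by
    intro x hx
    rw [mem_limsup_iff_frequently_mem, Filter.not_frequently] at hx
    obtain ⟨N, hN⟩ := Filter.eventually_atTop.1 hx
    refine Set.Finite.subset (Set.finite_Iio N) fun t ht => ?_
    simp only [Set.mem_Iio]
    by_contra h
    push_neg at h
    exact hN t h ht.2
  have hae : ∀ᵐ x ∂P, {t : ℕ | 1 ≤ t ∧ S t x ≤ Y t x}.Finite := by
    filter_upwards [measure_eq_zero_iff_ae_notMem.mp hL] with x hx using hfin x hx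
  refine ⟨⟨hγpos, hγlt⟩, hae, min c₁ 1, (1 + c₂) * (1 - γ)⁻¹, lt_min hc₁ one_pos, ?_, ?_⟩
  · have h1γ : 0 < 1 - γ := by linarith
    have hinv : (1 : ℝ) ≤ (1 - γ)⁻¹ := by
      rw [one_le_inv_iff₀]
      exact ⟨h1γ, by linarith⟩
    have := min_le_right c₁ 1
    nlinarith
  intro t ht
  constructor
  · -- lower bound
    have hsub2 : A t \ limsup A atTop ⊆ {x | t ≤ T x} := by
      rintro x ⟨hxA, hxL⟩
      have hfinx := hfin x hxL
      have hmem : t ∈ {u : ℕ | 1 ≤ u ∧ S u x ≤ Y u x} := ⟨ht, hxA⟩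
      rw [Set.mem_setOf_eq, hT' x]
      exact le_csSup hfinx.bddAbove hmem
    have hlb : ENNReal.ofReal (min c₁ 1) * γ' ^ t ≤ P {x | t ≤ T x} := by
      refine le_trans (hAlb t ht) ?_
      calc P (A t) = P (A t \ limsup A atTop) := (measure_diff_null hL).symm
        _ ≤ P {x | t ≤ T x} := measure_mono hsub2
    have h2 := ENNReal.toReal_mono (measure_ne_top P _) hlb
    rw [ENNReal.toReal_mul, ENNReal.toReal_pow, ENNReal.toReal_ofReal
      (le_min hc₁.le zero_le_one), hγ', ENNReal.toReal_ofReal hγpos.le] at h2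
    exact h2
  · -- upper bound
    have hsub : {x | t ≤ T x} ⊆ ⋃ k : ℕ, A (t + k) := by
      intro x hx
      rw [Set.mem_setOf_eq, hT' x] at hx
      set M : Set ℕ := {u : ℕ | 1 ≤ u ∧ S u x ≤ Y u x} with hM
      by_cases hbdd : BddAbove M
      · have hne : M.Nonempty := by
          rcases Set.eq_empty_or_nonempty M with h | h
          · rw [h, csSup_empty] at hx
            exact absurd hx (by simp; omega)
          · exact h
        have hmem := Nat.sSup_mem hne hbdd
        refine Set.mem_iUnion.2 ⟨sSup M - t, ?_⟩
        have heq : t + (sSup M - t) = sSup M := by omega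
        rw [hA]
        simp only [Set.mem_setOf_eq]
        rw [heq]
        exact hmem.2
      · obtain ⟨u, hu, htu⟩ := not_bddAbove_iff.1 hbdd t
        refine Set.mem_iUnion.2 ⟨u - t, ?_⟩
        have heq : t + (u - t) = u := by omega
        rw [hA]
        simp only [Set.mem_setOf_eq]
        rw [heq]
        exact hu.2
    have hub : P {x | t ≤ T x} ≤ ENNReal.ofReal (1 + c₂) * γ' ^ t * (1 - γ')⁻¹ := by
      calc P {x | t ≤ T x} ≤ P (⋃ k : ℕ, A (t + k)) := measure_mono hsub
        _ ≤ ∑' k : ℕ, P (A (t + k)) := measure_iUnion_le _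
        _ ≤ ∑' k : ℕ, ENNReal.ofReal (1 + c₂) * γ' ^ (t + k) :=
            ENNReal.tsum_le_tsum fun k => hAub (t + k)
        _ = ENNReal.ofReal (1 + c₂) * γ' ^ t * ∑' k : ℕ, γ' ^ k := by
            rw [← ENNReal.tsum_mul_left]
            exact tsum_congr fun k => by rw [pow_add, mul_assoc]
        _ = ENNReal.ofReal (1 + c₂) * γ' ^ t * (1 - γ')⁻¹ := by rw [ENNReal.tsum_geometric]
    have hRHSne : ENNReal.ofReal (1 + c₂) * γ' ^ t * (1 - γ')⁻¹ ≠ ∞ :=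
      ENNReal.mul_ne_top
        (ENNReal.mul_ne_top ENNReal.ofReal_ne_top
          (ENNReal.pow_ne_top ENNReal.ofReal_ne_top))
        (ENNReal.inv_ne_top.2 hsub_ne)
    have h2 := ENNReal.toReal_mono hRHSne hub
    have hsubeq : (1 : ℝ≥0∞) - γ' = ENNReal.ofReal (1 - γ) := by
      rw [ENNReal.ofReal_sub 1 hγpos.le, ENNReal.ofReal_one]
    rw [ENNReal.toReal_mul, ENNReal.toReal_mul, ENNReal.toReal_pow, ENNReal.toReal_inv,
      hsubeq, ENNReal.toReal_ofReal (by linarith : (0:ℝ) ≤ 1 - γ),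
      ENNReal.toReal_ofReal (by linarith : (0:ℝ) ≤ 1 + c₂), hγ',
      ENNReal.toReal_ofReal hγpos.le] at h2
    calc (P {x | t ≤ T x}).toReal ≤ (1 + c₂) * γ ^ t * (1 - γ)⁻¹ := h2
      _ = (1 + c₂) * (1 - γ)⁻¹ * γ ^ t := by ring
end
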